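/- arXiv:2503.16590 — 10 statements merged into one kernel-verified Lean document; each statement's English description precedes it below -/
import Mathlib

section
/- For any real numbers a, b, μ, t with a < b, the iterated complex integral (1/2) ∫_a^b ( ∫_{−1}^{1} t·exp(i·(μ−y)·t·s) ds ) dy is a real number and equals the oriented integral ∫_{(μ−b)t}^{(μ−a)t} (sin v)/v dv. -/
open Real

lemma inner_eq (μ t y : ℝ) (ht : t ≠ 0) (hy : y ≠ μ) :
    (∫ s in (-1:ℝ)..(1:ℝ),
        (t : ℂ) * Complex.exp (Complex.I * ((μ : ℂ) - (y : ℂ)) * (t : ℂ) * (s : ℂ))) =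
      ((2 * t * (Real.sin ((μ - y) * t) / ((μ - y) * t))) : ℝ) := by
  set r : ℝ := (μ - y) * t with hr
  have hrne : r ≠ 0 := mul_ne_zero (sub_ne_zero.mpr (Ne.symm hy)) ht
  have h1 : ∀ s : ℝ, Complex.I * ((μ : ℂ) - (y : ℂ)) * (t : ℂ) * (s : ℂ)
      = (Complex.I * (r : ℂ)) * (s : ℂ) := by
    intro s; push_cast [hr]; ring
  have hc : (Complex.I * (r : ℂ)) ≠ 0 :=
    mul_ne_zero Complex.I_ne_zero (by exact_mod_cast hrne)
  rw [intervalIntegral.integral_const_mul]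
  simp_rw [h1]
  rw [integral_exp_mul_complex hc]
  have e1 : Complex.I * (r:ℂ) * (1:ℝ) = (r:ℂ) * Complex.I := by push_cast; ring
  have e2 : Complex.I * (r:ℂ) * ((-1:ℝ):ℂ) = (-(r:ℂ)) * Complex.I := by push_cast; ring
  rw [e1, e2, Complex.exp_mul_I, Complex.exp_mul_I, Complex.cos_neg, Complex.sin_neg]
  have hrC : (r:ℂ) ≠ 0 := by exact_mod_cast hrne
  push_cast
  field_simp
  ring

lemma real_subst (a b μ t : ℝ) (ht : t ≠ 0) :
    (∫ y in a..b, 2 * t * (Real.sin ((μ - y) * t) / ((μ - y) * t)))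
      = 2 * ∫ v in ((μ - b) * t)..((μ - a) * t), Real.sin v / v := by
  have h1 := intervalIntegral.integral_comp_sub_left (a := a) (b := b)
    (fun x => 2 * t * (Real.sin (x * t) / (x * t))) μ
  have h2 := intervalIntegral.integral_comp_mul_right (a := μ - b) (b := μ - a)
    (fun v => 2 * t * (Real.sin v / v)) ht
  rw [h1, h2, intervalIntegral.integral_const_mul, smul_eq_mul]
  field_simp

/-- For any reals `a < b`, `μ`, `t`, the iterated complex integral
`(1/2) ∫_a^b ( ∫_{−1}^{1} t·exp(i(μ−y)ts) ds ) dy` is a real number and equals the oriented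
integral `∫_{(μ−b)t}^{(μ−a)t} (sin v)/v dv`. -/
theorem iterated_complex_integral_eq_dirichlet (a b μ t : ℝ) (hab : a < b) :
    (1 / 2 : ℂ) * ∫ y in a..b, ∫ s in (-1:ℝ)..(1:ℝ),
        (t : ℂ) * Complex.exp (Complex.I * ((μ : ℂ) - (y : ℂ)) * (t : ℂ) * (s : ℂ)) =
      ((∫ v in ((μ - b) * t)..((μ - a) * t), Real.sin v / v : ℝ) : ℂ) := by
  rcases eq_or_ne t 0 with ht | ht
  · simp [ht]
  · have hμ : ∀ᵐ y : ℝ, y ≠ μ := by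
      refine MeasureTheory.ae_iff.mpr ?_
      simpa using Real.volume_singleton (x := μ)
    have houter : (∫ y in a..b, ∫ s in (-1:ℝ)..(1:ℝ),
          (t : ℂ) * Complex.exp (Complex.I * ((μ : ℂ) - (y : ℂ)) * (t : ℂ) * (s : ℂ)))
        = ∫ y in a..b, (((2 * t * (Real.sin ((μ - y) * t) / ((μ - y) * t))) : ℝ) : ℂ) := by
      apply intervalIntegral.integral_congr_ae
      filter_upwards [hμ] with y hy _
      exact inner_eq μ t y ht hy
    rw [houter, intervalIntegral.integral_ofReal, real_subst a b μ t ht]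
    push_cast
    ring
end

section
/- Let −∞ < a₁ < b₁ < ∞ and let f : [a₁, b₁] → ℝ be a function of bounded variation, with total variation ‖f‖_TV on [a₁, b₁] and essential supremum ‖f‖_∞. Then for every real t ≠ 0, |∫_{a₁}^{b₁} f(s)·cos(ts) ds| ≤ 4(‖f‖_TV + ‖f‖_∞)/|t| and |∫_{a₁}^{b₁} f(s)·sin(ts) ds| ≤ 4(‖f‖_TV + ‖f‖_∞)/|t|. -/
open MeasureTheory Set

private lemma rlbv_key {a b : ℝ} (hab : a < b) {f : ℝ → ℝ}
    (hBV : BoundedVariationOn f (Icc a b))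
    {M : ℝ} (hM0 : 0 ≤ M)
    (hM : ∀ᵐ s ∂(volume.restrict (Icc a b)), |f s| ≤ M)
    {k : ℝ → ℝ} (hk : Measurable k) (hk1 : ∀ s, |k s| ≤ 1) {δ : ℝ} (hδ : 0 < δ)
    (hanti : ∀ s, k (s + δ) = -k s) :
    |∫ s in Icc a b, f s * k s| ≤
      δ / 2 * (eVariationOn f (Icc a b)).toReal + δ * M := by
  set S := Icc a b with hS
  set V := (eVariationOn f S).toReal with hVdef
  have hV0 : 0 ≤ V := ENNReal.toReal_nonneg
  have haS : a ∈ S := left_mem_Icc.2 hab.le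
  have hbS : b ∈ S := right_mem_Icc.2 hab.le
  have hlbv := hBV.locallyBoundedVariationOn
  -- the projection to [a, b]
  set π : ℝ → ℝ := fun x => max a (min x b) with hπ
  have hπmono : Monotone π := fun x y h =>
    max_le_max le_rfl (min_le_min h le_rfl)
  have hπmem : ∀ x, π x ∈ S := fun x =>
    ⟨le_max_left _ _, max_le hab.le (min_le_right _ _)⟩
  have hπeq : ∀ x ∈ S, π x = x := fun x hx => by
    simp only [hπ]; rw [min_eq_left hx.2, max_eq_right hx.1]
  -- the cumulated variation function, extended by constants
  set w : ℝ → ℝ := fun x => variationOnFromTo f S a (π x) with hw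
  have hwmono : Monotone w := fun x y h =>
    (variationOnFromTo.monotoneOn hlbv haS) (hπmem x) (hπmem y) (hπmono h)
  have hwmeas : Measurable w := hwmono.measurable
  have hw0 : ∀ x, 0 ≤ w x := fun x =>
    variationOnFromTo.nonneg_of_le f S (hπmem x).1
  have hwb : ∀ x, b ≤ x → w x = V := by
    intro x hx
    have hπx : π x = b := by
      simp only [hπ]; rw [min_eq_right hx, max_eq_right hab.le]
    simp only [hw, hπx, variationOnFromTo.eq_of_le f S hab.le]
    rw [hVdef, hS]
    congr 1
    rw [inter_eq_self_of_subset_left (subset_refl _)]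
  have hwleV : ∀ x, w x ≤ V := fun x => by
    calc w x ≤ w (max b x) := hwmono (le_max_right _ _)
    _ = V := hwb _ (le_max_left _ _)
  -- increments of f are controlled by increments of w
  have hdist : ∀ x ∈ S, ∀ y ∈ S, x ≤ y → |f y - f x| ≤ w y - w x := by
    intro x hx y hy hxy
    have h1 : w y - w x = variationOnFromTo f S x y := by
      simp only [hw, hπeq x hx, hπeq y hy]
      rw [← variationOnFromTo.add hlbv haS hx hy]; ring
    rw [h1, variationOnFromTo.eq_of_le f S hxy]
    have h2 := (hBV.mono (Set.inter_subset_left (s := S) (t := Icc x y))).dist_le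
      (x := x) (y := y) ⟨hx, le_rfl, hxy⟩ ⟨hy, hxy, le_rfl⟩
    rw [Real.dist_eq, abs_sub_comm] at h2
    exact h2
  -- measurability of the indicator extension of f
  set G : ℝ → ℝ := S.indicator f with hG
  have hGmeas : Measurable G := by
    have hq : Monotone (fun x => w x - f (π x)) := by
      intro x y h
      have := (variationOnFromTo.sub_self_monotoneOn hlbv haS)
        (hπmem x) (hπmem y) (hπmono h)
      simpa [hw] using this
    have hfid : G = S.indicator (fun x => w x - (w x - f (π x))) := by
      apply indicator_congr
      intro x hx
      show f x = w x - (w x - f (π x))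
      rw [hπeq x hx]; ring
    rw [hfid]
    exact (hwmeas.sub hq.measurable).indicator measurableSet_Icc
  -- boundedness of f on S and integrability of G
  have hfbd : ∀ x ∈ S, |f x| ≤ |f a| + V := by
    intro x hx
    have h1 : |f x| - |f a| ≤ |f x - f a| := abs_sub_abs_le_abs_sub _ _
    have h2 : |f x - f a| ≤ V := by
      have := hBV.dist_le hx haS
      rwa [Real.dist_eq] at this
    linarith
  set C : ℝ := |f a| + V with hC
  have hC0 : 0 ≤ C := add_nonneg (abs_nonneg _) hV0
  have hSfin : volume S ≠ ⊤ := by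
    rw [hS, Real.volume_Icc]; exact ENNReal.ofReal_ne_top
  have hconst : ∀ (s : Set ℝ) (c : ℝ), MeasurableSet s → volume s ≠ ⊤ →
      Integrable (s.indicator (fun _ => c)) := by
    intro s c hs hfin
    refine (integrableOn_const (lt_top_iff_ne_top.1 ?_)).integrable_indicator hs
    exact lt_top_iff_ne_top.2 hfin
  have hCint : Integrable (S.indicator fun _ => C) :=
    hconst S C measurableSet_Icc hSfin
  have hGint : Integrable G := by
    refine hCint.mono' hGmeas.aestronglyMeasurable ?_
    filter_upwards with x
    by_cases hx : x ∈ S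
    · simp only [hG, indicator_of_mem hx, Real.norm_eq_abs]
      exact hfbd x hx
    · simp [hG, indicator_of_notMem hx, hC0]
  have hGδint : Integrable (fun x => G (x + δ)) := hGint.comp_add_right δ
  have hk1' : ∀ x, ‖k x‖ ≤ 1 := by intro x; rw [Real.norm_eq_abs]; exact hk1 x
  have hGkint : Integrable (fun x => G x * k x) := by
    have := hGint.bdd_mul hk.aestronglyMeasurable (Filter.Eventually.of_forall hk1')
    simpa [mul_comm] using this
  have hGδkint : Integrable (fun x => G (x + δ) * k x) := by
    have := hGδint.bdd_mul hk.aestronglyMeasurable (Filter.Eventually.of_forall hk1')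
    simpa [mul_comm] using this
  -- express the integral via G
  set J : ℝ := ∫ s, G s * k s with hJdef
  have hJ : ∫ s in Icc a b, f s * k s = J := by
    rw [hJdef, ← integral_indicator measurableSet_Icc]
    congr 1
    ext x
    by_cases hx : x ∈ S
    · simp [hG, indicator_of_mem hx, hS.symm ▸ hx]
    · simp [hG, indicator_of_notMem hx, hS.symm ▸ hx]
  -- the shift trick
  have hshift : ∫ s, G (s + δ) * k (s + δ) = J := by
    rw [hJdef]
    exact integral_add_right_eq_self (fun s => G s * k s) δ
  have hneg : ∫ s, G (s + δ) * k s = -J := by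
    rw [← hshift]
    simp_rw [hanti, mul_neg]
    rw [integral_neg, neg_neg]
  have h2J : 2 * J = ∫ s, (G s - G (s + δ)) * k s := by
    have hsub : ∫ s, (G s - G (s + δ)) * k s
        = (∫ s, G s * k s) - ∫ s, G (s + δ) * k s := by
      rw [← integral_sub hGkint hGδkint]
      congr 1; ext s; ring
    rw [hsub, ← hJdef, hneg]; ring
  set H : ℝ → ℝ := fun s => |G s - G (s + δ)| with hH
  have hHint : Integrable H := (hGint.sub hGδint).abs
  have habs : |2 * J| ≤ ∫ s, H s := by
    rw [h2J, ← Real.norm_eq_abs]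
    refine norm_integral_le_of_norm_le hHint ?_
    filter_upwards with s
    rw [Real.norm_eq_abs, abs_mul, hH]
    calc |G s - G (s + δ)| * |k s| ≤ |G s - G (s + δ)| * 1 :=
      mul_le_mul_of_nonneg_left (hk1 s) (abs_nonneg _)
    _ = |G s - G (s + δ)| := mul_one _
  -- the dominating function
  set Φ₁ : ℝ → ℝ := S.indicator (fun s => w (s + δ) - w s) with hΦ₁
  set Φ₂ : ℝ → ℝ := (Ioc (b - δ) b).indicator (fun _ => M) with hΦ₂
  set Φ₃ : ℝ → ℝ := (Ico (a - δ) a).indicator (fun _ => M) with hΦ₃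
  have hΦ₁nonneg : ∀ s, 0 ≤ Φ₁ s := by
    intro s
    rw [hΦ₁]
    apply indicator_nonneg
    intro x _
    have : w x ≤ w (x + δ) := hwmono (by linarith)
    linarith
  have hΦ₂nonneg : ∀ s, 0 ≤ Φ₂ s := fun s =>
    indicator_nonneg (fun _ _ => hM0) s
  have hΦ₃nonneg : ∀ s, 0 ≤ Φ₃ s := fun s =>
    indicator_nonneg (fun _ _ => hM0) s
  have hΦ₁int : Integrable Φ₁ := by
    refine (hconst S V measurableSet_Icc hSfin).mono'
      (((hwmeas.comp (measurable_id.add_const δ)).sub hwmeas).indicator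
        measurableSet_Icc).aestronglyMeasurable ?_
    filter_upwards with x
    rw [Real.norm_eq_abs, hΦ₁]
    by_cases hx : x ∈ S
    · rw [indicator_of_mem hx, indicator_of_mem hx,
        abs_of_nonneg (by linarith [hwmono (show x ≤ x + δ by linarith)])]
      have h1 := hwleV (x + δ)
      have h2 := hw0 x
      linarith
    · simp [indicator_of_notMem hx, hV0]
  have hΦ₂int : Integrable Φ₂ := hconst _ M measurableSet_Ioc
    (by rw [Real.volume_Ioc]; exact ENNReal.ofReal_ne_top)
  have hΦ₃int : Integrable Φ₃ := hconst _ M measurableSet_Ico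
    (by rw [Real.volume_Ico]; exact ENNReal.ofReal_ne_top)
  have hΦint : Integrable (fun s => Φ₁ s + Φ₂ s + Φ₃ s) :=
    (hΦ₁int.add hΦ₂int).add hΦ₃int
  -- a.e. pointwise bound
  have e1 : ∀ᵐ s : ℝ, s ∈ S → |f s| ≤ M := (ae_restrict_iff' measurableSet_Icc).1 hM
  have e2 : ∀ᵐ s : ℝ, s + δ ∈ S → |f (s + δ)| ≤ M := by
    have hmp : MeasurePreserving (fun x : ℝ => x + δ) volume volume :=
      measurePreserving_add_right volume δ
    exact hmp.quasiMeasurePreserving.tendsto_ae e1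
  have hHle : ∀ᵐ s : ℝ, H s ≤ Φ₁ s + Φ₂ s + Φ₃ s := by
    filter_upwards [e1, e2] with s h1 h2
    have hΦ₁n := hΦ₁nonneg s
    have hΦ₂n := hΦ₂nonneg s
    have hΦ₃n := hΦ₃nonneg s
    by_cases hs : s ∈ S <;> by_cases hsd : s + δ ∈ S
    · -- both points in S
      have hb1 : H s ≤ Φ₁ s := by
        simp only [hH, hG, hΦ₁, indicator_of_mem hs, indicator_of_mem hsd]
        rw [abs_sub_comm]
        exact hdist s hs (s + δ) hsd (by linarith)
      linarith
    · -- s ∈ S, s + δ ∉ S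
      have hmem : s ∈ Ioc (b - δ) b := by
        constructor
        · by_contra hcon
          push_neg at hcon
          exact hsd ⟨by linarith [hs.1], by linarith⟩
        · exact hs.2
      have hb2 : H s ≤ Φ₂ s := by
        simp only [hH, hG, hΦ₂, indicator_of_mem hs, indicator_of_notMem hsd,
          indicator_of_mem hmem, sub_zero]
        exact h1 hs
      linarith
    · -- s ∉ S, s + δ ∈ S
      have hmem : s ∈ Ico (a - δ) a := by
        constructor
        · linarith [hsd.1]
        · by_contra hcon
          push_neg at hcon
          exact hs ⟨hcon, by linarith [hsd.2]⟩
      have hb3 : H s ≤ Φ₃ s := by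
        simp only [hH, hG, hΦ₃, indicator_of_notMem hs, indicator_of_mem hsd,
          indicator_of_mem hmem, zero_sub, abs_neg]
        exact h2 hsd
      linarith
    · -- neither
      have : H s = 0 := by
        simp only [hH, hG, indicator_of_notMem hs, indicator_of_notMem hsd,
          sub_zero, abs_zero]
      linarith
  have hintH : ∫ s, H s ≤ ∫ s, (Φ₁ s + Φ₂ s + Φ₃ s) :=
    integral_mono_ae hHint hΦint hHle
  -- compute/estimate the three integrals
  have hI2 : ∫ s, Φ₂ s = M * δ := by
    rw [hΦ₂, integral_indicator_const (M : ℝ) measurableSet_Ioc, measureReal_def, Real.volume_Ioc,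
      smul_eq_mul, ENNReal.toReal_ofReal (by linarith : (0:ℝ) ≤ b - (b - δ))]
    ring
  have hI3 : ∫ s, Φ₃ s = M * δ := by
    rw [hΦ₃, integral_indicator_const (M : ℝ) measurableSet_Ico, measureReal_def, Real.volume_Ico,
      smul_eq_mul, ENNReal.toReal_ofReal (by linarith : (0:ℝ) ≤ a - (a - δ))]
    ring
  have hwii : ∀ c d : ℝ, IntervalIntegrable w volume c d :=
    fun c d => hwmono.intervalIntegrable
  have hwδmono : Monotone (fun s => w (s + δ)) := fun x y h => hwmono (by linarith)
  have hwiiδ : ∀ c d : ℝ, IntervalIntegrable (fun s => w (s + δ)) volume c d :=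
    fun c d => hwδmono.intervalIntegrable
  have hI1 : ∫ s, Φ₁ s ≤ δ * V := by
    rw [hΦ₁, integral_indicator measurableSet_Icc]
    have hIccIoc : ∫ s in Icc a b, (w (s + δ) - w s) = ∫ s in a..b, (w (s + δ) - w s) := by
      rw [intervalIntegral.integral_of_le hab.le, integral_Icc_eq_integral_Ioc]
    rw [hIccIoc, intervalIntegral.integral_sub (hwiiδ a b) (hwii a b)]
    have hcomp : ∫ s in a..b, w (s + δ) = ∫ s in (a+δ)..(b+δ), w s :=
      intervalIntegral.integral_comp_add_right w δ
    have hsplit1 : ∫ s in a..(b+δ), w s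
        = (∫ s in a..(a+δ), w s) + ∫ s in (a+δ)..(b+δ), w s :=
      (intervalIntegral.integral_add_adjacent_intervals (hwii _ _) (hwii _ _)).symm
    have hsplit2 : ∫ s in a..(b+δ), w s
        = (∫ s in a..b, w s) + ∫ s in b..(b+δ), w s :=
      (intervalIntegral.integral_add_adjacent_intervals (hwii _ _) (hwii _ _)).symm
    have htail : ∫ s in b..(b+δ), w s = δ * V := by
      have : ∫ s in b..(b+δ), w s = ∫ s in b..(b+δ), V := by
        apply intervalIntegral.integral_congr
        intro x hx
        rw [uIcc_of_le (by linarith)] at hx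
        exact hwb x hx.1
      rw [this, intervalIntegral.integral_const, smul_eq_mul]
      ring
    have hhead : 0 ≤ ∫ s in a..(a+δ), w s :=
      intervalIntegral.integral_nonneg (by linarith) (fun x _ => hw0 x)
    have : (∫ s in a..b, w (s + δ)) - ∫ s in a..b, w s
        = (∫ s in b..(b+δ), w s) - ∫ s in a..(a+δ), w s := by
      rw [hcomp]
      have := hsplit1.symm.trans hsplit2
      linarith
    rw [this, htail]
    linarith
  have hItot : ∫ s, H s ≤ δ * V + 2 * (M * δ) := by
    have h12 : Integrable (fun s => Φ₁ s + Φ₂ s) := hΦ₁int.add hΦ₂int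
    have h1 : Integrable Φ₁ := hΦ₁int
    have h2 : Integrable Φ₂ := hΦ₂int
    have h3 : Integrable Φ₃ := hΦ₃int
    have hsum : ∫ s, (Φ₁ s + Φ₂ s + Φ₃ s)
        = (∫ s, Φ₁ s) + (∫ s, Φ₂ s) + ∫ s, Φ₃ s := by
      rw [integral_add h12 h3, integral_add h1 h2]
    rw [hsum, hI2, hI3] at hintH
    linarith
  -- conclude
  rw [hJ]
  have h2 : |2 * J| = 2 * |J| := by rw [abs_mul, abs_two]
  rw [h2] at habs
  have := habs.trans hItot
  linarith

/-- Quantitative Riemann–Lebesgue lemma for functions of bounded variation: if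
`f : [a₁, b₁] → ℝ` is of bounded variation with total variation `‖f‖_TV` and essential
supremum `‖f‖_∞`, then for every `t ≠ 0`,
`|∫ f(s) cos(ts) ds| ≤ 4(‖f‖_TV + ‖f‖_∞)/|t|` and
`|∫ f(s) sin(ts) ds| ≤ 4(‖f‖_TV + ‖f‖_∞)/|t|`. -/
theorem riemann_lebesgue_bounded_variation (a₁ b₁ : ℝ) (hab : a₁ < b₁) (f : ℝ → ℝ)
    (hBV : BoundedVariationOn f (Icc a₁ b₁)) (t : ℝ) (ht : t ≠ 0) :
    |∫ s in Icc a₁ b₁, f s * Real.cos (t * s)| ≤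
        4 * ((eVariationOn f (Icc a₁ b₁)).toReal +
          essSup (fun s => |f s|) (volume.restrict (Icc a₁ b₁))) / |t| ∧
    |∫ s in Icc a₁ b₁, f s * Real.sin (t * s)| ≤
        4 * ((eVariationOn f (Icc a₁ b₁)).toReal +
          essSup (fun s => |f s|) (volume.restrict (Icc a₁ b₁))) / |t| := by
  set S := Icc a₁ b₁ with hS
  set V := (eVariationOn f S).toReal with hVdef
  set M := essSup (fun s => |f s|) (volume.restrict S) with hMdef
  have hV0 : 0 ≤ V := ENNReal.toReal_nonneg
  have haS : a₁ ∈ S := left_mem_Icc.2 hab.le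
  -- the essential sup bounds |f| a.e.
  have hfbd : ∀ x ∈ S, |f x| ≤ |f a₁| + V := by
    intro x hx
    have h1 : |f x| - |f a₁| ≤ |f x - f a₁| := abs_sub_abs_le_abs_sub _ _
    have h2 : |f x - f a₁| ≤ V := by
      have := hBV.dist_le hx haS
      rwa [Real.dist_eq] at this
    linarith
  have hbdd : Filter.IsBoundedUnder (· ≤ ·) (ae (volume.restrict S))
      (fun s => |f s|) := by
    refine ⟨|f a₁| + V, ?_⟩
    rw [Filter.eventually_map]
    filter_upwards [ae_restrict_mem measurableSet_Icc] with x hx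
    exact hfbd x hx
  have hM : ∀ᵐ s ∂(volume.restrict S), |f s| ≤ M := ae_le_essSup hbdd
  have hne : (volume.restrict S) ≠ 0 := by
    intro h
    have : volume S = 0 := by
      have := congrArg (fun μ : Measure ℝ => μ S) h
      simpa [Measure.restrict_apply, measurableSet_Icc] using this
    rw [hS, Real.volume_Icc, ENNReal.ofReal_eq_zero] at this
    linarith
  have hM0 : 0 ≤ M := by
    have hnb : Filter.NeBot (ae (volume.restrict S)) := ae_neBot.2 hne
    obtain ⟨s, hs⟩ := hM.exists
    exact le_trans (abs_nonneg _) hs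
  have hT : (0:ℝ) < |t| := abs_pos.2 ht
  set δ : ℝ := Real.pi / |t| with hδdef
  have hδ : 0 < δ := div_pos Real.pi_pos hT
  have hδmul : ∀ s : ℝ, |t| * (s + δ) = |t| * s + Real.pi := by
    intro s
    rw [mul_add, hδdef, mul_div_cancel₀ _ (ne_of_gt hT)]
  -- the final arithmetic bound
  have harith : δ / 2 * V + δ * M ≤ 4 * (V + M) / |t| := by
    have hπ4 : Real.pi ≤ 4 := by
      have := Real.pi_le_four
      linarith
    have heq : δ / 2 * V + δ * M = (Real.pi / 2 * V + Real.pi * M) / |t| := by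
      rw [hδdef]; field_simp
    rw [heq, div_le_div_iff₀ hT hT]
    have h3 : Real.pi / 2 * V + Real.pi * M ≤ 4 * (V + M) := by nlinarith
    exact mul_le_mul_of_nonneg_right h3 hT.le
  constructor
  · -- cosine
    have hcos : ∀ s, Real.cos (t * s) = Real.cos (|t| * s) := by
      intro s
      rcases abs_choice t with h | h
      · rw [h]
      · rw [h, neg_mul, Real.cos_neg]
    have hkey := rlbv_key hab hBV hM0 hM (k := fun s => Real.cos (|t| * s))
      (Real.measurable_cos.comp (measurable_const_mul _)) (fun s => Real.abs_cos_le_one _)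
      hδ (fun s => by
        show Real.cos (|t| * (s + δ)) = -Real.cos (|t| * s)
        rw [hδmul s, Real.cos_add_pi])
    calc |∫ s in Icc a₁ b₁, f s * Real.cos (t * s)|
        = |∫ s in Icc a₁ b₁, f s * Real.cos (|t| * s)| := by
          congr 1; apply setIntegral_congr_fun measurableSet_Icc
          intro x _
          show f x * Real.cos (t * x) = f x * Real.cos (|t| * x)
          rw [hcos x]
      _ ≤ δ / 2 * V + δ * M := hkey
      _ ≤ 4 * (V + M) / |t| := harith
  · -- sine
    have hsin : |∫ s in Icc a₁ b₁, f s * Real.sin (t * s)|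
        = |∫ s in Icc a₁ b₁, f s * Real.sin (|t| * s)| := by
      rcases abs_choice t with h | h
      · rw [h]
      · have hcongr : ∫ s in Icc a₁ b₁, f s * Real.sin (|t| * s)
            = ∫ s in Icc a₁ b₁, -(f s * Real.sin (t * s)) := by
          apply setIntegral_congr_fun measurableSet_Icc
          intro x _
          show f x * Real.sin (|t| * x) = -(f x * Real.sin (t * x))
          rw [h, neg_mul, Real.sin_neg]; ring
        rw [hcongr, integral_neg, abs_neg]
    have hkey := rlbv_key hab hBV hM0 hM (k := fun s => Real.sin (|t| * s))
      (Real.measurable_sin.comp (measurable_const_mul _)) (fun s => Real.abs_sin_le_one _)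
      hδ (fun s => by
        show Real.sin (|t| * (s + δ)) = -Real.sin (|t| * s)
        rw [hδmul s, Real.sin_add_pi])
    calc |∫ s in Icc a₁ b₁, f s * Real.sin (t * s)|
        = |∫ s in Icc a₁ b₁, f s * Real.sin (|t| * s)| := hsin
      _ ≤ δ / 2 * V + δ * M := hkey
      _ ≤ 4 * (V + M) / |t| := harith
end

section
/- For every t ∈ ℝ, every μ′ ∈ ℝ and every μ ∈ ℝ, the function x ↦ K_{1,0}(t, x; μ′) is integrable with respect to F_μ and ∫ K_{1,0}(t, x; μ′) dF_μ(x) = ∫_{−1}^{1} ω(s)·cos(t·s·(μ−μ′)) ds. In particular, for every t ∈ ℝ and μ₀ ∈ ℝ, ∫ K_{1,0}(t, x; μ₀) dF_{μ₀}(x) = 1. -/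
open MeasureTheory

set_option maxHeartbeats 1000000

/-- For a Type I location-shift family `F_μ` (translates of a probability measure `P₀` whose
characteristic function `r₀` is real and strictly positive) and an even bounded probability
density `ω` on `[−1,1]`, the matching function
`K₁₀(t, x; μ′) = ∫_{−1}^{1} ω(s) cos(ts(x−μ′))/r₀(ts) ds` is `F_μ`-integrable with
`∫ K₁₀(t, x; μ′) dF_μ(x) = ∫_{−1}^{1} ω(s) cos(ts(μ−μ′)) ds`; in particular
`∫ K₁₀(t, x; μ₀) dF_{μ₀}(x) = 1`. -/
theorem integral_matching_point_null
    (P₀ : Measure ℝ) [IsProbabilityMeasure P₀]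
    (r₀ : ℝ → ℝ) (hr₀pos : ∀ t : ℝ, 0 < r₀ t)
    (hchar : ∀ t : ℝ,
      (∫ x, Complex.exp (Complex.I * (t : ℂ) * (x : ℂ)) ∂P₀) = ((r₀ t : ℝ) : ℂ))
    (F : ℝ → Measure ℝ) (hF : ∀ μ : ℝ, F μ = Measure.map (fun x => x + μ) P₀)
    (ω : ℝ → ℝ) (hω_meas : Measurable ω) (hω_nonneg : ∀ s, 0 ≤ ω s)
    (hω_even : ∀ s, ω (-s) = ω s)
    (hω_bdd : ∃ C : ℝ, ∀ s, ω s ≤ C)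
    (hω_supp : ∀ s : ℝ, s ∉ Set.Icc (-1:ℝ) 1 → ω s = 0)
    (hω_int : (∫ s in (-1:ℝ)..1, ω s) = 1)
    (K₁₀ : ℝ → ℝ → ℝ → ℝ)
    (hK : ∀ t x μ', K₁₀ t x μ' =
      ∫ s in (-1:ℝ)..1, ω s * Real.cos (t * s * (x - μ')) / r₀ (t * s)) :
    (∀ t μ' μ : ℝ,
        Integrable (fun x => K₁₀ t x μ') (F μ) ∧
        (∫ x, K₁₀ t x μ' ∂(F μ)) = ∫ s in (-1:ℝ)..1, ω s * Real.cos (t * s * (μ - μ'))) ∧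
    (∀ t μ₀ : ℝ, (∫ x, K₁₀ t x μ₀ ∂(F μ₀)) = 1) := by
  obtain ⟨C, hC⟩ := hω_bdd
  -- integrability of the complex exponential
  have hexp_int : ∀ a : ℝ, Integrable (fun x : ℝ =>
      Complex.exp (Complex.I * (a : ℂ) * (x : ℂ))) P₀ := by
    intro a
    refine Integrable.mono' (integrable_const (1:ℝ)) ?_ ?_
    · exact (Complex.continuous_exp.comp (by continuity)).aestronglyMeasurable
    · filter_upwards with x
      rw [show Complex.I * (a : ℂ) * (x : ℂ) = ((a * x : ℝ) : ℂ) * Complex.I by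
        push_cast; ring]
      simp [Complex.norm_exp]
  have hre : ∀ (a x : ℝ), (Complex.exp (Complex.I * (a : ℂ) * (x : ℂ))).re
      = Real.cos (a * x) := by
    intro a x
    rw [show Complex.I * (a : ℂ) * (x : ℂ) = ((a * x : ℝ) : ℂ) * Complex.I by
      push_cast; ring]
    exact Complex.exp_ofReal_mul_I_re _
  have him : ∀ (a x : ℝ), (Complex.exp (Complex.I * (a : ℂ) * (x : ℂ))).im
      = Real.sin (a * x) := by
    intro a x
    rw [show Complex.I * (a : ℂ) * (x : ℂ) = ((a * x : ℝ) : ℂ) * Complex.I by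
      push_cast; ring]
    exact Complex.exp_ofReal_mul_I_im _
  have hcos : ∀ a : ℝ, ∫ x, Real.cos (a * x) ∂P₀ = r₀ a := by
    intro a
    have h := integral_re (hexp_int a)
    simp only [RCLike.re_eq_complex_re, hre, hchar a, Complex.ofReal_re] at h
    exact h
  have hsin : ∀ a : ℝ, ∫ x, Real.sin (a * x) ∂P₀ = 0 := by
    intro a
    have h := integral_im (hexp_int a)
    simp only [RCLike.im_eq_complex_im, him, hchar a, Complex.ofReal_im] at h
    exact h
  -- continuity of r₀
  have hr₀cont : Continuous r₀ := by
    have : r₀ = fun a => ∫ x, Real.cos (a * x) ∂P₀ := funext fun a => (hcos a).symm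
    rw [this]
    refine continuous_of_dominated (bound := fun _ => (1:ℝ)) ?_ ?_ (integrable_const 1) ?_
    · intro a
      exact (Real.continuous_cos.comp (continuous_const.mul continuous_id)).aestronglyMeasurable
    · intro a
      filter_upwards with x
      simpa using Real.abs_cos_le_one (a * x)
    · filter_upwards with x
      exact Real.continuous_cos.comp (continuous_id.mul continuous_const)
  -- integrability of cos/sin under P₀
  have hcosint : ∀ a : ℝ, Integrable (fun x => Real.cos (a * x)) P₀ := by
    intro a
    refine Integrable.mono' (integrable_const (1:ℝ))
      ((Real.continuous_cos.comp (continuous_const.mul continuous_id)).aestronglyMeasurable) ?_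
    filter_upwards with x
    simpa using Real.abs_cos_le_one (a * x)
  have hsinint : ∀ a : ℝ, Integrable (fun x => Real.sin (a * x)) P₀ := by
    intro a
    refine Integrable.mono' (integrable_const (1:ℝ))
      ((Real.continuous_sin.comp (continuous_const.mul continuous_id)).aestronglyMeasurable) ?_
    filter_upwards with x
    simpa using Real.abs_sin_le_one (a * x)
  -- main part
  have main : ∀ t μ' μ : ℝ,
      Integrable (fun x => K₁₀ t x μ') (F μ) ∧
      (∫ x, K₁₀ t x μ' ∂(F μ)) = ∫ s in (-1:ℝ)..1, ω s * Real.cos (t * s * (μ - μ')) := by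
    intro t μ' μ
    haveI : IsProbabilityMeasure (F μ) := by
      rw [hF μ]; exact Measure.isProbabilityMeasure_map (measurable_add_const μ).aemeasurable
    set c := μ - μ' with hc
    -- inner integral
    have hinner : ∀ a : ℝ, ∫ x, Real.cos (a * (x - μ')) ∂(F μ)
        = Real.cos (a * c) * r₀ a := by
      intro a
      have hcont2 : Continuous (fun x : ℝ => Real.cos (a * (x - μ'))) :=
        Real.continuous_cos.comp (continuous_const.mul (continuous_id.sub continuous_const))
      have hmeas : AEStronglyMeasurable (fun x : ℝ => Real.cos (a * (x - μ')))
          (Measure.map (fun x => x + μ) P₀) := hcont2.aestronglyMeasurable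
      rw [hF μ, integral_map (measurable_add_const μ).aemeasurable hmeas]
      have heq : ∀ x : ℝ, Real.cos (a * (x + μ - μ'))
          = Real.cos (a * x) * Real.cos (a * c) - Real.sin (a * x) * Real.sin (a * c) := by
        intro x
        rw [show a * (x + μ - μ') = a * x + a * c by rw [hc]; ring, Real.cos_add]
      calc ∫ x, Real.cos (a * (x + μ - μ')) ∂P₀
          = ∫ x, (Real.cos (a * x) * Real.cos (a * c)
              - Real.sin (a * x) * Real.sin (a * c)) ∂P₀ := by
            exact integral_congr_ae (Filter.Eventually.of_forall fun x => heq x)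
        _ = (∫ x, Real.cos (a * x) ∂P₀) * Real.cos (a * c)
              - (∫ x, Real.sin (a * x) ∂P₀) * Real.sin (a * c) := by
            rw [integral_sub ((hcosint a).mul_const _) ((hsinint a).mul_const _),
              integral_mul_const, integral_mul_const]
        _ = Real.cos (a * c) * r₀ a := by rw [hcos a, hsin a]; ring
    -- lower bound for r₀ ∘ (t * ·) on [-1,1]
    obtain ⟨s₀, hs₀, hmin⟩ := (isCompact_Icc (a := (-1:ℝ)) (b := 1)).exists_isMinOn
      ⟨0, by norm_num, by norm_num⟩
      (show ContinuousOn (fun s : ℝ => r₀ (t * s)) (Set.Icc (-1) 1) from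
        (hr₀cont.comp (continuous_const.mul continuous_id)).continuousOn)
    set δ := r₀ (t * s₀) with hδ
    have hδpos : 0 < δ := hr₀pos _
    -- the kernel on the product space
    set f : ℝ → ℝ → ℝ := fun s x => ω s * Real.cos (t * s * (x - μ')) / r₀ (t * s) with hfdef
    have hf_meas : Measurable (Function.uncurry f) := by
      refine Measurable.div ?_ ((hr₀cont.measurable).comp (measurable_fst.const_mul t))
      exact (hω_meas.comp measurable_fst).mul
        (Real.measurable_cos.comp
          ((measurable_fst.const_mul t).mul (measurable_snd.sub measurable_const)))
    have hCnn : 0 ≤ C := le_trans (hω_nonneg 0) (hC 0)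
    have hbound : ∀ p : ℝ × ℝ, ‖Function.uncurry f p‖ ≤ C / δ := by
      rintro ⟨s, x⟩
      by_cases hs : s ∈ Set.Icc (-1:ℝ) 1
      · have h1 : δ ≤ r₀ (t * s) := hmin hs
        have h2 : 0 < r₀ (t * s) := hr₀pos _
        have h3 : |Real.cos (t * s * (x - μ'))| ≤ 1 := Real.abs_cos_le_one _
        have : |ω s * Real.cos (t * s * (x - μ')) / r₀ (t * s)|
            = ω s * |Real.cos (t * s * (x - μ'))| / r₀ (t * s) := by
          rw [abs_div, abs_mul, abs_of_nonneg (hω_nonneg s), abs_of_pos h2]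
        simp only [Function.uncurry, Real.norm_eq_abs, hfdef, this]
        calc ω s * |Real.cos (t * s * (x - μ'))| / r₀ (t * s)
            ≤ C * 1 / δ :=
              div_le_div₀ (by positivity) (mul_le_mul (hC s) h3 (abs_nonneg _) hCnn) hδpos h1
          _ = C / δ := by ring
      · simp only [Function.uncurry, Real.norm_eq_abs, hfdef, hω_supp s hs, zero_mul, zero_div,
          abs_zero]
        positivity
    haveI hfin1 : IsFiniteMeasure (volume.restrict (Set.Ioc (-1:ℝ) 1)) := by
      constructor
      rw [Measure.restrict_apply_univ]
      exact measure_Ioc_lt_top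
    have hfint : Integrable (Function.uncurry f)
        ((volume.restrict (Set.Ioc (-1:ℝ) 1)).prod (F μ)) := by
      refine Integrable.mono' (integrable_const (C / δ)) hf_meas.aestronglyMeasurable ?_
      filter_upwards with p using hbound p
    -- rewrite K₁₀ as a set integral
    have hK' : ∀ x : ℝ, K₁₀ t x μ' = ∫ s in Set.Ioc (-1:ℝ) 1, f s x := by
      intro x
      rw [hK, intervalIntegral.integral_of_le (by norm_num : (-1:ℝ) ≤ 1)]
    have hint : Integrable (fun x => K₁₀ t x μ') (F μ) := by
      have := hfint.integral_prod_right
      exact this.congr (Filter.Eventually.of_forall fun x => (hK' x).symm)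
    refine ⟨hint, ?_⟩
    have hswap : ∫ x, (∫ s in Set.Ioc (-1:ℝ) 1, f s x) ∂(F μ)
        = ∫ s in Set.Ioc (-1:ℝ) 1, ∫ x, f s x ∂(F μ) :=
      (integral_integral_swap hfint).symm
    have hpt : ∀ s : ℝ, s ∈ Set.Ioc (-1:ℝ) 1 →
        (∫ x, f s x ∂(F μ)) = ω s * Real.cos (t * s * c) := by
      intro s _
      have hr : r₀ (t * s) ≠ 0 := (hr₀pos _).ne'
      have : (fun x => f s x) = fun x =>
          (ω s / r₀ (t * s)) * Real.cos (t * s * (x - μ')) := by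
        funext x; simp only [hfdef]; ring
      rw [this, integral_const_mul, hinner (t * s)]
      field_simp
    calc ∫ x, K₁₀ t x μ' ∂(F μ)
        = ∫ x, (∫ s in Set.Ioc (-1:ℝ) 1, f s x) ∂(F μ) :=
          integral_congr_ae (Filter.Eventually.of_forall fun x => hK' x)
      _ = ∫ s in Set.Ioc (-1:ℝ) 1, ∫ x, f s x ∂(F μ) := hswap
      _ = ∫ s in Set.Ioc (-1:ℝ) 1, ω s * Real.cos (t * s * c) :=
          setIntegral_congr_fun measurableSet_Ioc hpt
      _ = ∫ s in (-1:ℝ)..1, ω s * Real.cos (t * s * (μ - μ')) := by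
          rw [intervalIntegral.integral_of_le (by norm_num : (-1:ℝ) ≤ 1), hc]
  refine ⟨main, ?_⟩
  intro t μ₀
  rw [(main t μ₀ μ₀).2]
  simp only [sub_self, mul_zero, Real.cos_zero, mul_one]
  exact hω_int
end

section
/- For every t ∈ ℝ and every μ ∈ ℝ, the function x ↦ K₁(t, x) is integrable with respect to F_μ and ∫ K₁(t, x) dF_μ(x) = (1/π) ∫_{(μ−b)t}^{(μ−a)t} (sin y)/y dy (an oriented integral, with (sin y)/y = 1 at y = 0). -/
open MeasureTheory Real

open intervalIntegral in
private lemma my_integral_cos (a b : ℝ) : ∫ x in a..b, Real.cos x = Real.sin b - Real.sin a :=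
  integral_cos

/-- For a Type I location-shift family `F_μ` and fixed reals `a < b`, the matching function
`K₁(t, x) = (t/(2π)) ∫_a^b ( ∫_{−1}^{1} cos(ts(x−y))/r₀(ts) ds ) dy` is `F_μ`-integrable with
`∫ K₁(t, x) dF_μ(x) = (1/π) ∫_{(μ−b)t}^{(μ−a)t} (sin y)/y dy`. -/
theorem integral_matching_bounded_null
    (P₀ : Measure ℝ) [IsProbabilityMeasure P₀]
    (r₀ : ℝ → ℝ) (hr₀pos : ∀ t : ℝ, 0 < r₀ t)
    (hchar : ∀ t : ℝ,
      (∫ x, Complex.exp (Complex.I * (t : ℂ) * (x : ℂ)) ∂P₀) = ((r₀ t : ℝ) : ℂ))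
    (F : ℝ → Measure ℝ) (hF : ∀ μ : ℝ, F μ = Measure.map (fun x => x + μ) P₀)
    (a b : ℝ) (hab : a < b)
    (K₁ : ℝ → ℝ → ℝ)
    (hK₁ : ∀ t x, K₁ t x =
      (t / (2 * π)) * ∫ y in a..b, ∫ s in (-1:ℝ)..1, Real.cos (t * s * (x - y)) / r₀ (t * s)) :
    ∀ t μ : ℝ,
      Integrable (fun x => K₁ t x) (F μ) ∧
      (∫ x, K₁ t x ∂(F μ)) = (1 / π) * ∫ y in ((μ - b) * t)..((μ - a) * t), Real.sin y / y := by
  -- Basic facts about `r₀` extracted from the characteristic function hypothesis.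
  have hcint : ∀ u : ℝ, Integrable (fun x : ℝ => Real.cos (u * x)) P₀ := by
    intro u
    refine Integrable.mono' (integrable_const 1) ?_ ?_
    · exact (Real.continuous_cos.comp (continuous_const.mul continuous_id)).aestronglyMeasurable
    · filter_upwards with x
      simpa [Real.norm_eq_abs] using Real.abs_cos_le_one (u * x)
  have hsint : ∀ u : ℝ, Integrable (fun x : ℝ => Real.sin (u * x)) P₀ := by
    intro u
    refine Integrable.mono' (integrable_const 1) ?_ ?_
    · exact (Real.continuous_sin.comp (continuous_const.mul continuous_id)).aestronglyMeasurable
    · filter_upwards with x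
      simpa [Real.norm_eq_abs] using Real.abs_sin_le_one (u * x)
  have key : ∀ u : ℝ, (∫ x, Real.cos (u * x) ∂P₀) = r₀ u ∧ (∫ x, Real.sin (u * x) ∂P₀) = 0 := by
    intro u
    have hrw : (fun x : ℝ => Complex.exp (Complex.I * (u : ℂ) * (x : ℂ)))
        = fun x : ℝ => Complex.exp (((u * x : ℝ) : ℂ) * Complex.I) := by
      funext x; congr 1; push_cast; ring
    have hint : Integrable (fun x : ℝ => Complex.exp (Complex.I * (u : ℂ) * (x : ℂ))) P₀ := by
      rw [hrw]
      refine Integrable.mono' (integrable_const 1) ?_ ?_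
      · refine (Complex.continuous_exp.comp ?_).aestronglyMeasurable
        exact (Complex.continuous_ofReal.comp (continuous_const.mul continuous_id)).mul
          continuous_const
      · filter_upwards with x
        rw [Complex.norm_exp]
        simp
    have h := hchar u
    have hre := integral_re (μ := P₀) hint
    have him := integral_im (μ := P₀) hint
    rw [h] at hre him
    have h1 : (∫ x, (Complex.exp (Complex.I * (u:ℂ) * (x:ℂ))).re ∂P₀) = r₀ u := by
      simpa using hre
    have h2 : (∫ x, (Complex.exp (Complex.I * (u:ℂ) * (x:ℂ))).im ∂P₀) = 0 := by
      simpa using him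
    constructor
    · rw [← h1]
      congr 1
      funext x
      rw [show Complex.I * (u:ℂ) * (x:ℂ) = ((u * x : ℝ) : ℂ) * Complex.I by push_cast; ring,
        Complex.exp_ofReal_mul_I_re]
    · rw [← h2]
      congr 1
      funext x
      rw [show Complex.I * (u:ℂ) * (x:ℂ) = ((u * x : ℝ) : ℂ) * Complex.I by push_cast; ring,
        Complex.exp_ofReal_mul_I_im]
  have hr₀cont : Continuous r₀ := by
    have hrw : r₀ = fun u => ∫ x, Real.cos (u * x) ∂P₀ := funext fun u => ((key u).1).symm
    rw [hrw]
    refine continuous_of_dominated ?_ ?_ (integrable_const 1) ?_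
    · intro u
      exact (Real.continuous_cos.comp (continuous_const.mul continuous_id)).aestronglyMeasurable
    · intro u
      filter_upwards with x
      simpa [Real.norm_eq_abs] using Real.abs_cos_le_one (u * x)
    · filter_upwards with x
      exact Real.continuous_cos.comp (continuous_id.mul continuous_const)
  intro t μ
  haveI hFP : IsProbabilityMeasure (F μ) := by
    rw [hF]; exact Measure.isProbabilityMeasure_map (measurable_add_const μ).aemeasurable
  -- trivial case t = 0
  rcases eq_or_ne t 0 with ht | ht
  · subst ht
    have hzero : (fun x => K₁ 0 x) = fun _ => (0 : ℝ) := by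
      funext x; rw [hK₁]; simp
    constructor
    · rw [hzero]; exact integrable_const 0
    · rw [hzero]
      simp
  -- minimum of r₀ on the relevant compact set
  obtain ⟨s₀, hs₀mem, hs₀min⟩ :=
    isCompact_Icc.exists_isMinOn (Set.nonempty_Icc.2 (by norm_num : (-1:ℝ) ≤ 1))
      ((hr₀cont.comp (continuous_const.mul continuous_id)).continuousOn :
        ContinuousOn (fun s : ℝ => r₀ (t * s)) (Set.Icc (-1) 1))
  set m := r₀ (t * s₀) with hm_def
  have hm : 0 < m := hr₀pos _
  have hmle : ∀ s ∈ Set.Icc (-1:ℝ) 1, m ≤ r₀ (t * s) := fun s hs => hs₀min hs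
  -- bound on the integrand
  have hbnd : ∀ x y s : ℝ, s ∈ Set.Icc (-1:ℝ) 1 →
      |Real.cos (t * s * (x - y)) / r₀ (t * s)| ≤ 1 / m := by
    intro x y s hs
    rw [abs_div]
    refine div_le_div₀ zero_le_one (Real.abs_cos_le_one _) hm ?_
    rw [abs_of_pos (hr₀pos _)]
    exact hmle s hs
  -- continuity of the integrand
  have hcontf : Continuous (fun p : (ℝ × ℝ) × ℝ =>
      Real.cos (t * p.2 * (p.1.1 - p.1.2)) / r₀ (t * p.2)) := by
    apply Continuous.div
    · exact Real.continuous_cos.comp (by fun_prop)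
    · exact hr₀cont.comp (by fun_prop)
    · intro p; exact (hr₀pos _).ne'
  -- the inner integral
  set inner : ℝ → ℝ → ℝ :=
    fun x y => ∫ s in (-1:ℝ)..1, Real.cos (t * s * (x - y)) / r₀ (t * s) with hinner_def
  have hinner_cont : Continuous (fun p : ℝ × ℝ => inner p.1 p.2) := by
    exact intervalIntegral.continuous_parametric_intervalIntegral_of_continuous'
      (f := fun (p : ℝ × ℝ) (s : ℝ) => Real.cos (t * s * (p.1 - p.2)) / r₀ (t * s))
      (by exact hcontf) (-1) 1
  have hinner_bnd : ∀ x y : ℝ, |inner x y| ≤ 2 / m := by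
    intro x y
    have := intervalIntegral.norm_integral_le_of_norm_le_const
      (a := (-1:ℝ)) (b := 1) (C := 1 / m)
      (f := fun s => Real.cos (t * s * (x - y)) / r₀ (t * s))
      (fun s hs => by
        rw [Real.norm_eq_abs]
        exact hbnd x y s (Set.mem_Icc.2 ⟨(Set.mem_Ioc.1 (by simpa using hs)).1.le,
          (Set.mem_Ioc.1 (by simpa using hs)).2⟩))
    rw [Real.norm_eq_abs] at this
    calc |inner x y| ≤ 1 / m * |1 - (-1:ℝ)| := this
      _ = 2 / m := by rw [show |1 - (-1:ℝ)| = 2 by norm_num]; ring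
  -- the outer (y) integral
  set Hfun : ℝ → ℝ := fun x => ∫ y in a..b, inner x y with hHfun_def
  have hH_cont : Continuous Hfun := by
    exact intervalIntegral.continuous_parametric_intervalIntegral_of_continuous'
      (f := fun (x : ℝ) (y : ℝ) => inner x y)
      (by exact hinner_cont) a b
  have hH_bnd : ∀ x : ℝ, ‖Hfun x‖ ≤ 2 / m * |b - a| := by
    intro x
    exact intervalIntegral.norm_integral_le_of_norm_le_const
      (fun y _ => by rw [Real.norm_eq_abs]; exact hinner_bnd x y)
  have hH_int : Integrable Hfun (F μ) :=
    ⟨hH_cont.aestronglyMeasurable,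
      HasFiniteIntegral.of_bounded (ae_of_all _ hH_bnd)⟩
  have hK₁fun : (fun x => K₁ t x) = fun x => (t / (2 * π)) * Hfun x := funext fun x => hK₁ t x
  constructor
  · rw [hK₁fun]
    exact hH_int.const_mul _
  -- Now the value of the integral.
  -- x-integral of cos(c(x-d)) under F μ
  have hX : ∀ c d : ℝ, (∫ x, Real.cos (c * (x - d)) ∂(F μ)) = Real.cos (c * (μ - d)) * r₀ c := by
    intro c d
    rw [hF]
    have hmc : Continuous fun x : ℝ => Real.cos (c * (x - d)) :=
      Real.continuous_cos.comp (continuous_const.mul (continuous_id.sub continuous_const))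
    rw [integral_map (measurable_add_const μ).aemeasurable hmc.aestronglyMeasurable]
    have hrw : ∀ x : ℝ, Real.cos (c * (x + μ - d)) =
        Real.cos (c * x) * Real.cos (c * (μ - d)) - Real.sin (c * x) * Real.sin (c * (μ - d)) := by
      intro x
      rw [show c * (x + μ - d) = c * x + c * (μ - d) by ring, Real.cos_add]
    simp only [hrw]
    rw [integral_sub ((hcint c).mul_const _) ((hsint c).mul_const _),
      integral_mul_const, integral_mul_const, (key c).1, (key c).2]
    ring
  -- x-integral of the full integrand
  have hXdiv : ∀ y s : ℝ, (∫ x, Real.cos (t * s * (x - y)) / r₀ (t * s) ∂(F μ))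
      = Real.cos (t * s * (μ - y)) := by
    intro y s
    simp only [div_eq_mul_inv]
    rw [integral_mul_const, hX (t * s) y]
    rw [mul_assoc, mul_inv_cancel₀ (hr₀pos (t * s)).ne', mul_one]
  -- Fubini setup
  have hfin1 : IsFiniteMeasure (volume.restrict (Set.Ioc a b)) :=
    ⟨by rw [Measure.restrict_apply_univ]; exact measure_Ioc_lt_top⟩
  have hfin2 : IsFiniteMeasure (volume.restrict (Set.Ioc (-1:ℝ) 1)) :=
    ⟨by rw [Measure.restrict_apply_univ]; exact measure_Ioc_lt_top⟩
  -- swap x and y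
  have swap1 : (∫ x, (∫ y in Set.Ioc a b, inner x y) ∂(F μ))
      = ∫ y in Set.Ioc a b, (∫ x, inner x y ∂(F μ)) := by
    apply MeasureTheory.integral_integral_swap
    refine ⟨(hinner_cont.comp continuous_id).aestronglyMeasurable, ?_⟩
    apply HasFiniteIntegral.of_bounded (C := 2 / m)
    filter_upwards with p
    rw [Real.norm_eq_abs]
    exact hinner_bnd p.1 p.2
  -- swap x and s (for fixed y)
  have swap2 : ∀ y : ℝ, (∫ x, inner x y ∂(F μ))
      = ∫ s in Set.Ioc (-1:ℝ) 1, Real.cos (t * s * (μ - y)) := by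
    intro y
    have h1 : (∫ x, inner x y ∂(F μ))
        = ∫ x, (∫ s in Set.Ioc (-1:ℝ) 1, Real.cos (t * s * (x - y)) / r₀ (t * s)) ∂(F μ) := by
      congr 1
      funext x
      rw [hinner_def]
      exact intervalIntegral.integral_of_le (by norm_num)
    rw [h1]
    have hswap : (∫ x, (∫ s in Set.Ioc (-1:ℝ) 1,
        Real.cos (t * s * (x - y)) / r₀ (t * s)) ∂(F μ))
        = ∫ s in Set.Ioc (-1:ℝ) 1,
            (∫ x, Real.cos (t * s * (x - y)) / r₀ (t * s) ∂(F μ)) := by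
      apply MeasureTheory.integral_integral_swap
      refine ⟨?_, ?_⟩
      · have : Continuous (fun p : ℝ × ℝ => Real.cos (t * p.2 * (p.1 - y)) / r₀ (t * p.2)) := by
          apply Continuous.div
          · exact Real.continuous_cos.comp (by fun_prop)
          · exact hr₀cont.comp (by fun_prop)
          · intro p; exact (hr₀pos _).ne'
        exact this.aestronglyMeasurable
      · apply HasFiniteIntegral.of_bounded (C := 1 / m)
        have hae : ∀ᵐ p : ℝ × ℝ ∂((F μ).prod (volume.restrict (Set.Ioc (-1:ℝ) 1))),
            p.2 ∈ Set.Ioc (-1:ℝ) 1 := by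
          rw [ae_iff]
          have hset : {p : ℝ × ℝ | ¬ p.2 ∈ Set.Ioc (-1:ℝ) 1}
              = (Set.univ : Set ℝ) ×ˢ (Set.Ioc (-1:ℝ) 1)ᶜ := by
            ext p; simp [Set.mem_prod]
          rw [hset, Measure.prod_prod, Measure.restrict_apply measurableSet_Ioc.compl]
          simp
        filter_upwards [hae] with p hp
        rw [Real.norm_eq_abs]
        exact hbnd p.1 y p.2 (Set.mem_Icc.2 ⟨hp.1.le, hp.2⟩)
    rw [hswap]
    apply setIntegral_congr_fun measurableSet_Ioc
    intro s _
    exact hXdiv y s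
  -- compute
  rw [hK₁fun, integral_const_mul]
  have hHrw : (∫ x, Hfun x ∂(F μ)) = ∫ x, (∫ y in Set.Ioc a b, inner x y) ∂(F μ) := by
    congr 1
    funext x
    rw [hHfun_def]
    exact intervalIntegral.integral_of_le hab.le
  rw [hHrw, swap1]
  have hstep : (∫ y in Set.Ioc a b, (∫ x, inner x y ∂(F μ)))
      = ∫ y in Set.Ioc a b, (∫ s in (-1:ℝ)..1, Real.cos (t * s * (μ - y))) := by
    apply setIntegral_congr_fun measurableSet_Ioc
    intro y _
    dsimp only
    rw [swap2 y]
    exact (intervalIntegral.integral_of_le (by norm_num)).symm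
  rw [hstep]
  -- now everything is deterministic; compute the s-integral a.e. in y
  have haey : ∀ᵐ y : ℝ, y ∈ Set.Ioc a b →
      (∫ s in (-1:ℝ)..1, Real.cos (t * s * (μ - y)))
        = 2 * (Real.sin ((μ - y) * t) / ((μ - y) * t)) := by
    have hne : ∀ᵐ y : ℝ, y ≠ μ := by
      rw [ae_iff]
      have : {y : ℝ | ¬ y ≠ μ} = {μ} := by ext y; simp
      rw [this]
      exact measure_singleton μ
    filter_upwards [hne] with y hy _
    have hc : (μ - y) * t ≠ 0 := mul_ne_zero (sub_ne_zero.2 (Ne.symm hy)) ht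
    have hrw : (fun s : ℝ => Real.cos (t * s * (μ - y)))
        = fun s : ℝ => Real.cos (((μ - y) * t) * s) := by
      funext s; ring_nf
    rw [hrw]
    rw [intervalIntegral.integral_comp_mul_left (fun u => Real.cos u) hc]
    rw [my_integral_cos]
    rw [smul_eq_mul]
    rw [mul_neg_one, mul_one, Real.sin_neg]
    field_simp
    ring
  have hIoc : (∫ y in Set.Ioc a b, (∫ s in (-1:ℝ)..1, Real.cos (t * s * (μ - y))))
      = ∫ y in a..b, (∫ s in (-1:ℝ)..1, Real.cos (t * s * (μ - y))) :=
    (intervalIntegral.integral_of_le hab.le).symm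
  rw [hIoc]
  have hcongr : (∫ y in a..b, (∫ s in (-1:ℝ)..1, Real.cos (t * s * (μ - y))))
      = ∫ y in a..b, 2 * (Real.sin ((μ - y) * t) / ((μ - y) * t)) := by
    apply intervalIntegral.integral_congr_ae
    have h := haey
    filter_upwards [h] with y hy hmem
    apply hy
    rcases Set.mem_Ioc.1 (by
      rw [Set.uIoc_of_le hab.le] at hmem
      exact hmem) with ⟨h1, h2⟩
    exact Set.mem_Ioc.2 ⟨h1, h2⟩
  rw [hcongr]
  -- substitution y ↦ μ - y, then scaling
  have hsub : (∫ y in a..b, 2 * (Real.sin ((μ - y) * t) / ((μ - y) * t)))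
      = ∫ u in (μ - b)..(μ - a), 2 * (Real.sin (u * t) / (u * t)) :=
    intervalIntegral.integral_comp_sub_left
      (fun u => 2 * (Real.sin (u * t) / (u * t))) μ
  rw [hsub]
  have hscale : (∫ u in (μ - b)..(μ - a), 2 * (Real.sin (u * t) / (u * t)))
      = t⁻¹ • ∫ v in ((μ - b) * t)..((μ - a) * t), 2 * (Real.sin v / v) :=
    intervalIntegral.integral_comp_mul_right (fun v => 2 * (Real.sin v / v)) ht
  rw [hscale]
  rw [smul_eq_mul]
  rw [show (∫ v in ((μ - b) * t)..((μ - a) * t), 2 * (Real.sin v / v))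
      = 2 * ∫ v in ((μ - b) * t)..((μ - a) * t), Real.sin v / v from
    intervalIntegral.integral_const_mul 2 _]
  have hπ : (π : ℝ) ≠ 0 := Real.pi_ne_zero
  field_simp
end

section
/- Suppose in addition that ∫ x² dP₀(x) < ∞. Let μ₁,…,μ_m ∈ ℝ, let z₁,…,z_m be independent random variables with z_i distributed according to F_{μ_i}, and set e_m(t) = (1/m) Σ_{i=1}^m ( K(t, z_i) − E[K(t, z_i)] ). Then for every t ∈ ℝ and every m ≥ 1, Var(e_m(t)) ≤ (2/m)·g(t)²·( ‖ω‖_∞² + π^{−2}(b−a)²·t² ). -/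
open MeasureTheory ProbabilityTheory Real

set_option maxHeartbeats 1000000 in
/-- Variance bound for the error of the proportion estimator for a bounded null `(a, b)` in a
Type I location-shift family with finite second moments: for independent `z_i ∼ F_{μ_i}` and
`e_m(t) = (1/m) Σ_i (K(t, z_i) − E[K(t, z_i)])`, one has
`Var(e_m(t)) ≤ (2/m) g(t)² (‖ω‖_∞² + π⁻²(b−a)² t²)`. -/
theorem variance_bound_bounded_null
    (P₀ : Measure ℝ) [IsProbabilityMeasure P₀]
    (r₀ : ℝ → ℝ) (hr₀pos : ∀ t : ℝ, 0 < r₀ t)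
    (hchar : ∀ t : ℝ,
      (∫ x, Complex.exp (Complex.I * (t : ℂ) * (x : ℂ)) ∂P₀) = ((r₀ t : ℝ) : ℂ))
    (hP₀2 : Integrable (fun x : ℝ => x ^ 2) P₀)
    (F : ℝ → Measure ℝ) (hF : ∀ μ : ℝ, F μ = Measure.map (fun x => x + μ) P₀)
    (ω : ℝ → ℝ) (hω_meas : Measurable ω) (hω_nonneg : ∀ s, 0 ≤ ω s)
    (hω_even : ∀ s, ω (-s) = ω s)
    (hω_bdd : ∃ C : ℝ, ∀ s, ω s ≤ C)
    (hω_supp : ∀ s : ℝ, s ∉ Set.Icc (-1:ℝ) 1 → ω s = 0)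
    (hω_int : (∫ s in (-1:ℝ)..1, ω s) = 1)
    (a b : ℝ) (hab : a < b)
    (K₁₀ : ℝ → ℝ → ℝ → ℝ)
    (hK₁₀ : ∀ t x μ', K₁₀ t x μ' =
      ∫ s in (-1:ℝ)..1, ω s * Real.cos (t * s * (x - μ')) / r₀ (t * s))
    (K₁ : ℝ → ℝ → ℝ)
    (hK₁ : ∀ t x, K₁ t x =
      (t / (2 * π)) * ∫ y in a..b, ∫ s in (-1:ℝ)..1, Real.cos (t * s * (x - y)) / r₀ (t * s))
    (K : ℝ → ℝ → ℝ)
    (hK : ∀ t x, K t x = K₁ t x - (1 / 2) * (K₁₀ t x a + K₁₀ t x b))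
    (g : ℝ → ℝ) (hg : ∀ t, g t = ∫ s in (-1:ℝ)..1, 1 / r₀ (t * s))
    {Ω : Type*} [MeasurableSpace Ω] (P : Measure Ω) [IsProbabilityMeasure P]
    (m : ℕ) (hm : 1 ≤ m)
    (μs : Fin m → ℝ) (z : Fin m → Ω → ℝ)
    (hzmeas : ∀ i, Measurable (z i))
    (hindep : iIndepFun z P)
    (hlaw : ∀ i, Measure.map (z i) P = F (μs i))
    (em : ℝ → Ω → ℝ)
    (hem : ∀ t ω', em t ω' =
      (1 / (m : ℝ)) * ∑ i, (K t (z i ω') - ∫ x, K t x ∂(F (μs i)))) :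
    ∀ t : ℝ,
      variance (em t) P ≤
        (2 / (m : ℝ)) * (g t) ^ 2 * ((⨆ s : ℝ, |ω s|) ^ 2 + (π ^ 2)⁻¹ * (b - a) ^ 2 * t ^ 2) := by
  have hπ : (0:ℝ) < π := Real.pi_pos
  -- continuity of r₀
  have hr₀cont : Continuous r₀ := by
    have hcont : Continuous fun u : ℝ =>
        (∫ x : ℝ, Complex.exp (Complex.I * (u : ℂ) * (x : ℂ)) ∂P₀) := by
      apply continuous_of_dominated (bound := fun _ => (1:ℝ))
      · intro u
        exact (Complex.continuous_exp.comp
          (continuous_const.mul Complex.continuous_ofReal)).aestronglyMeasurable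
      · intro u
        filter_upwards with x
        simp [Complex.norm_exp]
      · exact integrable_const 1
      · filter_upwards with x
        exact Complex.continuous_exp.comp
          ((continuous_const.mul Complex.continuous_ofReal).mul continuous_const)
    have hre : r₀ = fun u : ℝ => (∫ x : ℝ, Complex.exp (Complex.I * (u : ℂ) * (x : ℂ)) ∂P₀).re := by
      funext u; rw [hchar u]; simp
    rw [hre]
    exact Complex.continuous_re.comp hcont
  intro t
  -- basic integrability
  have hcont_inv : Continuous fun s : ℝ => 1 / r₀ (t * s) :=
    continuous_const.div (hr₀cont.comp (continuous_const.mul continuous_id))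
      (fun s => (hr₀pos _).ne')
  have hint_inv : IntervalIntegrable (fun s : ℝ => 1 / r₀ (t * s)) volume (-1) 1 :=
    hcont_inv.intervalIntegrable _ _
  have hGnonneg : 0 ≤ g t := by
    rw [hg]
    apply intervalIntegral.integral_nonneg (by norm_num)
    intro s _
    exact div_nonneg zero_le_one (hr₀pos _).le
  -- sup norm of ω
  obtain ⟨C, hC⟩ := hω_bdd
  set S := ⨆ s : ℝ, |ω s| with hS
  have hbdd : BddAbove (Set.range fun s => |ω s|) := by
    refine ⟨C, ?_⟩
    rintro _ ⟨s, rfl⟩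
    show |ω s| ≤ C
    rw [abs_of_nonneg (hω_nonneg s)]; exact hC s
  have hωS : ∀ s, ω s ≤ S := fun s => by
    rw [← abs_of_nonneg (hω_nonneg s)]; exact le_ciSup hbdd s
  have hSnonneg : 0 ≤ S := le_trans (abs_nonneg (ω 0)) (le_ciSup hbdd 0)
  -- pointwise bounds on the integrands
  have hptH : ∀ s u : ℝ, |Real.cos (t * s * u) / r₀ (t * s)| ≤ 1 / r₀ (t * s) := by
    intro s u
    rw [abs_div, abs_of_pos (hr₀pos (t * s))]
    have h1 : (0:ℝ) < r₀ (t * s) := hr₀pos _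
    gcongr
    exact Real.abs_cos_le_one _
  have hptω : ∀ s u : ℝ, |ω s * Real.cos (t * s * u) / r₀ (t * s)| ≤ S * (1 / r₀ (t * s)) := by
    intro s u
    rw [abs_div, abs_of_pos (hr₀pos (t * s)), mul_one_div, abs_mul,
      abs_of_nonneg (hω_nonneg s)]
    have h1 : (0:ℝ) < r₀ (t * s) := hr₀pos _
    have h2 : ω s * |Real.cos (t * s * u)| ≤ S :=
      le_trans (mul_le_of_le_one_right (hω_nonneg s) (Real.abs_cos_le_one _)) (hωS s)
    gcongr
  -- bound on the inner cosine integral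
  have hHbdd : ∀ u : ℝ, |∫ s in (-1:ℝ)..1, Real.cos (t * s * u) / r₀ (t * s)| ≤ g t := by
    intro u
    have h := intervalIntegral.norm_integral_le_abs_of_norm_le (μ := volume)
      (f := fun s => Real.cos (t * s * u) / r₀ (t * s)) (g := fun s => 1 / r₀ (t * s))
      (a := -1) (b := 1)
      (ae_of_all _ fun s => by rw [Real.norm_eq_abs]; exact hptH s u) hint_inv
    rw [Real.norm_eq_abs, ← hg t, abs_of_nonneg hGnonneg] at h
    exact h
  -- bound on K₁₀
  have hK₁₀bdd : ∀ x μ', |K₁₀ t x μ'| ≤ S * g t := by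
    intro x μ'
    rw [hK₁₀]
    have h := intervalIntegral.norm_integral_le_abs_of_norm_le (μ := volume)
      (f := fun s => ω s * Real.cos (t * s * (x - μ')) / r₀ (t * s))
      (g := fun s => S * (1 / r₀ (t * s))) (a := -1) (b := 1)
      (ae_of_all _ fun s => by rw [Real.norm_eq_abs]; exact hptω s (x - μ'))
      (hint_inv.const_mul S)
    rw [Real.norm_eq_abs, intervalIntegral.integral_const_mul, ← hg t,
      abs_of_nonneg (mul_nonneg hSnonneg hGnonneg)] at h
    exact h
  -- bound on K₁
  have hK₁bdd : ∀ x, |K₁ t x| ≤ |t| / (2 * π) * ((b - a) * g t) := by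
    intro x
    rw [hK₁, abs_mul]
    have h2 := intervalIntegral.norm_integral_le_of_norm_le_const
      (f := fun y => ∫ s in (-1:ℝ)..1, Real.cos (t * s * (x - y)) / r₀ (t * s))
      (a := a) (b := b) (C := g t)
      (fun y _ => by rw [Real.norm_eq_abs]; exact hHbdd (x - y))
    rw [Real.norm_eq_abs, abs_of_nonneg (le_of_lt (sub_pos.2 hab))] at h2
    have h3 : |t / (2 * π)| = |t| / (2 * π) := by
      rw [abs_div, abs_of_pos (by positivity : (0:ℝ) < 2 * π)]
    rw [h3]
    calc |t| / (2 * π) * |∫ y in a..b, ∫ s in (-1:ℝ)..1, Real.cos (t * s * (x - y)) / r₀ (t * s)|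
        ≤ |t| / (2 * π) * (g t * (b - a)) := by
          apply mul_le_mul_of_nonneg_left h2 (by positivity)
      _ = |t| / (2 * π) * ((b - a) * g t) := by ring
  -- bound on K
  have hKbdd : ∀ x, |K t x| ≤ S * g t + |t| / (2 * π) * ((b - a) * g t) := by
    intro x
    rw [hK]
    have h1 := hK₁₀bdd x a
    have h2 := hK₁₀bdd x b
    have h3 := hK₁bdd x
    have h4 : |K₁ t x - 1 / 2 * (K₁₀ t x a + K₁₀ t x b)| ≤
        |K₁ t x| + 1 / 2 * (|K₁₀ t x a| + |K₁₀ t x b|) := by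
      calc |K₁ t x - 1 / 2 * (K₁₀ t x a + K₁₀ t x b)|
          ≤ |K₁ t x| + |1 / 2 * (K₁₀ t x a + K₁₀ t x b)| := abs_sub _ _
        _ ≤ |K₁ t x| + 1 / 2 * (|K₁₀ t x a| + |K₁₀ t x b|) := by
            rw [abs_mul]
            have := abs_add_le (K₁₀ t x a) (K₁₀ t x b)
            rw [abs_of_nonneg (by norm_num : (0:ℝ) ≤ 1/2)]
            nlinarith [abs_nonneg (K₁₀ t x a + K₁₀ t x b)]
    linarith
  -- continuity of the inner cosine integral as a function of the shift
  have hHcont : Continuous fun u : ℝ => ∫ s in (-1:ℝ)..1, Real.cos (t * s * u) / r₀ (t * s) := by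
    apply intervalIntegral.continuous_of_dominated_interval
      (bound := fun s => 1 / r₀ (t * s))
    · intro u
      apply Continuous.aestronglyMeasurable
      exact (Real.continuous_cos.comp (by fun_prop)).div
        (hr₀cont.comp (by fun_prop)) (fun s => (hr₀pos _).ne')
    · intro u
      filter_upwards with s _
      rw [Real.norm_eq_abs]; exact hptH s u
    · exact hint_inv
    · filter_upwards with s _
      exact (Real.continuous_cos.comp (by fun_prop)).div continuous_const (fun _ => (hr₀pos _).ne')
  -- continuity of K t
  have hKcont : Continuous fun x => K t x := by
    have hK₁cont : Continuous fun x => K₁ t x := by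
      have hc : Continuous fun x : ℝ =>
          ∫ y in a..b, ∫ s in (-1:ℝ)..1, Real.cos (t * s * (x - y)) / r₀ (t * s) := by
        apply intervalIntegral.continuous_of_dominated_interval (bound := fun _ => g t)
        · intro x
          exact (hHcont.comp (continuous_const.sub continuous_id)).aestronglyMeasurable
        · intro x
          filter_upwards with y _
          rw [Real.norm_eq_abs]; exact hHbdd (x - y)
        · exact intervalIntegrable_const
        · filter_upwards with y _
          exact hHcont.comp (continuous_id.sub continuous_const)
      have heq : (fun x => K₁ t x) = fun x => (t / (2 * π)) *
          ∫ y in a..b, ∫ s in (-1:ℝ)..1, Real.cos (t * s * (x - y)) / r₀ (t * s) :=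
        funext fun x => hK₁ t x
      rw [heq]
      exact continuous_const.mul hc
    have hK₁₀cont : ∀ μ', Continuous fun x => K₁₀ t x μ' := by
      intro μ'
      have hc : Continuous fun x : ℝ =>
          ∫ s in (-1:ℝ)..1, ω s * Real.cos (t * s * (x - μ')) / r₀ (t * s) := by
        apply intervalIntegral.continuous_of_dominated_interval
          (bound := fun s => S * (1 / r₀ (t * s)))
        · intro x
          apply Measurable.aestronglyMeasurable
          exact (hω_meas.mul ((Real.continuous_cos.comp (by fun_prop)).measurable)).div
            ((hr₀cont.comp (by fun_prop)).measurable)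
        · intro x
          filter_upwards with s _
          rw [Real.norm_eq_abs]; exact hptω s (x - μ')
        · exact hint_inv.const_mul S
        · filter_upwards with s _
          exact ((continuous_const.mul (Real.continuous_cos.comp (by fun_prop))).div
            continuous_const (fun _ => (hr₀pos _).ne'))
      have heq : (fun x => K₁₀ t x μ') = fun x =>
          ∫ s in (-1:ℝ)..1, ω s * Real.cos (t * s * (x - μ')) / r₀ (t * s) :=
        funext fun x => hK₁₀ t x μ'
      rw [heq]; exact hc
    have heq : (fun x => K t x) = fun x =>
        K₁ t x - (1 / 2) * (K₁₀ t x a + K₁₀ t x b) := funext fun x => hK t x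
    rw [heq]
    exact hK₁cont.sub (continuous_const.mul ((hK₁₀cont a).add (hK₁₀cont b)))
  -- set up the random variables
  set B := S * g t + |t| / (2 * π) * ((b - a) * g t) with hBdef
  set c : Fin m → ℝ := fun i => ∫ x, K t x ∂(F (μs i)) with hc
  set X : Fin m → Ω → ℝ := fun i ω' => K t (z i ω') - c i with hXdef
  have hXmeas : ∀ i, Measurable (X i) := fun i =>
    (hKcont.measurable.comp (hzmeas i)).sub measurable_const
  have hXbdd : ∀ i, ∀ ω', X i ω' ∈ Set.Icc (-B - c i) (B - c i) := by
    intro i ω'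
    have h := abs_le.1 (hKbdd (z i ω'))
    constructor
    · simp only [hXdef]; linarith [h.1]
    · simp only [hXdef]; linarith [h.2]
  have hXmem : ∀ i, MemLp (X i) 2 P := fun i =>
    memLp_of_bounded (ae_of_all P (hXbdd i)) (hXmeas i).aestronglyMeasurable 2
  have hXvar : ∀ i, variance (X i) P ≤ B ^ 2 := by
    intro i
    have h := variance_le_sq_of_bounded (ae_of_all P (hXbdd i)) (hXmeas i).aemeasurable
    calc variance (X i) P ≤ ((B - c i - (-B - c i)) / 2) ^ 2 := h
      _ = B ^ 2 := by ring
  have hpair : Set.Pairwise ↑(Finset.univ : Finset (Fin m))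
      fun i j => IndepFun (X i) (X j) P := by
    intro i _ j _ hij
    have h0 : IndepFun (z i) (z j) P := hindep.indepFun hij
    exact h0.comp (hKcont.measurable.sub measurable_const)
      (hKcont.measurable.sub measurable_const)
  have hsum : variance (∑ i, X i) P = ∑ i, variance (X i) P :=
    IndepFun.variance_sum (fun i _ => hXmem i) hpair
  have hem' : em t = fun ω' => (1 / (m : ℝ)) * (∑ i, X i) ω' := by
    funext ω'
    rw [hem]
    simp only [hXdef, hc, Finset.sum_apply]
  have hvar : variance (em t) P = (1 / (m : ℝ)) ^ 2 * ∑ i, variance (X i) P := by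
    rw [hem', variance_const_mul, hsum]
  have hm' : (0:ℝ) < m := by exact_mod_cast hm
  -- arithmetic bound on B²
  have hba : (0:ℝ) ≤ b - a := le_of_lt (sub_pos.2 hab)
  have key : B ^ 2 ≤ 2 * g t ^ 2 * (S ^ 2 + (π ^ 2)⁻¹ * (b - a) ^ 2 * t ^ 2) := by
    have hp : (0:ℝ) ≤ S * g t := mul_nonneg hSnonneg hGnonneg
    have hq : (0:ℝ) ≤ |t| / (2 * π) * ((b - a) * g t) := by positivity
    have h1 : B ^ 2 ≤ 2 * (S * g t) ^ 2 + 2 * (|t| / (2 * π) * ((b - a) * g t)) ^ 2 := by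
      rw [hBdef]
      nlinarith [sq_nonneg (S * g t - |t| / (2 * π) * ((b - a) * g t))]
    have h2 : (|t| / (2 * π) * ((b - a) * g t)) ^ 2 =
        t ^ 2 * (b - a) ^ 2 * g t ^ 2 / (4 * π ^ 2) := by
      rw [div_mul_eq_mul_div, div_pow, mul_pow, mul_pow, sq_abs]
      ring
    have h3 : t ^ 2 * (b - a) ^ 2 * g t ^ 2 / (4 * π ^ 2) ≤
        t ^ 2 * (b - a) ^ 2 * g t ^ 2 / π ^ 2 := by
      apply div_le_div_of_nonneg_left (by positivity) (by positivity)
      nlinarith [sq_nonneg π]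
    have h4 : t ^ 2 * (b - a) ^ 2 * g t ^ 2 / π ^ 2 =
        g t ^ 2 * ((π ^ 2)⁻¹ * (b - a) ^ 2 * t ^ 2) := by
      field_simp
    nlinarith [sq_nonneg (g t), sq_nonneg S]
  -- putting it all together
  rw [hvar]
  have hsum_le : ∑ i, variance (X i) P ≤ (m : ℝ) * B ^ 2 := by
    calc ∑ i, variance (X i) P ≤ ∑ _i : Fin m, B ^ 2 :=
          Finset.sum_le_sum fun i _ => hXvar i
      _ = (m : ℝ) * B ^ 2 := by
          rw [Finset.sum_const, Finset.card_univ, Fintype.card_fin, nsmul_eq_mul]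
  calc (1 / (m : ℝ)) ^ 2 * ∑ i, variance (X i) P
      ≤ (1 / (m : ℝ)) ^ 2 * ((m : ℝ) * B ^ 2) := by
        apply mul_le_mul_of_nonneg_left hsum_le (by positivity)
    _ = B ^ 2 / (m : ℝ) := by field_simp
    _ ≤ (2 * g t ^ 2 * (S ^ 2 + (π ^ 2)⁻¹ * (b - a) ^ 2 * t ^ 2)) / (m : ℝ) := by
        exact div_le_div_of_nonneg_right key hm'.le
    _ = 2 / (m : ℝ) * g t ^ 2 * (S ^ 2 + (π ^ 2)⁻¹ * (b - a) ^ 2 * t ^ 2) := by ring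
end

section
/- Assume ∫ |x| dP₀(x) < ∞, assume the cumulative distribution function of P₀ is differentiable on ℝ, assume r₀ is differentiable on ℝ, and assume that for each t > 0 the condition ∫₀^t (1/y) ( ∫_{−1}^{1} | (d/ds)(1/r₀(y·s)) | ds ) dy < ∞ holds. Define K₁(t, x) = (1/(2π)) ∫₀^1 ( ∫_{−1}^{1} [ (sin(y·t·s·x)/y)·(∂/∂s)(1/r₀(t·y·s)) + t·x·cos(t·y·s·x)/r₀(t·y·s) ] ds ) dy. Then for every μ ∈ ℝ and every t > 0, the function x ↦ K₁(t, x) is integrable with respect to F_μ and ∫ K₁(t, x) dF_μ(x) = (1/π) ∫₀^t sin(μ·y)/y dy (with sin(μ·y)/y = μ at y = 0). -/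
open MeasureTheory Real

set_option maxHeartbeats 1000000 in
/-- For a Type I location-shift family with finite first moment, differentiable CDF and
differentiable characteristic function modulus `r₀` satisfying the integrability condition
`∫₀ᵗ (1/y) ∫_{−1}^{1} |(d/ds)(1/r₀(ys))| ds dy < ∞`, the one-sided matching function
`K₁(t, x) = (1/(2π)) ∫₀¹ ∫_{−1}^{1} [ (sin(ytsx)/y) ∂ₛ(1/r₀(tys)) + t x cos(tysx)/r₀(tys) ] ds dy`
is `F_μ`-integrable with `∫ K₁(t, x) dF_μ(x) = (1/π) ∫₀ᵗ sin(μy)/y dy` for every `t > 0`. -/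
theorem integral_matching_one_sided_null
    (P₀ : Measure ℝ) [IsProbabilityMeasure P₀]
    (r₀ : ℝ → ℝ) (hr₀pos : ∀ t : ℝ, 0 < r₀ t)
    (hchar : ∀ t : ℝ,
      (∫ x, Complex.exp (Complex.I * (t : ℂ) * (x : ℂ)) ∂P₀) = ((r₀ t : ℝ) : ℂ))
    (F : ℝ → Measure ℝ) (hF : ∀ μ : ℝ, F μ = Measure.map (fun x => x + μ) P₀)
    (hP₀1 : Integrable (fun x : ℝ => x) P₀)
    (hcdf : Differentiable ℝ (fun x : ℝ => (P₀ (Set.Iic x)).toReal))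
    (hr₀diff : Differentiable ℝ r₀)
    (hcond : ∀ t : ℝ, 0 < t →
      (∫⁻ y in Set.Ioc (0:ℝ) t,
        ∫⁻ s in Set.Icc (-1:ℝ) 1,
          ENNReal.ofReal ((1 / y) * |deriv (fun s' : ℝ => 1 / r₀ (y * s')) s|)) < ⊤)
    (K₁ : ℝ → ℝ → ℝ)
    (hK₁ : ∀ t x, K₁ t x =
      (1 / (2 * π)) * ∫ y in (0:ℝ)..1, ∫ s in (-1:ℝ)..1,
        (Real.sin (y * t * s * x) / y) * deriv (fun s' : ℝ => 1 / r₀ (t * y * s')) s +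
          t * x * Real.cos (t * y * s * x) / r₀ (t * y * s)) :
    ∀ (μ : ℝ) (t : ℝ), 0 < t →
      Integrable (fun x => K₁ t x) (F μ) ∧
      (∫ x, K₁ t x ∂(F μ)) = (1 / π) * ∫ y in (0:ℝ)..t, Real.sin (μ * y) / y := by
  have hr₀cont : Continuous r₀ := hr₀diff.continuous
  have hinvdiff : Differentiable ℝ (fun u : ℝ => 1 / r₀ u) := fun u =>
    (differentiableAt_const 1).div (hr₀diff u) (hr₀pos u).ne'
  set g : ℝ → ℝ := deriv (fun u : ℝ => 1 / r₀ u) with hg_def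
  have hg : Measurable g := measurable_deriv _
  have hdinv : ∀ u, HasDerivAt (fun u : ℝ => 1 / r₀ u) (g u) u := fun u =>
    (hinvdiff u).hasDerivAt
  have hcomp : ∀ a s : ℝ, HasDerivAt (fun s' : ℝ => 1 / r₀ (a * s')) (a * g (a * s)) s := by
    intro a s
    have h1 : HasDerivAt (fun s' : ℝ => a * s') a s := by
      simpa using (hasDerivAt_id s).const_mul a
    exact ((hdinv (a * s)).comp s h1).congr_deriv (by ring)
  have hderiv_eq : ∀ a s : ℝ, deriv (fun s' : ℝ => 1 / r₀ (a * s')) s = a * g (a * s) :=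
    fun a s => (hcomp a s).deriv
  -- integrals of cos and sin against P₀
  have hintexp : ∀ a : ℝ, Integrable (fun x : ℝ => Complex.exp (Complex.I * a * x)) P₀ := by
    intro a
    refine Integrable.mono' (integrable_const 1)
      ((Complex.continuous_exp.comp (by continuity)).aestronglyMeasurable) ?_
    exact Filter.Eventually.of_forall fun x => by simp [Complex.norm_exp]
  have hcos : ∀ a : ℝ, ∫ x, Real.cos (a * x) ∂P₀ = r₀ a := by
    intro a
    have h := integral_re (hintexp a)
    have hre : ∀ x : ℝ, RCLike.re (Complex.exp (Complex.I * a * x)) = Real.cos (a * x) := by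
      intro x; simp [RCLike.re_to_complex, Complex.exp_re]
    simp only [hre] at h
    rw [h, hchar a]; simp [RCLike.re_to_complex]
  have hsin : ∀ a : ℝ, ∫ x, Real.sin (a * x) ∂P₀ = 0 := by
    intro a
    have h := integral_im (hintexp a)
    have him : ∀ x : ℝ, RCLike.im (Complex.exp (Complex.I * a * x)) = Real.sin (a * x) := by
      intro x; simp [RCLike.im_to_complex, Complex.exp_im]
    simp only [him] at h
    rw [h, hchar a]; simp [RCLike.im_to_complex]
  have hintsin : ∀ a : ℝ, Integrable (fun x : ℝ => Real.sin (a * x)) P₀ := by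
    intro a
    refine Integrable.mono' (integrable_const 1)
      ((Real.continuous_sin.comp (continuous_const.mul continuous_id)).aestronglyMeasurable) ?_
    exact Filter.Eventually.of_forall fun x => by
      rw [Real.norm_eq_abs]
      exact abs_le.mpr ⟨Real.neg_one_le_sin _, Real.sin_le_one _⟩
  have hintcos : ∀ a : ℝ, Integrable (fun x : ℝ => Real.cos (a * x)) P₀ := by
    intro a
    refine Integrable.mono' (integrable_const 1)
      ((Real.continuous_cos.comp (continuous_const.mul continuous_id)).aestronglyMeasurable) ?_
    exact Filter.Eventually.of_forall fun x => by
      rw [Real.norm_eq_abs]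
      exact abs_le.mpr ⟨Real.neg_one_le_cos _, Real.cos_le_one _⟩
  -- evenness of r₀
  have heven : ∀ u : ℝ, r₀ (-u) = r₀ u := by
    intro u
    have h1 : ((r₀ (-u) : ℝ) : ℂ) = ((r₀ u : ℝ) : ℂ) := by
      rw [← hchar (-u)]
      calc ∫ x, Complex.exp (Complex.I * ((-u : ℝ) : ℂ) * (x : ℂ)) ∂P₀
          = ∫ x, (starRingEnd ℂ) (Complex.exp (Complex.I * (u : ℂ) * (x : ℂ))) ∂P₀ := by
            refine integral_congr_ae (Filter.Eventually.of_forall fun x => ?_)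
            show Complex.exp (Complex.I * ((-u : ℝ) : ℂ) * (x : ℂ)) =
              (starRingEnd ℂ) (Complex.exp (Complex.I * (u : ℂ) * (x : ℂ)))
            rw [← Complex.exp_conj]
            congr 1
            simp only [map_mul, Complex.conj_I, Complex.conj_ofReal]
            push_cast
            ring
        _ = (starRingEnd ℂ) (∫ x, Complex.exp (Complex.I * (u : ℂ) * (x : ℂ)) ∂P₀) :=
            integral_conj
        _ = ((r₀ u : ℝ) : ℂ) := by rw [hchar u, Complex.conj_ofReal]
    exact_mod_cast h1
  intro μ t ht
  -- lower bound for r₀ on [-t, t]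
  obtain ⟨u₀, hu₀mem, hu₀min⟩ :=
    isCompact_Icc.exists_isMinOn (Set.nonempty_Icc.2 (by linarith)) hr₀cont.continuousOn
    (f := r₀) (s := Set.Icc (-t) t)
  set c : ℝ := r₀ u₀ with hc_def
  have hc0 : 0 < c := hr₀pos u₀
  have hcle : ∀ u ∈ Set.Icc (-t) t, c ≤ r₀ u := fun u hu => hu₀min hu
  -- a.e. finiteness of the inner lintegral
  set Fl : ℝ → ENNReal := fun y' => ∫⁻ s in Set.Icc (-1:ℝ) 1,
      ENNReal.ofReal ((1 / y') * |deriv (fun s' : ℝ => 1 / r₀ (y' * s')) s|) with hFl_def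
  have hFlmeas : Measurable Fl := by
    simp only [hFl_def, hderiv_eq]
    have hm : Measurable (fun p : ℝ × ℝ => ENNReal.ofReal ((1 / p.1) * |p.1 * g (p.1 * p.2)|)) :=
      Measurable.ennreal_ofReal ((measurable_const.div measurable_fst).mul
        ((measurable_fst.mul (hg.comp (measurable_fst.mul measurable_snd))).abs))
    exact Measurable.lintegral_prod_right'
      (f := fun p : ℝ × ℝ => ENNReal.ofReal ((1 / p.1) * |p.1 * g (p.1 * p.2)|)) hm
  have haefin : ∀ᵐ y' ∂(volume : Measure ℝ), y' ∈ Set.Ioc (0:ℝ) t → Fl y' < ⊤ :=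
    (ae_restrict_iff' measurableSet_Ioc).mp (ae_lt_top hFlmeas (hcond t ht).ne)
  have hqmp : Measure.QuasiMeasurePreserving (fun y : ℝ => t * y) volume volume := by
    refine ⟨measurable_const_mul t, ?_⟩
    rw [Real.map_volume_mul_left ht.ne']
    exact Measure.smul_absolutelyContinuous
  have haegood : ∀ᵐ y ∂(volume : Measure ℝ), y ∈ Set.Ioc (0:ℝ) 1 → Fl (t * y) < ⊤ := by
    filter_upwards [hqmp.ae haefin] with y hy hy1
    exact hy ⟨mul_pos ht hy1.1, by nlinarith [hy1.2]⟩
  -- evaluation of the inner s-integral for good y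
  have hinner : ∀ x : ℝ, ∀ᵐ y ∂(volume : Measure ℝ), y ∈ Set.Ioc (0:ℝ) 1 →
      (∫ s in (-1:ℝ)..1,
        (Real.sin (y * t * s * x) / y) * deriv (fun s' : ℝ => 1 / r₀ (t * y * s')) s +
          t * x * Real.cos (t * y * s * x) / r₀ (t * y * s))
      = 2 * Real.sin (y * t * x) / (y * r₀ (t * y)) := by
    intro x
    filter_upwards [haegood] with y hygood hy1
    have hy0 : 0 < y := hy1.1
    have hfin : Fl (t * y) < ⊤ := hygood hy1
    set Φ : ℝ → ℝ := fun s => Real.sin (y * t * s * x) / y * (1 / r₀ (t * y * s)) with hΦ_def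
    have hΦd : ∀ s : ℝ, HasDerivAt Φ
        ((Real.sin (y * t * s * x) / y) * deriv (fun s' : ℝ => 1 / r₀ (t * y * s')) s +
          t * x * Real.cos (t * y * s * x) / r₀ (t * y * s)) s := by
      intro s
      have hlin : HasDerivAt (fun s : ℝ => y * t * s * x) (y * t * x) s := by
        have hfe : (fun s : ℝ => y * t * s * x) = fun s : ℝ => (y * t * x) * s := by
          funext s; ring
        rw [hfe]
        simpa using (hasDerivAt_id s).const_mul (y * t * x)
      have h1 : HasDerivAt (fun s : ℝ => Real.sin (y * t * s * x) / y)
          (t * x * Real.cos (y * t * s * x)) s := by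
        have h2 := ((Real.hasDerivAt_sin (y * t * s * x)).comp s hlin).div_const y
        refine h2.congr_deriv ?_
        field_simp
      have h2 : HasDerivAt (fun s : ℝ => 1 / r₀ (t * y * s))
          (deriv (fun s' : ℝ => 1 / r₀ (t * y * s')) s) s := by
        rw [hderiv_eq]
        exact hcomp (t * y) s
      have h3 := h1.mul h2
      refine h3.congr_deriv ?_
      rw [show t * y * s * x = y * t * s * x by ring]
      ring
    have hInt : IntervalIntegrable (fun s =>
        (Real.sin (y * t * s * x) / y) * deriv (fun s' : ℝ => 1 / r₀ (t * y * s')) s +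
          t * x * Real.cos (t * y * s * x) / r₀ (t * y * s)) volume (-1) 1 := by
      apply IntervalIntegrable.add
      · rw [intervalIntegrable_iff_integrableOn_Icc_of_le (by norm_num)]
        have hmeas : Measurable (fun s : ℝ =>
            (Real.sin (y * t * s * x) / y) * deriv (fun s' : ℝ => 1 / r₀ (t * y * s')) s) := by
          simp only [hderiv_eq]
          exact ((Real.measurable_sin.comp
              ((measurable_id.const_mul (y * t)).mul_const x)).div_const y).mul
            ((hg.comp (measurable_id.const_mul (t * y))).const_mul (t * y))
        refine ⟨hmeas.aestronglyMeasurable, ?_⟩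
        rw [hasFiniteIntegral_iff_norm]
        have hcalc : (∫⁻ s in Set.Icc (-1:ℝ) 1, ENNReal.ofReal
            ‖(Real.sin (y * t * s * x) / y) * deriv (fun s' : ℝ => 1 / r₀ (t * y * s')) s‖)
            ≤ ∫⁻ s in Set.Icc (-1:ℝ) 1, ENNReal.ofReal t *
              ENNReal.ofReal ((1 / (t * y)) * |deriv (fun s' : ℝ => 1 / r₀ (t * y * s')) s|) := by
          refine lintegral_mono fun s => ?_
          rw [← ENNReal.ofReal_mul ht.le]
          refine ENNReal.ofReal_le_ofReal ?_
          rw [Real.norm_eq_abs, abs_mul, abs_div, abs_of_pos hy0]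
          have h1 : |Real.sin (y * t * s * x)| ≤ 1 :=
            abs_le.mpr ⟨Real.neg_one_le_sin _, Real.sin_le_one _⟩
          calc |Real.sin (y * t * s * x)| / y * |deriv (fun s' : ℝ => 1 / r₀ (t * y * s')) s|
              ≤ 1 / y * |deriv (fun s' : ℝ => 1 / r₀ (t * y * s')) s| := by gcongr
            _ = t * (1 / (t * y) * |deriv (fun s' : ℝ => 1 / r₀ (t * y * s')) s|) := by
                field_simp
        refine lt_of_le_of_lt hcalc ?_
        rw [lintegral_const_mul' _ _ ENNReal.ofReal_ne_top]
        exact ENNReal.mul_lt_top ENNReal.ofReal_lt_top hfin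
      · apply Continuous.intervalIntegrable
        exact (continuous_const.mul (Real.continuous_cos.comp
            ((continuous_const.mul continuous_id).mul continuous_const))).div
          (hr₀cont.comp (continuous_const.mul continuous_id)) (fun s => (hr₀pos _).ne')
    rw [intervalIntegral.integral_eq_sub_of_hasDerivAt (fun s _ => hΦd s) hInt]
    show Real.sin (y * t * 1 * x) / y * (1 / r₀ (t * y * 1)) -
      Real.sin (y * t * (-1) * x) / y * (1 / r₀ (t * y * (-1))) = _
    rw [show y * t * (-1:ℝ) * x = -(y * t * 1 * x) by ring, Real.sin_neg,
      show t * y * (-1:ℝ) = -(t * y * 1) by ring, heven (t * y * 1)]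
    rw [show y * t * (1:ℝ) * x = y * t * x by ring, show t * y * (1:ℝ) = t * y by ring]
    field_simp
    ring
  -- simplified kernel
  set W : ℝ → ℝ → ℝ := fun x y => 2 * Real.sin (y * t * x) / (y * r₀ (t * y)) with hW_def
  have hK₁' : ∀ x : ℝ, K₁ t x = (1 / (2 * π)) * ∫ y in Set.Ioc (0:ℝ) 1, W x y := by
    intro x
    rw [hK₁ t x]
    congr 1
    rw [intervalIntegral.integral_of_le (by norm_num : (0:ℝ) ≤ 1)]
    refine setIntegral_congr_ae measurableSet_Ioc ?_
    filter_upwards [hinner x] with y hy hymem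
    exact hy hymem
  have hWpair : Measurable
      (fun p : ℝ × ℝ => 2 * Real.sin (p.2 * t * p.1) / (p.2 * r₀ (t * p.2))) := by
    apply Measurable.div
    · exact (Real.measurable_sin.comp ((measurable_snd.mul_const t).mul measurable_fst)).const_mul 2
    · exact measurable_snd.mul (hr₀cont.measurable.comp (measurable_snd.const_mul t))
  have hJsm : StronglyMeasurable (fun x : ℝ => ∫ y in Set.Ioc (0:ℝ) 1, W x y) := by
    exact (hWpair.stronglyMeasurable).integral_prod_right'
      (ν := (volume : Measure ℝ).restrict (Set.Ioc (0:ℝ) 1))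
  have hWb : ∀ x : ℝ, ∀ y ∈ Set.Ioc (0:ℝ) 1, |W x y| ≤ 2 * t * |x| / c := by
    intro x y hy
    have hy0 : 0 < y := hy.1
    have hrc : c ≤ r₀ (t * y) := hcle _ ⟨by nlinarith [hy.2], by nlinarith [hy.2]⟩
    have hnum : |2 * Real.sin (y * t * x)| ≤ y * (2 * t * |x|) := by
      rw [abs_mul, abs_two]
      calc 2 * |Real.sin (y * t * x)| ≤ 2 * |y * t * x| :=
            mul_le_mul_of_nonneg_left Real.abs_sin_le_abs (by norm_num)
        _ = y * (2 * t * |x|) := by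
            rw [abs_mul, abs_mul, abs_of_pos hy0, abs_of_pos ht]; ring
    have hden : y * c ≤ y * r₀ (t * y) := mul_le_mul_of_nonneg_left hrc hy0.le
    simp only [hW_def]
    rw [abs_div, abs_of_pos (mul_pos hy0 (hr₀pos _))]
    calc |2 * Real.sin (y * t * x)| / (y * r₀ (t * y)) ≤ (y * (2 * t * |x|)) / (y * c) :=
          div_le_div₀ (by positivity) hnum (by positivity) hden
      _ = 2 * t * |x| / c := by rw [mul_div_mul_left _ _ hy0.ne']
  have hπ : (0:ℝ) < π := Real.pi_pos
  have hK₁b : ∀ x : ℝ, ‖K₁ t x‖ ≤ (1 / (2 * π)) * (2 * t * |x| / c) := by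
    intro x
    rw [hK₁' x, Real.norm_eq_abs, abs_mul]
    have h1 : ‖∫ y in Set.Ioc (0:ℝ) 1, W x y‖
        ≤ (2 * t * |x| / c) * ((volume : Measure ℝ) (Set.Ioc (0:ℝ) 1)).toReal := by
      have hvol : (volume : Measure ℝ) (Set.Ioc (0:ℝ) 1) < ⊤ := by
        rw [Real.volume_Ioc]; exact ENNReal.ofReal_lt_top
      refine norm_setIntegral_le_of_norm_le_const hvol ?_
      · intro y hy; rw [Real.norm_eq_abs]; exact hWb x y hy
    have h1' : |∫ y in Set.Ioc (0:ℝ) 1, W x y| ≤ 2 * t * |x| / c := by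
      simpa [Real.norm_eq_abs, Real.volume_Ioc] using h1
    rw [abs_of_pos (by positivity : (0:ℝ) < 1 / (2 * π))]
    exact mul_le_mul_of_nonneg_left h1' (by positivity)
  have hemb : MeasurableEmbedding (fun x : ℝ => x + μ) :=
    (Homeomorph.addRight μ).measurableEmbedding
  have hK₁sm : StronglyMeasurable (fun x => K₁ t x) := by
    have hfe : (fun x => K₁ t x) = fun x => (1 / (2 * π)) * ∫ y in Set.Ioc (0:ℝ) 1, W x y :=
      funext hK₁'
    rw [hfe]
    exact hJsm.const_mul _
  have hmaj : Integrable (fun x : ℝ => (1 / (2 * π)) * (2 * t * (|x| + |μ|) / c)) P₀ := by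
    have h0 : Integrable (fun x : ℝ => |x| + |μ|) P₀ := hP₀1.abs.add (integrable_const _)
    exact ((h0.const_mul (2 * t)).div_const c).const_mul (1 / (2 * π))
  have hIntcomp : Integrable (fun x => K₁ t (x + μ)) P₀ := by
    refine hmaj.mono' ((hK₁sm.comp_measurable (measurable_id.add_const μ)).aestronglyMeasurable) ?_
    refine Filter.Eventually.of_forall fun x => ?_
    calc ‖K₁ t (x + μ)‖ ≤ (1 / (2 * π)) * (2 * t * |x + μ| / c) := hK₁b (x + μ)
      _ ≤ (1 / (2 * π)) * (2 * t * (|x| + |μ|) / c) := by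
          have habs : |x + μ| ≤ |x| + |μ| := abs_add_le x μ
          gcongr
  constructor
  · rw [hF μ, hemb.integrable_map_iff]
    exact hIntcomp
  · rw [hF μ, hemb.integral_map]
    have hstep1 : (∫ x, K₁ t (x + μ) ∂P₀)
        = (1 / (2 * π)) * ∫ x, (∫ y in Set.Ioc (0:ℝ) 1, W (x + μ) y) ∂P₀ := by
      simp only [hK₁']
      rw [integral_const_mul]
    rw [hstep1]
    have hsnd : ∀ᵐ p ∂(P₀.prod ((volume : Measure ℝ).restrict (Set.Ioc (0:ℝ) 1))),
        p.2 ∈ Set.Ioc (0:ℝ) 1 :=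
      Measure.quasiMeasurePreserving_snd.ae (ae_restrict_mem measurableSet_Ioc)
    have hprodsm : AEStronglyMeasurable (fun p : ℝ × ℝ => W (p.1 + μ) p.2)
        (P₀.prod ((volume : Measure ℝ).restrict (Set.Ioc (0:ℝ) 1))) :=
      ((hWpair.comp (((measurable_fst.add_const μ).prodMk
        measurable_snd))).stronglyMeasurable).aestronglyMeasurable
    have hmajp : Integrable (fun p : ℝ × ℝ => 2 * t * (|p.1| + |μ|) / c)
        (P₀.prod ((volume : Measure ℝ).restrict (Set.Ioc (0:ℝ) 1))) := by
      have h1 : Integrable (fun x : ℝ => 2 * t * (|x| + |μ|) / c) P₀ :=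
        ((hP₀1.abs.add (integrable_const _)).const_mul (2 * t)).div_const c
      have h2 : Integrable (fun _ : ℝ => (1:ℝ)) ((volume : Measure ℝ).restrict (Set.Ioc (0:ℝ) 1)) := by
        refine integrableOn_const ?_
        simp
      have h3 := h1.mul_prod h2
      simpa using h3
    have hprodint : Integrable (fun p : ℝ × ℝ => W (p.1 + μ) p.2)
        (P₀.prod ((volume : Measure ℝ).restrict (Set.Ioc (0:ℝ) 1))) := by
      refine hmajp.mono' hprodsm ?_
      filter_upwards [hsnd] with p hp
      calc ‖W (p.1 + μ) p.2‖ ≤ 2 * t * |p.1 + μ| / c := by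
            rw [Real.norm_eq_abs]; exact hWb _ _ hp
        _ ≤ 2 * t * (|p.1| + |μ|) / c := by
            have habs : |p.1 + μ| ≤ |p.1| + |μ| := abs_add_le p.1 μ
            gcongr
    have hswap := integral_integral_swap (f := fun x y => W (x + μ) y) hprodint
    rw [hswap]
    have hsinshift : ∀ a : ℝ, ∫ x, Real.sin (a * (x + μ)) ∂P₀ = Real.sin (a * μ) * r₀ a := by
      intro a
      have h1 : (fun x : ℝ => Real.sin (a * (x + μ)))
          = fun x => Real.sin (a * x) * Real.cos (a * μ) + Real.cos (a * x) * Real.sin (a * μ) := by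
        funext x; rw [mul_add, Real.sin_add]
      rw [h1, integral_add ((hintsin a).mul_const _) ((hintcos a).mul_const _),
        integral_mul_const, integral_mul_const, hsin a, hcos a]
      ring
    have hinner2 : ∀ᵐ y ∂(volume : Measure ℝ), y ∈ Set.Ioc (0:ℝ) 1 →
        (∫ x, W (x + μ) y ∂P₀) = 2 * Real.sin (y * t * μ) / y := by
      refine Filter.Eventually.of_forall fun y hy => ?_
      have hy0 : 0 < y := hy.1
      have h1 : (fun x : ℝ => W (x + μ) y)
          = fun x => Real.sin (y * t * (x + μ)) * (2 / (y * r₀ (t * y))) := by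
        funext x; simp only [hW_def]; ring
      rw [h1, integral_mul_const, hsinshift (y * t),
        show r₀ (t * y) = r₀ (y * t) by rw [mul_comm]]
      field_simp [hy0.ne', (hr₀pos (y * t)).ne']
    rw [setIntegral_congr_ae measurableSet_Ioc hinner2]
    have hRHS : (∫ y in (0:ℝ)..t, Real.sin (μ * y) / y)
        = ∫ y in Set.Ioc (0:ℝ) 1, Real.sin (y * t * μ) / y := by
      have h := intervalIntegral.integral_comp_mul_left (a := (0:ℝ)) (b := 1)
        (fun u => Real.sin (μ * u) / u) ht.ne'
      rw [mul_zero, mul_one, smul_eq_mul] at h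
      have h2 : (∫ y in (0:ℝ)..t, Real.sin (μ * y) / y)
          = t * ∫ y in (0:ℝ)..1, Real.sin (μ * (t * y)) / (t * y) := by
        rw [h]
        field_simp
      rw [h2, intervalIntegral.integral_of_le (by norm_num : (0:ℝ) ≤ 1), ← integral_const_mul]
      refine setIntegral_congr_ae measurableSet_Ioc ?_
      refine Filter.Eventually.of_forall fun y hy => ?_
      have hy0 : 0 < y := hy.1
      rw [show μ * (t * y) = y * t * μ by ring]
      field_simp
    rw [hRHS]
    simp only [mul_div_assoc]
    rw [integral_const_mul]
    field_simp
    ring_nf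
    congr 1
    funext y
    ring
end

section
/- Let φ be continuous and of bounded variation on [a, b]. Define K₁(t, x) = (t/(2π)) ∫_a^b φ(y) ( ∫_{−1}^{1} cos(t·s·(x−y))/r₀(t·s) ds ) dy. Then for every t ∈ ℝ and every μ ∈ ℝ, the function x ↦ K₁(t, x) is integrable with respect to F_μ and ∫ K₁(t, x) dF_μ(x) = (1/π) ∫_a^b ( sin((μ−y)·t)/(μ−y) )·φ(y) dy. -/
open MeasureTheory Real

set_option maxHeartbeats 1000000

lemma char_decomp {P₀ : Measure ℝ} [IsProbabilityMeasure P₀] (r₀ : ℝ → ℝ)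
    (hchar : ∀ t : ℝ,
      (∫ x, Complex.exp (Complex.I * (t : ℂ) * (x : ℂ)) ∂P₀) = ((r₀ t : ℝ) : ℂ)) (τ : ℝ) :
    (∫ x, Real.cos (τ * x) ∂P₀) = r₀ τ ∧ (∫ x, Real.sin (τ * x) ∂P₀) = 0 := by
  have hexp : ∀ x : ℝ, Complex.exp (Complex.I * (τ:ℂ) * (x:ℂ))
      = ((Real.cos (τ * x) : ℝ) : ℂ) + ((Real.sin (τ * x) : ℝ) : ℂ) * Complex.I := by
    intro x
    rw [show Complex.I * (τ:ℂ) * (x:ℂ) = ((τ * x : ℝ):ℂ) * Complex.I by push_cast; ring,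
      Complex.exp_mul_I, Complex.ofReal_cos, Complex.ofReal_sin]
  have hexpint : Integrable (fun x : ℝ => Complex.exp (Complex.I * (τ:ℂ) * (x:ℂ))) P₀ := by
    refine (integrable_const (1:ℝ)).mono'
      (Continuous.aestronglyMeasurable (by continuity)) (ae_of_all _ fun x => ?_)
    rw [show Complex.I * (τ:ℂ) * (x:ℂ) = ((τ * x : ℝ):ℂ) * Complex.I by push_cast; ring]
    exact (Complex.norm_exp_ofReal_mul_I _).le
  have hre := integral_re hexpint
  have him := integral_im hexpint
  rw [hchar τ] at hre him
  simp only [hexp, RCLike.re_to_complex, RCLike.im_to_complex, Complex.add_re, Complex.add_im,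
    Complex.ofReal_re, Complex.ofReal_im, Complex.mul_re, Complex.mul_im, Complex.I_re,
    Complex.I_im, mul_zero, mul_one, zero_mul, sub_zero, add_zero, zero_add] at hre him
  exact ⟨hre, him⟩

private lemma cont_int_param (g : ℝ → ℝ → ℝ) (hg : Continuous fun p : ℝ × ℝ => g p.1 p.2)
    (C : ℝ) (hb : ∀ s u, |g s u| ≤ C) (I : Set ℝ)
    [IsFiniteMeasure (volume.restrict I)] :
    Continuous fun u : ℝ => ∫ s in I, g s u := by
  exact continuous_of_dominated (bound := fun _ => C)
    (fun u => (show Continuous fun s => g s u from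
      hg.comp (continuous_id.prodMk continuous_const)).aestronglyMeasurable)
    (fun u => ae_of_all _ fun s => by simpa [Real.norm_eq_abs] using hb s u)
    (integrable_const C)
    (ae_of_all _ fun s => show Continuous fun u => g s u from
      hg.comp (continuous_const.prodMk continuous_id))

private lemma integrable_prod_of_bounded (ν ρ : Measure ℝ) [IsFiniteMeasure ν]
    [IsFiniteMeasure ρ] (g : ℝ → ℝ → ℝ) (hg : Continuous fun p : ℝ × ℝ => g p.1 p.2)
    (C : ℝ) (hb : ∀ x y, |g x y| ≤ C) :
    Integrable (Function.uncurry g) (ν.prod ρ) :=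
  (integrable_const C).mono'
    (show AEStronglyMeasurable (Function.uncurry g) (ν.prod ρ) from hg.aestronglyMeasurable)
    (ae_of_all _ fun p => by
      simpa [Real.norm_eq_abs, Function.uncurry] using hb p.1 p.2)

private lemma abs_setIntegral_le (I : Set ℝ) (hIm : MeasurableSet I) (hIf : volume I < ⊤)
    (g : ℝ → ℝ) (C : ℝ) (hb : ∀ x ∈ I, |g x| ≤ C) :
    |∫ x in I, g x| ≤ C * (volume I).toReal := by
  have := norm_setIntegral_le_of_norm_le_const (μ := volume) (s := I) (f := g) (C := C)
    hIf (fun x hx => by simpa [Real.norm_eq_abs] using hb x hx)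
  simpa [Real.norm_eq_abs, Measure.real] using this

/-- For a Type I location-shift family and `φ` continuous and of bounded variation on `[a, b]`,
the matching function `K₁(t, x) = (t/(2π)) ∫_a^b φ(y) ( ∫_{−1}^{1} cos(ts(x−y))/r₀(ts) ds ) dy`
is `F_μ`-integrable with
`∫ K₁(t, x) dF_μ(x) = (1/π) ∫_a^b ( sin((μ−y)t)/(μ−y) ) φ(y) dy`. -/
theorem integral_matching_extension
    (P₀ : Measure ℝ) [IsProbabilityMeasure P₀]
    (r₀ : ℝ → ℝ) (hr₀pos : ∀ t : ℝ, 0 < r₀ t)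
    (hchar : ∀ t : ℝ,
      (∫ x, Complex.exp (Complex.I * (t : ℂ) * (x : ℂ)) ∂P₀) = ((r₀ t : ℝ) : ℂ))
    (F : ℝ → Measure ℝ) (hF : ∀ μ : ℝ, F μ = Measure.map (fun x => x + μ) P₀)
    (a b : ℝ) (hab : a < b)
    (φ : ℝ → ℝ) (hφcont : ContinuousOn φ (Set.Icc a b))
    (hφBV : BoundedVariationOn φ (Set.Icc a b))
    (K₁ : ℝ → ℝ → ℝ)
    (hK₁ : ∀ t x, K₁ t x =
      (t / (2 * π)) *
        ∫ y in a..b, φ y * ∫ s in (-1:ℝ)..1, Real.cos (t * s * (x - y)) / r₀ (t * s)) :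
    ∀ t μ : ℝ,
      Integrable (fun x => K₁ t x) (F μ) ∧
      (∫ x, K₁ t x ∂(F μ)) =
        (1 / π) * ∫ y in a..b, Real.sin ((μ - y) * t) / (μ - y) * φ y := by
  have hces : ∀ τ : ℝ, (∫ x, Real.cos (τ * x) ∂P₀) = r₀ τ :=
    fun τ => (char_decomp r₀ hchar τ).1
  have hses : ∀ τ : ℝ, (∫ x, Real.sin (τ * x) ∂P₀) = 0 :=
    fun τ => (char_decomp r₀ hchar τ).2
  have hic : ∀ τ : ℝ, Integrable (fun x => Real.cos (τ * x)) P₀ := fun τ =>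
    (integrable_const (1:ℝ)).mono'
      ((Real.continuous_cos.comp (continuous_const.mul continuous_id)).aestronglyMeasurable)
      (ae_of_all _ fun x => by simpa [Real.norm_eq_abs] using Real.abs_cos_le_one (τ * x))
  have his : ∀ τ : ℝ, Integrable (fun x => Real.sin (τ * x)) P₀ := fun τ =>
    (integrable_const (1:ℝ)).mono'
      ((Real.continuous_sin.comp (continuous_const.mul continuous_id)).aestronglyMeasurable)
      (ae_of_all _ fun x => by simpa [Real.norm_eq_abs] using Real.abs_sin_le_one (τ * x))
  have hr₀cont : Continuous r₀ := by
    have hcontint : Continuous fun τ : ℝ => ∫ x, Real.cos (τ * x) ∂P₀ := by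
      apply continuous_of_dominated (bound := fun _ => (1:ℝ))
      · exact fun τ =>
          (Real.continuous_cos.comp (continuous_const.mul continuous_id)).aestronglyMeasurable
      · exact fun τ => ae_of_all _ fun x => by
          simpa [Real.norm_eq_abs] using Real.abs_cos_le_one (τ * x)
      · exact integrable_const 1
      · exact ae_of_all _ fun x =>
          Real.continuous_cos.comp (continuous_id.mul continuous_const)
    exact funext hces ▸ hcontint
  -- the key integral against a shifted measure
  have hcosint : ∀ τ d : ℝ, (∫ x, Real.cos (τ * (x + d)) ∂P₀) = Real.cos (τ * d) * r₀ τ := by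
    intro τ d
    have h1 : ∀ x : ℝ, Real.cos (τ * (x + d))
        = Real.cos (τ * x) * Real.cos (τ * d) - Real.sin (τ * x) * Real.sin (τ * d) := by
      intro x; rw [mul_add, Real.cos_add]
    simp_rw [h1]
    rw [integral_sub ((hic τ).mul_const _) ((his τ).mul_const _), integral_mul_const,
      integral_mul_const, hces, hses]
    ring
  intro t μ
  have hFμ : F μ = Measure.map (fun x => x + μ) P₀ := hF μ
  have hmapmeas : Measurable fun x : ℝ => x + μ := measurable_add_const μ
  haveI hprob : IsProbabilityMeasure (F μ) := by
    rw [hFμ]; exact Measure.isProbabilityMeasure_map hmapmeas.aemeasurable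
  have hcosF : ∀ τ d : ℝ,
      (∫ x, Real.cos (τ * (x - d)) ∂(F μ)) = Real.cos (τ * (μ - d)) * r₀ τ := by
    intro τ d
    have hmeas : AEStronglyMeasurable (fun x : ℝ => Real.cos (τ * (x - d)))
        (Measure.map (fun x => x + μ) P₀) :=
      (Real.continuous_cos.comp
        (continuous_const.mul (continuous_id.sub continuous_const))).aestronglyMeasurable
    rw [hFμ, integral_map hmapmeas.aemeasurable hmeas]
    simp_rw [show ∀ x : ℝ, τ * (x + μ - d) = τ * (x + (μ - d)) from fun x => by ring]
    exact hcosint τ (μ - d)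
  -- lower bound for r₀ on the relevant compact set
  obtain ⟨s₀, hs₀mem, hs₀min⟩ := (isCompact_Icc (a := -|t|) (b := |t|)).exists_isMinOn
    ⟨0, by simp [abs_nonneg]⟩ hr₀cont.continuousOn
  obtain ⟨c, hcdef⟩ : ∃ c : ℝ, c = r₀ s₀ := ⟨_, rfl⟩
  have hcpos : 0 < c := by rw [hcdef]; exact hr₀pos s₀
  -- clamped version of the inner integrand
  obtain ⟨q, hq_app⟩ : ∃ q : ℝ → ℝ, ∀ s, q s = min (max s (-1)) 1 := ⟨_, fun s => rfl⟩
  have hqcont : Continuous q := by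
    rw [show q = fun s => min (max s (-1)) 1 from funext hq_app]
    exact Continuous.min (Continuous.max continuous_id continuous_const) continuous_const
  have hqmem : ∀ s, |q s| ≤ 1 := by
    intro s
    rw [hq_app, abs_le]
    exact ⟨le_min (le_max_right s (-1)) (by norm_num), min_le_right _ _⟩
  have hqeq : ∀ s ∈ Set.Icc (-1:ℝ) 1, q s = s := by
    intro s hs
    rw [hq_app]
    rw [max_eq_left hs.1, min_eq_left hs.2]
  have hrb : ∀ s : ℝ, c ≤ r₀ (t * q s) := by
    intro s
    rw [hcdef]
    apply hs₀min
    rw [Set.mem_Icc]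
    constructor
    · nlinarith [abs_nonneg (t * q s), neg_abs_le (t * q s), abs_mul t (q s), hqmem s,
        abs_nonneg t]
    · calc t * q s ≤ |t * q s| := le_abs_self _
        _ = |t| * |q s| := abs_mul t (q s)
        _ ≤ |t| * 1 := by nlinarith [abs_nonneg t, hqmem s]
        _ = |t| := mul_one _
  obtain ⟨Hc, hHc_app⟩ : ∃ Hc : ℝ → ℝ → ℝ,
      ∀ s u, Hc s u = Real.cos (t * q s * u) / r₀ (t * q s) := ⟨_, fun s u => rfl⟩
  have hHccont : Continuous fun p : ℝ × ℝ => Hc p.1 p.2 := by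
    rw [show (fun p : ℝ × ℝ => Hc p.1 p.2)
        = fun p : ℝ × ℝ => Real.cos (t * q p.1 * p.2) / r₀ (t * q p.1) from
      funext fun p => hHc_app p.1 p.2]
    apply Continuous.div
    · exact Real.continuous_cos.comp
        (((continuous_const.mul (hqcont.comp continuous_fst))).mul continuous_snd)
    · exact hr₀cont.comp (continuous_const.mul (hqcont.comp continuous_fst))
    · exact fun p => (hr₀pos _).ne'
  have hHcbound : ∀ s u : ℝ, |Hc s u| ≤ 1 / c := by
    intro s u
    rw [hHc_app, abs_div]
    rw [abs_of_pos (hr₀pos (t * q s))]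
    apply div_le_div₀ (by norm_num) (Real.abs_cos_le_one _) hcpos (hrb s)
  haveI hfinIoc1 : IsFiniteMeasure (volume.restrict (Set.Ioc (-1:ℝ) 1)) := by
    constructor
    rw [Measure.restrict_apply_univ]
    exact measure_Ioc_lt_top
  haveI hfinIocab : IsFiniteMeasure (volume.restrict (Set.Ioc a b)) := by
    constructor
    rw [Measure.restrict_apply_univ]
    exact measure_Ioc_lt_top
  -- the inner integral
  obtain ⟨h, hh_app⟩ : ∃ h : ℝ → ℝ, ∀ u, h u = ∫ s in Set.Ioc (-1:ℝ) 1, Hc s u :=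
    ⟨_, fun u => rfl⟩
  have hinner : ∀ u : ℝ, (∫ s in (-1:ℝ)..1, Real.cos (t * s * u) / r₀ (t * s)) = h u := by
    intro u
    rw [intervalIntegral.integral_of_le (by norm_num : (-1:ℝ) ≤ 1), hh_app]
    apply setIntegral_congr_fun measurableSet_Ioc
    intro s hs
    dsimp only
    rw [hHc_app, hqeq s (Set.Ioc_subset_Icc_self hs)]
  have hhcont : Continuous h := by
    rw [show h = fun u => ∫ s in Set.Ioc (-1:ℝ) 1, Hc s u from funext hh_app]
    exact cont_int_param Hc hHccont (1 / c) hHcbound _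
  have hhbound : ∀ u : ℝ, |h u| ≤ 1 / c * 2 := by
    intro u
    rw [hh_app]
    have := abs_setIntegral_le (Set.Ioc (-1:ℝ) 1) measurableSet_Ioc measure_Ioc_lt_top
      (fun s => Hc s u) (1 / c) (fun s _ => hHcbound s u)
    rw [Real.volume_Ioc] at this
    simpa [ENNReal.toReal_ofReal, show (1:ℝ) - (-1) = 2 by norm_num] using this
  -- globally continuous version of φ
  obtain ⟨ψ, hψ_app⟩ : ∃ ψ : ℝ → ℝ, ∀ y, ψ y = φ (min (max y a) b) := ⟨_, fun y => rfl⟩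
  have hclampmem : ∀ y : ℝ, min (max y a) b ∈ Set.Icc a b := by
    intro y
    exact ⟨le_min (le_max_right y a) hab.le, min_le_right _ _⟩
  have hψcont : Continuous ψ := by
    rw [show ψ = fun y => φ (min (max y a) b) from funext hψ_app]
    apply hφcont.comp_continuous
    · exact Continuous.min (Continuous.max continuous_id continuous_const) continuous_const
    · exact hclampmem
  have hψeq : ∀ y ∈ Set.Icc a b, ψ y = φ y := by
    intro y hy
    rw [hψ_app, max_eq_left hy.1, min_eq_left hy.2]
  obtain ⟨M, hM⟩ := (isCompact_Icc (a := a) (b := b)).exists_bound_of_continuousOn hφcont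
  have hψbound : ∀ y : ℝ, |ψ y| ≤ M := fun y => by
    rw [hψ_app]; exact hM _ (hclampmem y)
  have hMnn : 0 ≤ M := le_trans (norm_nonneg _) (hM a ⟨le_refl a, hab.le⟩)
  -- rewriting K₁
  have hKrw : ∀ x : ℝ, K₁ t x = (t / (2 * π)) * ∫ y in Set.Ioc a b, ψ y * h (x - y) := by
    intro x
    rw [hK₁]
    congr 1
    rw [intervalIntegral.integral_of_le hab.le]
    apply setIntegral_congr_fun measurableSet_Ioc
    intro y hy
    dsimp only
    rw [hψeq y (Set.Ioc_subset_Icc_self hy), hinner]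
  have hKcont : Continuous (K₁ t) := by
    have : Continuous fun x : ℝ => (t / (2 * π)) * ∫ y in Set.Ioc a b, ψ y * h (x - y) := by
      apply Continuous.mul continuous_const
      apply cont_int_param (fun y x => ψ y * h (x - y))
        ((hψcont.comp continuous_fst).mul
          (hhcont.comp (continuous_snd.sub continuous_fst)))
        (M * (1 / c * 2))
        (fun y x => by
          rw [abs_mul]
          exact mul_le_mul (hψbound y) (hhbound (x - y)) (abs_nonneg _) hMnn)
    have heq : K₁ t = fun x => (t / (2 * π)) * ∫ y in Set.Ioc a b, ψ y * h (x - y) :=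
      funext hKrw
    rw [heq]; exact this
  have hKbound : ∀ x : ℝ, ‖K₁ t x‖ ≤ |t / (2 * π)| * (M * (1 / c * 2) * (b - a)) := by
    intro x
    rw [hKrw x, Real.norm_eq_abs, abs_mul]
    apply mul_le_mul_of_nonneg_left _ (abs_nonneg _)
    have := abs_setIntegral_le (Set.Ioc a b) measurableSet_Ioc measure_Ioc_lt_top
      (fun y => ψ y * h (x - y)) (M * (1 / c * 2))
      (fun y _ => by
        rw [abs_mul]
        exact mul_le_mul (hψbound y) (hhbound (x - y)) (abs_nonneg _) hMnn)
    rw [Real.volume_Ioc, ENNReal.toReal_ofReal (by linarith)] at this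
    exact this
  have hKint : Integrable (fun x => K₁ t x) (F μ) :=
    (integrable_const (|t / (2 * π)| * (M * (1 / c * 2) * (b - a)))).mono'
      hKcont.aestronglyMeasurable (ae_of_all _ hKbound)
  refine ⟨hKint, ?_⟩
  -- Fubini, inner swap : for each y, integrate h(x - y) in x
  have hswap2 : ∀ y : ℝ, (∫ x, h (x - y) ∂(F μ))
      = ∫ s in Set.Ioc (-1:ℝ) 1, Real.cos (t * q s * (μ - y)) := by
    intro y
    have hint2 : Integrable (Function.uncurry fun x s => Hc s (x - y))
        ((F μ).prod (volume.restrict (Set.Ioc (-1:ℝ) 1))) := by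
      exact integrable_prod_of_bounded _ _ (fun x s => Hc s (x - y))
        (hHccont.comp ((continuous_snd).prodMk (continuous_fst.sub continuous_const)))
        (1 / c) (fun x s => hHcbound s (x - y))
    have hsw : (∫ x, (∫ s in Set.Ioc (-1:ℝ) 1, Hc s (x - y)) ∂(F μ))
        = ∫ s in Set.Ioc (-1:ℝ) 1, ∫ x, Hc s (x - y) ∂(F μ) :=
      integral_integral_swap hint2
    simp only [hh_app]
    rw [hsw]
    apply setIntegral_congr_fun measurableSet_Ioc
    intro s _
    dsimp only
    have : (fun x => Hc s (x - y)) = fun x => Real.cos (t * q s * (x - y)) * (r₀ (t * q s))⁻¹ := by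
      funext x; rw [hHc_app, div_eq_mul_inv]
    rw [this, integral_mul_const, hcosF (t * q s) y, mul_assoc,
      mul_inv_cancel₀ (hr₀pos (t * q s)).ne', mul_one]
  -- Fubini, outer swap
  have hint1 : Integrable (Function.uncurry fun x y => ψ y * h (x - y))
      ((F μ).prod (volume.restrict (Set.Ioc a b))) := by
    exact integrable_prod_of_bounded _ _ (fun x y => ψ y * h (x - y))
      ((hψcont.comp continuous_snd).mul (hhcont.comp (continuous_fst.sub continuous_snd)))
      (M * (1 / c * 2))
      (fun x y => by
        rw [abs_mul]
        exact mul_le_mul (hψbound y) (hhbound (x - y)) (abs_nonneg _) hMnn)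
  have hsw1 : (∫ x, (∫ y in Set.Ioc a b, ψ y * h (x - y)) ∂(F μ))
      = ∫ y in Set.Ioc a b, ∫ x, ψ y * h (x - y) ∂(F μ) :=
    integral_integral_swap hint1
  -- put everything together
  have hLHS : (∫ x, K₁ t x ∂(F μ))
      = ∫ y in Set.Ioc a b, (t / (2 * π)) *
          (ψ y * ∫ s in Set.Ioc (-1:ℝ) 1, Real.cos (t * q s * (μ - y))) := by
    calc ∫ x, K₁ t x ∂(F μ)
        = ∫ x, ((t / (2 * π)) * ∫ y in Set.Ioc a b, ψ y * h (x - y)) ∂(F μ) := by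
          exact integral_congr_ae (ae_of_all _ hKrw)
      _ = (t / (2 * π)) * ∫ x, (∫ y in Set.Ioc a b, ψ y * h (x - y)) ∂(F μ) :=
          integral_const_mul _ _
      _ = (t / (2 * π)) * ∫ y in Set.Ioc a b, (∫ x, ψ y * h (x - y) ∂(F μ)) := by rw [hsw1]
      _ = (t / (2 * π)) * ∫ y in Set.Ioc a b,
            ψ y * ∫ s in Set.Ioc (-1:ℝ) 1, Real.cos (t * q s * (μ - y)) := by
          congr 1
          apply setIntegral_congr_fun measurableSet_Ioc
          intro y _
          dsimp only
          rw [integral_const_mul, hswap2 y]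
      _ = ∫ y in Set.Ioc a b, (t / (2 * π)) *
            (ψ y * ∫ s in Set.Ioc (-1:ℝ) 1, Real.cos (t * q s * (μ - y))) := by
          rw [integral_const_mul]
  rw [hLHS]
  -- rewrite the right-hand side as one set integral
  rw [intervalIntegral.integral_of_le hab.le, ← integral_const_mul]
  -- pointwise identification away from y = μ
  apply integral_congr_ae
  have hne : ∀ᵐ y ∂(volume.restrict (Set.Ioc a b)), y ≠ μ := by
    apply ae_restrict_of_ae
    rw [ae_iff]
    have : {y : ℝ | ¬ y ≠ μ} = {μ} := by ext y; simp
    rw [this]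
    exact measure_singleton μ
  filter_upwards [hne, ae_restrict_mem measurableSet_Ioc] with y hy hymem
  -- compute the inner cosine integral
  have hVeq : (∫ s in Set.Ioc (-1:ℝ) 1, Real.cos (t * q s * (μ - y)))
      = ∫ s in (-1:ℝ)..1, Real.cos (t * s * (μ - y)) := by
    rw [intervalIntegral.integral_of_le (by norm_num : (-1:ℝ) ≤ 1)]
    apply setIntegral_congr_fun measurableSet_Ioc
    intro s hs
    dsimp only
    rw [hqeq s (Set.Ioc_subset_Icc_self hs)]
  rw [hVeq, hψeq y (Set.Ioc_subset_Icc_self hymem)]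
  by_cases ht : t = 0
  · subst ht
    simp
  · have hu : μ - y ≠ 0 := sub_ne_zero.mpr (Ne.symm hy)
    have hc' : t * (μ - y) ≠ 0 := mul_ne_zero ht hu
    have hW : (∫ s in (-1:ℝ)..1, Real.cos (t * s * (μ - y)))
        = 2 * Real.sin (t * (μ - y)) / (t * (μ - y)) := by
      simp_rw [show ∀ s : ℝ, t * s * (μ - y) = (t * (μ - y)) * s from fun s => by ring]
      rw [intervalIntegral.integral_comp_mul_left (fun v => Real.cos v) hc']
      rw [integral_cos]
      rw [smul_eq_mul]
      rw [mul_neg_one, mul_one, Real.sin_neg]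
      field_simp
      ring
    rw [hW]
    have hπ : (π : ℝ) ≠ 0 := Real.pi_ne_zero
    rw [show Real.sin ((μ - y) * t) = Real.sin (t * (μ - y)) by rw [mul_comm]]
    field_simp
end

section
/- Assume ∫ x² dP₀(x) < ∞ and let φ be continuous and of bounded variation on [a, b], with supremum norm ‖φ‖_∞ over [a, b]. Let μ₁,…,μ_m ∈ ℝ, let z₁,…,z_m be independent random variables with z_i distributed according to F_{μ_i}, and set e_m(t) = (1/m) Σ_{i=1}^m ( K(t, z_i) − E[K(t, z_i)] ). Then for every t ∈ ℝ and m ≥ 1, Var(e_m(t)) ≤ 2·‖φ‖_∞²·(1/m)·g(t)²·( π^{−2}(b−a)²·t² + ‖ω‖_∞² ). -/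
open MeasureTheory ProbabilityTheory Real

private lemma auxPtBound (r : ℝ → ℝ) (hrpos : ∀ u, 0 < r u) {w C : ℝ} (hw : |w| ≤ C)
    {c : ℝ} (hc : |c| ≤ 1) (u : ℝ) :
    |w * c / r u| ≤ C / r u := by
  rw [abs_div, abs_mul, abs_of_pos (hrpos u)]
  apply div_le_div_of_nonneg_right ?_ (hrpos u).le
  calc |w| * |c| ≤ C * 1 := mul_le_mul hw hc (abs_nonneg c) (le_trans (abs_nonneg w) hw)
    _ = C := mul_one C

private lemma auxContR0 (P₀ : Measure ℝ) [IsProbabilityMeasure P₀] (r₀ : ℝ → ℝ)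
    (hchar : ∀ t : ℝ,
      (∫ x, Complex.exp (Complex.I * (t : ℂ) * (x : ℂ)) ∂P₀) = ((r₀ t : ℝ) : ℂ)) :
    Continuous r₀ := by
  have hc : Continuous fun t : ℝ => ∫ x, Complex.exp (Complex.I * (t : ℂ) * (x : ℂ)) ∂P₀ := by
    apply MeasureTheory.continuous_of_dominated (bound := fun _ : ℝ => (1 : ℝ))
    · intro t
      exact (Complex.continuous_exp.comp (by fun_prop)).aestronglyMeasurable
    · intro t
      filter_upwards with x
      have h : Complex.I * (t : ℂ) * (x : ℂ) = ((t * x : ℝ) : ℂ) * Complex.I := by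
        push_cast; ring
      rw [h, Complex.norm_exp_ofReal_mul_I]
    · exact integrable_const 1
    · filter_upwards with x
      exact Complex.continuous_exp.comp (by fun_prop)
  have h2 : Continuous fun t : ℝ => ((r₀ t : ℝ) : ℂ) := by
    simpa only [hchar] using hc
  have h3 : r₀ = fun t => ((r₀ t : ℝ) : ℂ).re := by funext t; simp
  rw [h3]
  exact Complex.continuous_re.comp h2

private lemma auxIntBound (r : ℝ → ℝ) (hrpos : ∀ u, 0 < r u) (hrc : Continuous r)
    (t C : ℝ) (f : ℝ → ℝ) (hf : ∀ s, |f s| ≤ C / r (t * s)) :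
    |∫ s in (-1:ℝ)..1, f s| ≤ C * ∫ s in (-1:ℝ)..1, 1 / r (t * s) := by
  have hcont : Continuous fun s => C / r (t * s) :=
    continuous_const.div (hrc.comp (continuous_const.mul continuous_id))
      (fun s => (hrpos _).ne')
  have h1 : ‖∫ s in (-1:ℝ)..1, f s‖ ≤ |∫ s in (-1:ℝ)..1, C / r (t * s)| :=
    intervalIntegral.norm_integral_le_abs_of_norm_le
      (Filter.Eventually.of_forall fun s => by simpa [Real.norm_eq_abs] using hf s)
      (hcont.intervalIntegrable (μ := volume) (-1) 1)
  have h2 : (∫ s in (-1:ℝ)..1, C / r (t * s)) = C * ∫ s in (-1:ℝ)..1, 1 / r (t * s) := by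
    rw [← intervalIntegral.integral_const_mul]
    congr 1; funext s; ring
  have h3 : (0:ℝ) ≤ ∫ s in (-1:ℝ)..1, C / r (t * s) := by
    have hC : 0 ≤ C := by
      have h5 : 0 ≤ C / r (t * 0) := (abs_nonneg (f 0)).trans (hf 0)
      have h4 : 0 < r (t * 0) := hrpos _
      rcases div_nonneg_iff.mp h5 with ⟨h, _⟩ | ⟨_, h⟩
      · exact h
      · linarith
    apply intervalIntegral.integral_nonneg (by norm_num)
    intro u _
    exact div_nonneg hC (hrpos _).le
  rw [Real.norm_eq_abs] at h1
  rwa [abs_of_nonneg h3, h2] at h1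

private lemma auxCont (r : ℝ → ℝ) (hrpos : ∀ u, 0 < r u) (hrc : Continuous r)
    (t : ℝ) (w : ℝ → ℝ) (hw : Measurable w) (C : ℝ) (hwb : ∀ s, |w s| ≤ C) :
    Continuous fun x : ℝ => ∫ s in (-1:ℝ)..1, w s * Real.cos (t * s * x) / r (t * s) := by
  apply intervalIntegral.continuous_of_dominated_interval
    (bound := fun s => C / r (t * s))
  · intro x
    exact ((hw.mul (by fun_prop)).div (hrc.measurable.comp (by fun_prop))).aestronglyMeasurable
  · intro x
    filter_upwards with s _
    rw [Real.norm_eq_abs]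
    exact auxPtBound r hrpos (hwb s) (Real.abs_cos_le_one _) _
  · exact (continuous_const.div (hrc.comp (continuous_const.mul continuous_id))
      (fun s => (hrpos _).ne')).intervalIntegrable (μ := volume) (-1) 1
  · filter_upwards with s _
    exact (continuous_const.mul (Real.continuous_cos.comp
      (continuous_const.mul continuous_id))).div_const _

private lemma auxCont2 {φ : ℝ → ℝ} {a b : ℝ} (hab : a ≤ b)
    (hφ : ContinuousOn φ (Set.Icc a b)) {h : ℝ → ℝ} (hh : Continuous h)
    {G Cφ : ℝ} (hG : ∀ u, |h u| ≤ G) (hCφ : ∀ y ∈ Set.Icc a b, |φ y| ≤ Cφ) :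
    Continuous fun x : ℝ => ∫ y in a..b, φ y * h (x - y) := by
  apply intervalIntegral.continuous_of_dominated_interval (bound := fun _ => Cφ * G)
  · intro x
    rw [Set.uIoc_of_le hab]
    apply AEStronglyMeasurable.mul
    · exact (hφ.mono Set.Ioc_subset_Icc_self).aestronglyMeasurable measurableSet_Ioc
    · exact ((hh.comp (continuous_const.sub continuous_id)).aestronglyMeasurable).restrict
  · intro x
    filter_upwards with y hy
    rw [Set.uIoc_of_le hab] at hy
    rw [Real.norm_eq_abs, abs_mul]
    exact mul_le_mul (hCφ y (Set.Ioc_subset_Icc_self hy)) (hG _) (abs_nonneg _)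
      (le_trans (abs_nonneg _) (hCφ a ⟨le_refl a, hab⟩))
  · exact intervalIntegrable_const
  · filter_upwards with y _
    exact continuous_const.mul (hh.comp (continuous_id.sub continuous_const))

private lemma auxIntBound2 {φ : ℝ → ℝ} {a b : ℝ} (hab : a ≤ b) {h : ℝ → ℝ}
    {G Cφ : ℝ} (hG : ∀ u, |h u| ≤ G) (hCφ : ∀ y ∈ Set.Icc a b, |φ y| ≤ Cφ) (x : ℝ) :
    |∫ y in a..b, φ y * h (x - y)| ≤ Cφ * G * (b - a) := by
  have h1 : ∀ y ∈ Set.uIoc a b, ‖φ y * h (x - y)‖ ≤ Cφ * G := by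
    intro y hy
    rw [Set.uIoc_of_le hab] at hy
    rw [Real.norm_eq_abs, abs_mul]
    exact mul_le_mul (hCφ y (Set.Ioc_subset_Icc_self hy)) (hG _) (abs_nonneg _)
      (le_trans (abs_nonneg _) (hCφ a ⟨le_refl a, hab⟩))
  have := intervalIntegral.norm_integral_le_of_norm_le_const h1
  rwa [Real.norm_eq_abs, abs_of_nonneg (by linarith : (0:ℝ) ≤ b - a)] at this

/-- Variance bound for the error of the estimator of the `φ`-weighted proportion for a bounded
null: `Var(e_m(t)) ≤ 2‖φ‖_∞² (1/m) g(t)² (π⁻²(b−a)²t² + ‖ω‖_∞²)`. -/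
theorem variance_bound_extension
    (P₀ : Measure ℝ) [IsProbabilityMeasure P₀]
    (r₀ : ℝ → ℝ) (hr₀pos : ∀ t : ℝ, 0 < r₀ t)
    (hchar : ∀ t : ℝ,
      (∫ x, Complex.exp (Complex.I * (t : ℂ) * (x : ℂ)) ∂P₀) = ((r₀ t : ℝ) : ℂ))
    (hP₀2 : Integrable (fun x : ℝ => x ^ 2) P₀)
    (F : ℝ → Measure ℝ) (hF : ∀ μ : ℝ, F μ = Measure.map (fun x => x + μ) P₀)
    (ω : ℝ → ℝ) (hω_meas : Measurable ω) (hω_nonneg : ∀ s, 0 ≤ ω s)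
    (hω_even : ∀ s, ω (-s) = ω s)
    (hω_bdd : ∃ C : ℝ, ∀ s, ω s ≤ C)
    (hω_supp : ∀ s : ℝ, s ∉ Set.Icc (-1:ℝ) 1 → ω s = 0)
    (hω_int : (∫ s in (-1:ℝ)..1, ω s) = 1)
    (a b : ℝ) (hab : a < b)
    (φ : ℝ → ℝ) (hφcont : ContinuousOn φ (Set.Icc a b))
    (hφBV : BoundedVariationOn φ (Set.Icc a b))
    (K₁₀ : ℝ → ℝ → ℝ → ℝ)
    (hK₁₀ : ∀ t x μ', K₁₀ t x μ' =
      ∫ s in (-1:ℝ)..1, ω s * Real.cos (t * s * (x - μ')) / r₀ (t * s))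
    (K₁ : ℝ → ℝ → ℝ)
    (hK₁ : ∀ t x, K₁ t x =
      (t / (2 * π)) *
        ∫ y in a..b, φ y * ∫ s in (-1:ℝ)..1, Real.cos (t * s * (x - y)) / r₀ (t * s))
    (K : ℝ → ℝ → ℝ)
    (hK : ∀ t x, K t x = K₁ t x - (1 / 2) * (φ a * K₁₀ t x a + φ b * K₁₀ t x b))
    (g : ℝ → ℝ) (hg : ∀ t, g t = ∫ s in (-1:ℝ)..1, 1 / r₀ (t * s))
    {Ω : Type*} [MeasurableSpace Ω] (P : Measure Ω) [IsProbabilityMeasure P]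
    (m : ℕ) (hm : 1 ≤ m)
    (μs : Fin m → ℝ) (z : Fin m → Ω → ℝ)
    (hzmeas : ∀ i, Measurable (z i))
    (hindep : iIndepFun z P)
    (hlaw : ∀ i, Measure.map (z i) P = F (μs i))
    (em : ℝ → Ω → ℝ)
    (hem : ∀ t ω', em t ω' =
      (1 / (m : ℝ)) * ∑ i, (K t (z i ω') - ∫ x, K t x ∂(F (μs i)))) :
    ∀ t : ℝ,
      variance (em t) P ≤
        2 * (⨆ y : Set.Icc a b, |φ ↑y|) ^ 2 * (1 / (m : ℝ)) * (g t) ^ 2 *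
          ((π ^ 2)⁻¹ * (b - a) ^ 2 * t ^ 2 + (⨆ s : ℝ, |ω s|) ^ 2) := by
  intro t
  have hπ : (0:ℝ) < π := Real.pi_pos
  set Cφ : ℝ := ⨆ y : Set.Icc a b, |φ ↑y| with hCφdef
  set Cω : ℝ := ⨆ s : ℝ, |ω s| with hCωdef
  -- bounds on φ and ω
  obtain ⟨Cb, hCb⟩ := (isCompact_Icc (a := a) (b := b)).exists_bound_of_continuousOn hφcont
  have hbdd : BddAbove (Set.range fun y : Set.Icc a b => |φ ↑y|) := by
    refine ⟨Cb, ?_⟩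
    rintro _ ⟨y, rfl⟩
    simpa [Real.norm_eq_abs] using hCb y y.2
  have hCφ : ∀ y ∈ Set.Icc a b, |φ y| ≤ Cφ := fun y hy => le_ciSup hbdd (⟨y, hy⟩ : Set.Icc a b)
  have hCφ0 : 0 ≤ Cφ := le_trans (abs_nonneg _) (hCφ a ⟨le_refl a, hab.le⟩)
  obtain ⟨Cω0, hCω0b⟩ := hω_bdd
  have hbddω : BddAbove (Set.range fun s : ℝ => |ω s|) := by
    refine ⟨Cω0, ?_⟩
    rintro _ ⟨s, rfl⟩
    show |ω s| ≤ Cω0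
    rw [abs_of_nonneg (hω_nonneg s)]; exact hCω0b s
  have hCω : ∀ s, |ω s| ≤ Cω := fun s => le_ciSup hbddω s
  have hCω0 : 0 ≤ Cω := le_trans (abs_nonneg _) (hCω 0)
  -- continuity of r₀
  have hr₀c : Continuous r₀ := auxContR0 P₀ r₀ hchar
  set G : ℝ := g t with hGdef
  have hGnn : 0 ≤ G := by
    rw [hGdef, hg]
    apply intervalIntegral.integral_nonneg (by norm_num)
    intro u _
    exact (one_div_pos.mpr (hr₀pos _)).le
  -- the kernel h
  set h : ℝ → ℝ := fun u => ∫ s in (-1:ℝ)..1, Real.cos (t * s * u) / r₀ (t * s) with hhdef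
  have hhcont : Continuous h := by
    have h1 := auxCont r₀ hr₀pos hr₀c t (fun _ => (1:ℝ)) measurable_const 1
      (fun s => by norm_num)
    simpa only [one_mul] using h1
  have hhb : ∀ u, |h u| ≤ G := by
    intro u
    rw [hGdef, hg]
    have h1 := auxIntBound r₀ hr₀pos hr₀c t 1
      (fun s => Real.cos (t * s * u) / r₀ (t * s))
      (fun s => by
        have := auxPtBound r₀ hr₀pos (le_refl |(1:ℝ)|) (Real.abs_cos_le_one (t * s * u)) (t * s)
        simpa using this)
    simpa using h1
  -- bounds and continuity for K₁₀
  have hK₁₀b : ∀ x μ', |K₁₀ t x μ'| ≤ Cω * G := by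
    intro x μ'
    rw [hK₁₀, hGdef, hg]
    exact auxIntBound r₀ hr₀pos hr₀c t Cω _
      (fun s => auxPtBound r₀ hr₀pos (hCω s) (Real.abs_cos_le_one _) (t * s))
  have hK₁₀c : ∀ μ', Continuous fun x => K₁₀ t x μ' := by
    intro μ'
    have h1 : (fun x => K₁₀ t x μ') =
        fun x => ∫ s in (-1:ℝ)..1, ω s * Real.cos (t * s * (x - μ')) / r₀ (t * s) :=
      funext fun x => hK₁₀ t x μ'
    rw [h1]
    exact (auxCont r₀ hr₀pos hr₀c t ω hω_meas Cω hCω).comp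
      (continuous_id.sub continuous_const)
  -- bounds and continuity for K₁
  have hK₁fun : (fun x => K₁ t x) = fun x => (t / (2 * π)) * ∫ y in a..b, φ y * h (x - y) :=
    funext fun x => hK₁ t x
  have hK₁c : Continuous fun x => K₁ t x := by
    rw [hK₁fun]
    exact continuous_const.mul (auxCont2 hab.le hφcont hhcont hhb hCφ)
  have hK₁b : ∀ x, |K₁ t x| ≤ |t| / (2 * π) * (Cφ * G * (b - a)) := by
    intro x
    have h1 : K₁ t x = (t / (2 * π)) * ∫ y in a..b, φ y * h (x - y) := hK₁ t x
    rw [h1, abs_mul, abs_div, abs_of_pos (by positivity : (0:ℝ) < 2 * π)]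
    exact mul_le_mul_of_nonneg_left (auxIntBound2 hab.le hhb hCφ x) (by positivity)
  -- continuity and boundedness of K
  set M : ℝ := |t| / (2 * π) * (Cφ * G * (b - a)) + Cφ * (Cω * G) with hMdef
  have hKcont : Continuous (K t) := by
    have h1 : K t = fun x => K₁ t x - (1 / 2) * (φ a * K₁₀ t x a + φ b * K₁₀ t x b) :=
      funext fun x => hK t x
    rw [h1]
    exact hK₁c.sub (continuous_const.mul ((continuous_const.mul (hK₁₀c a)).add
      (continuous_const.mul (hK₁₀c b))))
  have hKb : ∀ x, |K t x| ≤ M := by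
    intro x
    rw [hK]
    have e2 : |φ a * K₁₀ t x a| ≤ Cφ * (Cω * G) :=
      (abs_mul _ _).le.trans (mul_le_mul (hCφ a ⟨le_refl a, hab.le⟩) (hK₁₀b x a)
        (abs_nonneg _) hCφ0)
    have e3 : |φ b * K₁₀ t x b| ≤ Cφ * (Cω * G) :=
      (abs_mul _ _).le.trans (mul_le_mul (hCφ b ⟨hab.le, le_refl b⟩) (hK₁₀b x b)
        (abs_nonneg _) hCφ0)
    calc |K₁ t x - 1 / 2 * (φ a * K₁₀ t x a + φ b * K₁₀ t x b)|
        ≤ |K₁ t x| + |1 / 2 * (φ a * K₁₀ t x a + φ b * K₁₀ t x b)| := abs_sub _ _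
      _ ≤ |t| / (2 * π) * (Cφ * G * (b - a)) + Cφ * (Cω * G) := by
          have e4 : |1 / 2 * (φ a * K₁₀ t x a + φ b * K₁₀ t x b)| ≤ Cφ * (Cω * G) := by
            rw [abs_mul]
            have := (abs_add_le (φ a * K₁₀ t x a) (φ b * K₁₀ t x b)).trans
              (add_le_add e2 e3)
            rw [abs_of_pos (by norm_num : (0:ℝ) < 1/2)]
            linarith
          exact add_le_add (hK₁b x) e4
  have hMnn : 0 ≤ M := le_trans (abs_nonneg _) (hKb 0)
  -- random variables
  set X : Fin m → Ω → ℝ := fun i ω' => K t (z i ω') with hXdef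
  set c : Fin m → ℝ := fun i => ∫ x, K t x ∂(F (μs i)) with hcdef
  set Y : Fin m → Ω → ℝ := fun i ω' => X i ω' - c i with hYdef
  have hXmeas : ∀ i, Measurable (X i) := fun i => hKcont.measurable.comp (hzmeas i)
  have hXmem : ∀ i, MemLp (X i) 2 P := fun i =>
    MemLp.of_bound (hXmeas i).aestronglyMeasurable M
      (Filter.Eventually.of_forall fun ω' => by
        rw [Real.norm_eq_abs]; exact hKb _)
  have hYmem : ∀ i, MemLp (Y i) 2 P := fun i => (hXmem i).sub (memLp_const (c i))
  have hcint : ∀ i, (∫ ω', X i ω' ∂P) = c i := by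
    intro i
    rw [hcdef]
    simp only
    rw [← hlaw i, integral_map (hzmeas i).aemeasurable]
    exact hKcont.aestronglyMeasurable
  -- rewrite em as a scalar multiple of a sum
  have hemfun : em t = (1 / (m:ℝ)) • ∑ i, Y i := by
    funext ω'
    rw [hem]
    simp only [Pi.smul_apply, Finset.sum_apply, smul_eq_mul]
    rfl
  have hpair : Set.Pairwise ↑(Finset.univ : Finset (Fin m))
      fun i j => IndepFun (Y i) (Y j) P := by
    intro i _ j _ hij
    exact (hindep.indepFun hij).comp (hKcont.measurable.sub measurable_const)
      (hKcont.measurable.sub measurable_const)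
  have hsum : variance (∑ i, Y i) P = ∑ i, variance (Y i) P :=
    IndepFun.variance_sum (fun i _ => hYmem i) hpair
  have hvar : variance (em t) P = (1 / (m:ℝ))^2 * ∑ i, variance (Y i) P := by
    rw [hemfun, variance_smul, hsum]
  -- bound each variance
  have hEY : ∀ i, variance (Y i) P ≤ M ^ 2 := by
    intro i
    have h1 : variance (Y i) P ≤ P[(Y i) ^ 2] :=
      variance_le_expectation_sq (hYmem i).aestronglyMeasurable
    have h2 : P[(Y i) ^ 2] = variance (X i) P := by
      rw [variance_eq_integral (hXmem i).aemeasurable]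
      congr 1
      funext ω'
      simp only [Pi.pow_apply, Pi.sub_apply, hYdef]
      rw [hcint i]
    have h3 : variance (X i) P ≤ P[(X i) ^ 2] :=
      variance_le_expectation_sq (hXmeas i).aestronglyMeasurable
    have h4 : P[(X i) ^ 2] ≤ M ^ 2 := by
      have h5 : ∀ ω', (X i ω') ^ 2 ≤ M ^ 2 := by
        intro ω'
        have h6 := hKb (z i ω')
        have h7 : (X i ω') ^ 2 = |X i ω'| ^ 2 := (sq_abs _).symm
        rw [h7]
        exact pow_le_pow_left₀ (abs_nonneg _) h6 2
      calc P[(X i) ^ 2] = ∫ ω', (X i ω') ^ 2 ∂P := rfl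
        _ ≤ ∫ _ω', M ^ 2 ∂P :=
            integral_mono (hXmem i).integrable_sq (integrable_const _) h5
        _ = M ^ 2 := by simp
    linarith
  have hm0 : (0:ℝ) < (m:ℝ) := by exact_mod_cast Nat.pos_of_ne_zero (by omega)
  have hsumle : ∑ i, variance (Y i) P ≤ (m:ℝ) * M ^ 2 := by
    calc ∑ i : Fin m, variance (Y i) P ≤ ∑ _i : Fin m, M ^ 2 :=
          Finset.sum_le_sum fun i _ => hEY i
      _ = (m:ℝ) * M ^ 2 := by simp [Finset.sum_const, Finset.card_univ, nsmul_eq_mul]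
  have hstep : variance (em t) P ≤ (1 / (m:ℝ)) * M ^ 2 := by
    rw [hvar]
    have : (1 / (m:ℝ))^2 * ((m:ℝ) * M ^ 2) = (1 / (m:ℝ)) * M ^ 2 := by
      field_simp
    calc (1 / (m:ℝ))^2 * ∑ i, variance (Y i) P
        ≤ (1 / (m:ℝ))^2 * ((m:ℝ) * M ^ 2) := by
          exact mul_le_mul_of_nonneg_left hsumle (by positivity)
      _ = (1 / (m:ℝ)) * M ^ 2 := this
  -- final arithmetic
  have key : M ^ 2 ≤ 2 * Cφ ^ 2 * G ^ 2 * ((π ^ 2)⁻¹ * (b - a) ^ 2 * t ^ 2 + Cω ^ 2) := by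
    set u : ℝ := |t| / (2 * π) with hudef
    have hu0 : 0 ≤ u := by positivity
    have hu2 : (π ^ 2)⁻¹ * t ^ 2 = 4 * u ^ 2 := by
      rw [hudef, div_pow, sq_abs, mul_pow]
      field_simp
      ring
    have hD0 : 0 ≤ b - a := by linarith
    have hrw : (π ^ 2)⁻¹ * (b - a) ^ 2 * t ^ 2 = 4 * u ^ 2 * (b - a) ^ 2 := by
      rw [← hu2]; ring
    rw [hMdef, hrw]
    nlinarith [sq_nonneg (u * (Cφ * G * (b - a)) - Cφ * (Cω * G)),
      sq_nonneg (u * (Cφ * G * (b - a))), sq_nonneg (Cφ * (Cω * G)),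
      mul_nonneg (mul_nonneg hu0 hCφ0) (mul_nonneg hGnn hD0),
      mul_nonneg hCφ0 (mul_nonneg hCω0 hGnn)]
  calc variance (em t) P ≤ (1 / (m:ℝ)) * M ^ 2 := hstep
    _ ≤ (1 / (m:ℝ)) * (2 * Cφ ^ 2 * G ^ 2 * ((π ^ 2)⁻¹ * (b - a) ^ 2 * t ^ 2 + Cω ^ 2)) :=
        mul_le_mul_of_nonneg_left key (by positivity)
    _ = 2 * Cφ ^ 2 * (1 / (m:ℝ)) * G ^ 2 * ((π ^ 2)⁻¹ * (b - a) ^ 2 * t ^ 2 + Cω ^ 2) := by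
        ring
end

section
/- Assume ∫ x² dP₀(x) < ∞ and let φ be continuous and of bounded variation on [a, b], with supremum norm ‖φ‖_∞ over [a, b]. Let μ₁,…,μ_m ∈ ℝ, let z₁,…,z_m be independent random variables with z_i distributed according to F_{μ_i}, and set e_{1,m}(t) = (1/m) Σ_{i=1}^m ( K₁(t, z_i) − E[K₁(t, z_i)] ). Then for every t ∈ ℝ and m ≥ 1, Var(e_{1,m}(t)) ≤ π^{−2}·(1/m)·t²·(b−a)²·‖φ‖_∞²·g(t)². -/
open MeasureTheory ProbabilityTheory Real

/-- Variance bound for the error of the estimator built from `K₁` alone (extension for a bounded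
null): `Var(e_{1,m}(t)) ≤ π⁻² (1/m) t² (b−a)² ‖φ‖_∞² g(t)²`. -/
theorem variance_bound_extension_K1
    (P₀ : Measure ℝ) [IsProbabilityMeasure P₀]
    (r₀ : ℝ → ℝ) (hr₀pos : ∀ t : ℝ, 0 < r₀ t)
    (hchar : ∀ t : ℝ,
      (∫ x, Complex.exp (Complex.I * (t : ℂ) * (x : ℂ)) ∂P₀) = ((r₀ t : ℝ) : ℂ))
    (hP₀2 : Integrable (fun x : ℝ => x ^ 2) P₀)
    (F : ℝ → Measure ℝ) (hF : ∀ μ : ℝ, F μ = Measure.map (fun x => x + μ) P₀)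
    (a b : ℝ) (hab : a < b)
    (φ : ℝ → ℝ) (hφcont : ContinuousOn φ (Set.Icc a b))
    (hφBV : BoundedVariationOn φ (Set.Icc a b))
    (K₁ : ℝ → ℝ → ℝ)
    (hK₁ : ∀ t x, K₁ t x =
      (t / (2 * π)) *
        ∫ y in a..b, φ y * ∫ s in (-1:ℝ)..1, Real.cos (t * s * (x - y)) / r₀ (t * s))
    (g : ℝ → ℝ) (hg : ∀ t, g t = ∫ s in (-1:ℝ)..1, 1 / r₀ (t * s))
    {Ω : Type*} [MeasurableSpace Ω] (P : Measure Ω) [IsProbabilityMeasure P]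
    (m : ℕ) (hm : 1 ≤ m)
    (μs : Fin m → ℝ) (z : Fin m → Ω → ℝ)
    (hzmeas : ∀ i, Measurable (z i))
    (hindep : iIndepFun z P)
    (hlaw : ∀ i, Measure.map (z i) P = F (μs i))
    (e1m : ℝ → Ω → ℝ)
    (he1m : ∀ t ω', e1m t ω' =
      (1 / (m : ℝ)) * ∑ i, (K₁ t (z i ω') - ∫ x, K₁ t x ∂(F (μs i)))) :
    ∀ t : ℝ,
      variance (e1m t) P ≤
        (π ^ 2)⁻¹ * (1 / (m : ℝ)) * t ^ 2 * (b - a) ^ 2 *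
          (⨆ y : Set.Icc a b, |φ ↑y|) ^ 2 * (g t) ^ 2 := by
  intro t
  have hπ : (0:ℝ) < π := Real.pi_pos
  have hr₀ne : ∀ u : ℝ, r₀ u ≠ 0 := fun u => (hr₀pos u).ne'
  -- continuity of r₀
  have hIcont : Continuous fun u : ℝ => ∫ x : ℝ, Complex.exp (Complex.I * (u:ℂ) * (x:ℂ)) ∂P₀ := by
    apply continuous_of_dominated (bound := fun _ => (1:ℝ))
    · intro u
      exact (Complex.continuous_exp.comp
        (continuous_const.mul Complex.continuous_ofReal)).aestronglyMeasurable
    · intro u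
      filter_upwards with x
      simp [Complex.norm_exp]
    · exact integrable_const 1
    · filter_upwards with x
      exact Complex.continuous_exp.comp
        ((continuous_const.mul Complex.continuous_ofReal).mul continuous_const)
  have hr₀cont : Continuous r₀ := by
    have : r₀ = fun u : ℝ => (∫ x : ℝ, Complex.exp (Complex.I * (u:ℂ) * (x:ℂ)) ∂P₀).re :=
      funext fun u => by rw [hchar u]; simp
    rw [this]
    exact Complex.continuous_re.comp hIcont
  -- the sup norm M
  set M := ⨆ y : Set.Icc a b, |φ (y:ℝ)| with hMdef
  obtain ⟨C, hC⟩ := (isCompact_Icc (a := a) (b := b)).exists_bound_of_continuousOn hφcont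
  have hbdd : BddAbove (Set.range fun y : Set.Icc a b => |φ (y:ℝ)|) := by
    refine ⟨C, ?_⟩
    rintro _ ⟨y, rfl⟩
    simpa [Real.norm_eq_abs] using hC y y.2
  have hMle : ∀ y ∈ Set.Icc a b, |φ y| ≤ M := fun y hy => le_ciSup hbdd ⟨y, hy⟩
  have hM0 : 0 ≤ M := le_trans (abs_nonneg _) (hMle a ⟨le_rfl, hab.le⟩)
  -- continuity and nonnegativity related to g
  have hct : Continuous fun s : ℝ => r₀ (t * s) :=
    hr₀cont.comp (continuous_const.mul continuous_id)
  have hinv_cont : Continuous fun s : ℝ => 1 / r₀ (t * s) :=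
    continuous_const.div hct fun s => hr₀ne _
  have hg0 : 0 ≤ g t := by
    rw [hg]
    exact intervalIntegral.integral_nonneg (by norm_num)
      (fun s _ => div_nonneg zero_le_one (hr₀pos _).le)
  -- joint continuity of the inner integral
  have hHcont : Continuous fun p : ℝ × ℝ =>
      ∫ s in (-1:ℝ)..1, Real.cos (t * s * (p.1 - p.2)) / r₀ (t * s) := by
    apply intervalIntegral.continuous_parametric_intervalIntegral_of_continuous'
    exact (Real.continuous_cos.comp
        ((continuous_const.mul continuous_snd).mul
          (continuous_fst.fst.sub continuous_fst.snd))).div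
      (hr₀cont.comp (continuous_const.mul continuous_snd))
      fun q => hr₀ne _
  have hH1 : ∀ y : ℝ, Continuous fun x : ℝ =>
      ∫ s in (-1:ℝ)..1, Real.cos (t * s * (x - y)) / r₀ (t * s) := by
    intro y
    have h := hHcont.comp (continuous_id.prodMk (continuous_const (y := y)))
    simpa [Function.comp_def] using h
  have hH2 : ∀ x : ℝ, Continuous fun y : ℝ =>
      ∫ s in (-1:ℝ)..1, Real.cos (t * s * (x - y)) / r₀ (t * s) := by
    intro x
    have h := hHcont.comp ((continuous_const (y := x)).prodMk continuous_id)
    simpa [Function.comp_def] using h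
  -- bound on the inner integral
  have hinner_cont : ∀ x y : ℝ,
      Continuous fun s : ℝ => Real.cos (t * s * (x - y)) / r₀ (t * s) := by
    intro x y
    exact (Real.continuous_cos.comp
        ((continuous_const.mul continuous_id).mul continuous_const)).div hct
      fun s => hr₀ne _
  have hinner_le : ∀ x y : ℝ,
      |∫ s in (-1:ℝ)..1, Real.cos (t * s * (x - y)) / r₀ (t * s)| ≤ g t := by
    intro x y
    calc |∫ s in (-1:ℝ)..1, Real.cos (t * s * (x - y)) / r₀ (t * s)|
        ≤ ∫ s in (-1:ℝ)..1, |Real.cos (t * s * (x - y)) / r₀ (t * s)| :=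
          intervalIntegral.abs_integral_le_integral_abs (by norm_num)
      _ ≤ ∫ s in (-1:ℝ)..1, 1 / r₀ (t * s) := by
          apply intervalIntegral.integral_mono_on (by norm_num)
            ((hinner_cont x y).abs.intervalIntegrable _ _)
            (hinv_cont.intervalIntegrable _ _)
          intro s _
          rw [abs_div, abs_of_pos (hr₀pos _)]
          exact (div_le_div_iff_of_pos_right (hr₀pos _)).mpr (Real.abs_cos_le_one _)
      _ = g t := (hg t).symm
  -- bound on K₁
  set B := |t| / (2 * π) * ((M * g t) * (b - a)) with hBdef
  have hB0 : 0 ≤ B := mul_nonneg (div_nonneg (abs_nonneg _) (by positivity)) (mul_nonneg (mul_nonneg hM0 hg0) (sub_pos.mpr hab).le)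
  have hK1b : ∀ x : ℝ, |K₁ t x| ≤ B := by
    intro x
    rw [hK₁, abs_mul]
    have h1 : |t / (2 * π)| = |t| / (2 * π) := by
      rw [abs_div, abs_of_pos (by positivity : (0:ℝ) < 2 * π)]
    rw [h1, hBdef]
    apply mul_le_mul_of_nonneg_left _ (by positivity)
    have := intervalIntegral.norm_integral_le_of_norm_le_const
      (a := a) (b := b) (C := M * g t)
      (f := fun y => φ y * ∫ s in (-1:ℝ)..1, Real.cos (t * s * (x - y)) / r₀ (t * s))
      ?_
    · rw [Real.norm_eq_abs] at this
      calc |∫ y in a..b, φ y * ∫ s in (-1:ℝ)..1, Real.cos (t * s * (x - y)) / r₀ (t * s)|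
          ≤ M * g t * |b - a| := this
        _ = M * g t * (b - a) := by rw [abs_of_pos (sub_pos.mpr hab)]
    · intro y hy
      have hy' : y ∈ Set.Icc a b := by
        rw [Set.uIoc_of_le hab.le] at hy
        exact Set.Ioc_subset_Icc_self hy
      rw [Real.norm_eq_abs, abs_mul]
      exact mul_le_mul (hMle y hy') (hinner_le x y) (abs_nonneg _) hM0
  -- continuity of K₁ t
  have hKcont : Continuous fun x => K₁ t x := by
    have hKeq : (fun x => K₁ t x) = fun x => (t / (2 * π)) *
        ∫ y in a..b, φ y * ∫ s in (-1:ℝ)..1, Real.cos (t * s * (x - y)) / r₀ (t * s) :=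
      funext fun x => hK₁ t x
    rw [hKeq]
    apply continuous_const.mul
    apply intervalIntegral.continuous_of_dominated_interval (bound := fun _ => M * g t)
    · intro x
      apply AEStronglyMeasurable.mul
      · exact (hφcont.aestronglyMeasurable measurableSet_Icc).mono_measure
          (Measure.restrict_mono
            (by rw [Set.uIoc_of_le hab.le]; exact Set.Ioc_subset_Icc_self) le_rfl)
      · exact (hH2 x).aestronglyMeasurable
    · intro x
      filter_upwards with y
      intro hy
      have hy' : y ∈ Set.Icc a b := by
        rw [Set.uIoc_of_le hab.le] at hy
        exact Set.Ioc_subset_Icc_self hy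
      rw [Real.norm_eq_abs, abs_mul]
      exact mul_le_mul (hMle y hy') (hinner_le x y) (abs_nonneg _) hM0
    · exact intervalIntegrable_const
    · filter_upwards with y
      intro _
      exact continuous_const.mul (hH1 y)
  -- probability part
  have hFprob : ∀ μ : ℝ, IsProbabilityMeasure (F μ) := fun μ => by
    rw [hF]
    exact Measure.isProbabilityMeasure_map (measurable_add_const μ).aemeasurable
  set EK : Fin m → ℝ := fun i => ∫ x, K₁ t x ∂(F (μs i)) with hEKdef
  have hEKb : ∀ i, |EK i| ≤ B := by
    intro i
    haveI := hFprob (μs i)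
    have := MeasureTheory.norm_integral_le_of_norm_le_const (μ := F (μs i))
      (f := fun x => K₁ t x) (C := B)
      (Filter.Eventually.of_forall fun x => by simpa [Real.norm_eq_abs] using hK1b x)
    simpa [Real.norm_eq_abs] using this
  set X : Fin m → Ω → ℝ := fun i ω => K₁ t (z i ω) - EK i with hXdef
  have hXb : ∀ i ω, |X i ω| ≤ 2 * B := by
    intro i ω
    calc |X i ω| ≤ |K₁ t (z i ω)| + |EK i| := abs_sub _ _
      _ ≤ B + B := add_le_add (hK1b _) (hEKb i)
      _ = 2 * B := by ring
  have hXmeas : ∀ i, Measurable (X i) := fun i =>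
    (hKcont.measurable.comp (hzmeas i)).sub measurable_const
  have hXmem : ∀ i, MemLp (X i) 2 P := fun i =>
    MemLp.of_bound (hXmeas i).aestronglyMeasurable (2 * B)
      (Filter.Eventually.of_forall fun ω => by
        simpa [Real.norm_eq_abs] using hXb i ω)
  have hXvar : ∀ i, variance (X i) P ≤ (2 * B) ^ 2 := by
    intro i
    refine (variance_le_expectation_sq (hXmem i).aestronglyMeasurable).trans ?_
    calc ∫ ω, (X i ^ 2) ω ∂P ≤ ∫ _ω, (2 * B) ^ 2 ∂P := by
          apply integral_mono ((hXmem i).integrable_sq) (integrable_const _)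
          intro ω
          have : X i ω ^ 2 = |X i ω| ^ 2 := (sq_abs _).symm
          calc (X i ^ 2) ω = X i ω ^ 2 := rfl
            _ = |X i ω| ^ 2 := (sq_abs _).symm
            _ ≤ (2 * B) ^ 2 := by
                apply pow_le_pow_left₀ (abs_nonneg _) (hXb i ω)
      _ = (2 * B) ^ 2 := by simp
  have hXindep : Set.Pairwise ↑(Finset.univ : Finset (Fin m))
      fun i j => IndepFun (X i) (X j) P := by
    intro i _ j _ hij
    have h1 : IndepFun (z i) (z j) P := hindep.indepFun hij
    exact h1.comp (hKcont.measurable.sub measurable_const)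
      (hKcont.measurable.sub measurable_const)
  have hsum : variance (∑ i, X i) P = ∑ i, variance (X i) P :=
    IndepFun.variance_sum (fun i _ => hXmem i) hXindep
  have he : e1m t = (1 / (m : ℝ)) • (∑ i, X i) := by
    funext ω
    rw [he1m]
    simp [Finset.sum_apply, hXdef]
    exact Or.inl rfl
  have hmne : (m : ℝ) ≠ 0 := by positivity
  calc variance (e1m t) P
      = (1 / (m : ℝ)) ^ 2 * variance (∑ i, X i) P := by rw [he, variance_smul]
    _ = (1 / (m : ℝ)) ^ 2 * ∑ i, variance (X i) P := by rw [hsum]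
    _ ≤ (1 / (m : ℝ)) ^ 2 * ((m : ℝ) * (2 * B) ^ 2) := by
        apply mul_le_mul_of_nonneg_left _ (by positivity)
        calc ∑ i, variance (X i) P ≤ Finset.univ.card • (2 * B) ^ 2 :=
              Finset.sum_le_card_nsmul _ _ _ fun i _ => hXvar i
          _ = (m : ℝ) * (2 * B) ^ 2 := by
              simp [nsmul_eq_mul]
    _ = (π ^ 2)⁻¹ * (1 / (m : ℝ)) * t ^ 2 * (b - a) ^ 2 * M ^ 2 * (g t) ^ 2 := by
        rcases abs_choice t with h | h <;> rw [hBdef, h] <;> field_simp <;> ring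
end

section
/- Let X₁,…,X_m be i.i.d. real random variables with common law P₀ satisfying E[X₁²] < ∞, let μ₁,…,μ_m ∈ ℝ with (1/m) Σ_{i=1}^m |μ_i| ≤ ρ, and set z_i = μ_i + X_i. Fix c₀ ∈ ℝ, c₁ > 0 and c₂ < c₃, and define 𝔾_m(v, y) = (1/m) Σ_{i=1}^m ( cos(v·(z_i − y) − c₀) − E[cos(v·(z_i − y) − c₀)] ). Let Δ₁ > 0, Δ₂ > 0 and κ₁ > κ₂ > 0, set R₁ = 2·E[|X₁|] + 2·max(|c₂|, |c₃|) + 2ρ, and assume κ₂/max(Δ₁, Δ₂) − (2c₁ + R₁) > 0. Then P( sup_{(v,y) ∈ [0,c₁]×[c₂,c₃]} |𝔾_m(v, y)| ≥ κ₁ ) ≤ 2·(c₁/Δ₁ + 1)·((c₃−c₂)/Δ₂ + 1)·exp(−m·(κ₁−κ₂)²/2) + Var(|X₁|) / ( m·( κ₂/max(Δ₁, Δ₂) − (2c₁ + R₁) )² ). -/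
open MeasureTheory ProbabilityTheory Real


open MeasureTheory ProbabilityTheory Real

lemma aux_hoeffding_core {θ : ℝ} (h0 : 0 ≤ θ) (h1 : θ ≤ 1) (l : ℝ) :
    (1 - θ) * exp (-l) + θ * exp l ≤ exp (l ^ 2 / 2 + (2 * θ - 1) * l) := by
  set h : ℝ → ℝ := fun x => (1 - θ) * exp (-x) + θ * exp x with hh
  have hpos : ∀ x, 0 < h x := by
    intro x
    have hm : 0 < min (exp (-x)) (exp x) := lt_min (exp_pos _) (exp_pos _)
    have h2 := min_le_left (exp (-x)) (exp x)
    have h3 := min_le_right (exp (-x)) (exp x)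
    simp only [hh]
    nlinarith
  set h' : ℝ → ℝ := fun x => -((1 - θ) * exp (-x)) + θ * exp x with hh'
  have e1 : ∀ x : ℝ, HasDerivAt (fun y : ℝ => exp (-y)) (-exp (-x)) x := by
    intro x
    have := (Real.hasDerivAt_exp (-x)).comp x (hasDerivAt_neg x)
    exact this.congr_deriv (by ring)
  have hd : ∀ x, HasDerivAt h (h' x) x := by
    intro x
    have := ((e1 x).const_mul (1 - θ)).add ((Real.hasDerivAt_exp x).const_mul θ)
    refine this.congr_deriv ?_
    ring
  have hd' : ∀ x, HasDerivAt h' (h x) x := by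
    intro x
    have := (((e1 x).const_mul (1 - θ)).neg).add ((Real.hasDerivAt_exp x).const_mul θ)
    refine this.congr_deriv ?_
    ring
  set F : ℝ → ℝ := fun x => x ^ 2 / 2 + (2 * θ - 1) * x - Real.log (h x) with hF
  set F1 : ℝ → ℝ := fun x => x + (2 * θ - 1) - h' x / h x with hF1
  have hdF : ∀ x, HasDerivAt F (F1 x) x := by
    intro x
    have d1 : HasDerivAt (fun y : ℝ => y ^ 2 / 2 + (2 * θ - 1) * y) (x + (2 * θ - 1)) x := by
      have := ((hasDerivAt_pow 2 x).div_const 2).add ((hasDerivAt_id x).const_mul (2 * θ - 1))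
      refine this.congr_deriv ?_
      ring
    exact d1.sub ((hd x).log (hpos x).ne')
  have hdF1 : ∀ x, HasDerivAt F1 ((h' x / h x) ^ 2) x := by
    intro x
    have d2 : HasDerivAt (fun y => h' y / h y)
        ((h x * h x - h' x * h' x) / (h x) ^ 2) x := (hd' x).div (hd x) (hpos x).ne'
    have := ((hasDerivAt_id x).add_const (2 * θ - 1)).sub d2
    refine this.congr_deriv ?_
    have := (hpos x).ne'
    field_simp
    ring
  have hF1mono : Monotone F1 := by
    apply monotone_of_deriv_nonneg
    · exact fun x => (hdF1 x).differentiableAt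
    · intro x
      rw [(hdF1 x).deriv]
      positivity
  have hF10 : F1 0 = 0 := by
    simp only [hF1, hh, hh']
    norm_num
    ring
  have hF0 : F 0 = 0 := by
    simp only [hF, hh]
    norm_num
  have hFnonneg : 0 ≤ F l := by
    have cont1 : ∀ s : Set ℝ, ContinuousOn F s :=
      fun s x _ => ((hdF x).differentiableAt.continuousAt).continuousWithinAt
    have diff1 : ∀ s : Set ℝ, DifferentiableOn ℝ F s :=
      fun s x _ => (hdF x).differentiableAt.differentiableWithinAt
    rcases le_or_gt 0 l with hl | hl
    · have hmono : MonotoneOn F (Set.Ici 0) := by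
        refine monotoneOn_of_deriv_nonneg (convex_Ici 0) (cont1 _) (diff1 _) ?_
        intro x hx
        rw [(hdF x).deriv]
        rw [interior_Ici] at hx
        have h5 : F1 0 ≤ F1 x := hF1mono (le_of_lt hx)
        linarith [hF10 ▸ h5]
      have h6 := hmono (Set.self_mem_Ici) (Set.mem_Ici.2 hl) hl
      linarith [hF0 ▸ h6]
    · have hanti : AntitoneOn F (Set.Iic 0) := by
        refine antitoneOn_of_deriv_nonpos (convex_Iic 0) (cont1 _) (diff1 _) ?_
        intro x hx
        rw [(hdF x).deriv]
        rw [interior_Iic] at hx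
        have h5 : F1 x ≤ F1 0 := hF1mono (le_of_lt hx)
        linarith [hF10 ▸ h5]
      have h6 := hanti (Set.mem_Iic.2 hl.le) (Set.self_mem_Iic) hl.le
      linarith [hF0 ▸ h6]
  have hlog : Real.log (h l) ≤ l ^ 2 / 2 + (2 * θ - 1) * l := by
    simp only [hF] at hFnonneg
    linarith
  calc h l = exp (Real.log (h l)) := (Real.exp_log (hpos l)).symm
    _ ≤ exp (l ^ 2 / 2 + (2 * θ - 1) * l) := Real.exp_le_exp.2 hlog


open MeasureTheory ProbabilityTheory Real

lemma aux_integrable_of_bounded {Ω : Type*} [MeasurableSpace Ω] {μ : Measure Ω}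
    [IsFiniteMeasure μ] {f : Ω → ℝ} (hf : AEStronglyMeasurable f μ) {C : ℝ}
    (hC : ∀ ω, |f ω| ≤ C) : Integrable f μ :=
  (integrable_const C).mono' hf (Filter.Eventually.of_forall fun ω => by
    simpa [Real.norm_eq_abs] using hC ω)

lemma aux_mgf_bound {Ω : Type*} [MeasurableSpace Ω] (μ : Measure Ω) [IsProbabilityMeasure μ]
    (W : Ω → ℝ) (hW : Measurable W) (hb : ∀ ω, |W ω| ≤ 1) (l : ℝ) :
    ∫ ω, exp (l * (W ω - ∫ ω', W ω' ∂μ)) ∂μ ≤ exp (l ^ 2 / 2) := by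
  have intW : Integrable W μ := aux_integrable_of_bounded hW.aestronglyMeasurable hb
  set c : ℝ := ∫ ω', W ω' ∂μ with hc
  have hcabs : |c| ≤ 1 := by
    have h1 : |c| ≤ ∫ ω, |W ω| ∂μ := by
      simpa [Real.norm_eq_abs] using norm_integral_le_integral_norm (μ := μ) W
    have h2 : ∫ ω, |W ω| ∂μ ≤ ∫ _ω, (1 : ℝ) ∂μ :=
      integral_mono intW.abs (integrable_const 1) hb
    simpa using h1.trans h2
  have hpt : ∀ ω, exp (l * W ω) ≤ (1 - W ω) / 2 * exp (-l) + (1 + W ω) / 2 * exp l := by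
    intro ω
    have hw1 : -1 ≤ W ω := neg_le_of_abs_le (hb ω)
    have hw2 : W ω ≤ 1 := le_of_abs_le (hb ω)
    have ha : (0 : ℝ) ≤ (1 - W ω) / 2 := by linarith
    have ha' : (0 : ℝ) ≤ (1 + W ω) / 2 := by linarith
    have hab : (1 - W ω) / 2 + (1 + W ω) / 2 = 1 := by ring
    have := convexOn_exp.2 (Set.mem_univ (-l)) (Set.mem_univ l) ha ha' hab
    simp only [smul_eq_mul] at this
    have harg : (1 - W ω) / 2 * (-l) + (1 + W ω) / 2 * l = l * W ω := by ring
    rwa [harg] at this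
  have int1 : Integrable (fun ω => exp (l * W ω)) μ := by
    refine aux_integrable_of_bounded ((hW.const_mul l).exp).aestronglyMeasurable
      (C := exp |l|) fun ω => ?_
    rw [abs_of_nonneg (exp_pos _).le]
    apply exp_le_exp.2
    calc l * W ω ≤ |l * W ω| := le_abs_self _
      _ = |l| * |W ω| := abs_mul _ _
      _ ≤ |l| * 1 := by gcongr; exact hb ω
      _ = |l| := mul_one _
  have int2 : Integrable (fun ω => (1 - W ω) / 2 * exp (-l) + (1 + W ω) / 2 * exp l) μ := by
    apply Integrable.add
    · exact (((integrable_const 1).sub intW).div_const 2).mul_const _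
    · exact (((integrable_const 1).add intW).div_const 2).mul_const _
  have hint : ∫ ω, exp (l * W ω) ∂μ ≤ (1 - c) / 2 * exp (-l) + (1 + c) / 2 * exp l := by
    have := integral_mono int1 int2 hpt
    have heq : ∫ ω, ((1 - W ω) / 2 * exp (-l) + (1 + W ω) / 2 * exp l) ∂μ
        = (1 - c) / 2 * exp (-l) + (1 + c) / 2 * exp l := by
      have hre : (fun ω => (1 - W ω) / 2 * exp (-l) + (1 + W ω) / 2 * exp l)
          = fun ω => (exp (-l) / 2 + exp l / 2) + (exp l / 2 - exp (-l) / 2) * W ω := by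
        funext ω; ring
      rw [hre, integral_add (integrable_const _) (intW.const_mul _), integral_const,
        integral_const_mul]
      simp [measure_univ]
      ring
    rwa [heq] at this
  have hcore : (1 - c) / 2 * exp (-l) + (1 + c) / 2 * exp l ≤ exp (l ^ 2 / 2 + c * l) := by
    have h0 : 0 ≤ (1 + c) / 2 := by nlinarith [neg_le_of_abs_le hcabs]
    have h1 : (1 + c) / 2 ≤ 1 := by nlinarith [le_of_abs_le hcabs]
    have := aux_hoeffding_core h0 h1 l
    have e1 : 1 - (1 + c) / 2 = (1 - c) / 2 := by ring
    have e2 : 2 * ((1 + c) / 2) - 1 = c := by ring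
    rw [e1, e2] at this
    exact this
  have hsplit : (fun ω => exp (l * (W ω - c))) = fun ω => exp (-(l * c)) * exp (l * W ω) := by
    funext ω
    rw [← Real.exp_add]
    ring_nf
  rw [hsplit, integral_const_mul]
  calc exp (-(l * c)) * ∫ ω, exp (l * W ω) ∂μ
      ≤ exp (-(l * c)) * exp (l ^ 2 / 2 + c * l) := by
        apply mul_le_mul_of_nonneg_left (hint.trans hcore) (exp_pos _).le
    _ = exp (l ^ 2 / 2) := by rw [← Real.exp_add]; ring_nf


open MeasureTheory ProbabilityTheory Real

lemma aux_chernoff_one {Ω : Type*} [MeasurableSpace Ω] (μ : Measure Ω) [IsProbabilityMeasure μ]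
    {m : ℕ} (W : Fin m → Ω → ℝ) (hmeas : ∀ i, Measurable (W i)) (hb : ∀ i ω, |W i ω| ≤ 1)
    (hind : iIndepFun W μ) {t : ℝ} (ht : 0 < t) :
    μ {ω | (m : ℝ) * t ≤ ∑ i, (W i ω - ∫ ω', W i ω' ∂μ)} ≤
      ENNReal.ofReal (Real.exp (-((m : ℝ) * t ^ 2) / 2)) := by
  set Y : Fin m → Ω → ℝ := fun i ω => W i ω - ∫ ω', W i ω' ∂μ with hY
  have hYmeas : ∀ i, Measurable (Y i) := fun i => (hmeas i).sub measurable_const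
  have hYind : iIndepFun Y μ := by
    have := hind.comp (fun i => fun x : ℝ => x - ∫ ω', W i ω' ∂μ)
      (fun i => measurable_id.sub measurable_const)
    exact this
  have hYbdd : ∀ i ω, |Y i ω| ≤ 2 := by
    intro i ω
    have h1 : |∫ ω', W i ω' ∂μ| ≤ 1 := by
      have h2 : |∫ ω', W i ω' ∂μ| ≤ ∫ ω', |W i ω'| ∂μ := by
        simpa [Real.norm_eq_abs] using norm_integral_le_integral_norm (μ := μ) (W i)
      have h3 : ∫ ω', |W i ω'| ∂μ ≤ ∫ _ω', (1 : ℝ) ∂μ :=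
        integral_mono ((aux_integrable_of_bounded (hmeas i).aestronglyMeasurable (hb i)).abs)
          (integrable_const 1) (hb i)
      simpa using h2.trans h3
    calc |Y i ω| ≤ |W i ω| + |∫ ω', W i ω' ∂μ| := abs_sub _ _
      _ ≤ 1 + 1 := add_le_add (hb i ω) h1
      _ = 2 := by norm_num
  set S : Ω → ℝ := ∑ i, Y i with hS
  have hSapp : ∀ ω, S ω = ∑ i, Y i ω := fun ω => by simp [hS]
  have hSmeas : Measurable S := by
    have : Measurable fun ω => ∑ i, Y i ω := Finset.measurable_sum _ (fun i _ => hYmeas i)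
    simpa [funext hSapp] using this
  have hSbdd : ∀ ω, |S ω| ≤ 2 * m := by
    intro ω
    rw [hSapp]
    calc |∑ i, Y i ω| ≤ ∑ i, |Y i ω| := Finset.abs_sum_le_sum_abs _ _
      _ ≤ ∑ _i : Fin m, (2 : ℝ) := Finset.sum_le_sum fun i _ => hYbdd i ω
      _ = 2 * m := by simp [mul_comm]
  have h_int : Integrable (fun ω => exp (t * S ω)) μ := by
    refine aux_integrable_of_bounded ((hSmeas.const_mul t).exp).aestronglyMeasurable
      (C := exp (|t| * (2 * m))) fun ω => ?_
    rw [abs_of_nonneg (exp_pos _).le]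
    apply exp_le_exp.2
    calc t * S ω ≤ |t * S ω| := le_abs_self _
      _ = |t| * |S ω| := abs_mul _ _
      _ ≤ |t| * (2 * m) := by gcongr; exact hSbdd ω
  have hchern := measure_ge_le_exp_mul_mgf (μ := μ) (X := S) ((m : ℝ) * t) ht.le h_int
  have hmgf : mgf S μ t ≤ exp ((m : ℝ) * t ^ 2 / 2) := by
    rw [hS, hYind.mgf_sum hYmeas]
    calc ∏ i : Fin m, mgf (Y i) μ t ≤ ∏ _i : Fin m, exp (t ^ 2 / 2) := by
          apply Finset.prod_le_prod (fun i _ => mgf_nonneg)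
          intro i _
          exact aux_mgf_bound μ (W i) (hmeas i) (hb i) t
      _ = exp (t ^ 2 / 2) ^ (m : ℕ) := by simp
      _ = exp ((m : ℝ) * t ^ 2 / 2) := by
          rw [← Real.exp_nat_mul]; ring_nf
  have hfinal : (μ {ω | (m : ℝ) * t ≤ S ω}).toReal ≤ exp (-((m : ℝ) * t ^ 2) / 2) := by
    calc (μ {ω | (m : ℝ) * t ≤ S ω}).toReal ≤ exp (-t * ((m : ℝ) * t)) * mgf S μ t := hchern
      _ ≤ exp (-t * ((m : ℝ) * t)) * exp ((m : ℝ) * t ^ 2 / 2) := by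
          apply mul_le_mul_of_nonneg_left hmgf (exp_pos _).le
      _ = exp (-((m : ℝ) * t ^ 2) / 2) := by rw [← Real.exp_add]; ring_nf
  have hset : {ω | (m : ℝ) * t ≤ ∑ i, (W i ω - ∫ ω', W i ω' ∂μ)} = {ω | (m : ℝ) * t ≤ S ω} := by
    ext ω; simp [hSapp, hY]
  rw [hset]
  have hne : μ {ω | (m : ℝ) * t ≤ S ω} ≠ ⊤ := measure_ne_top _ _
  rw [← ENNReal.ofReal_toReal hne]
  exact ENNReal.ofReal_le_ofReal hfinal

lemma aux_hoeffding {Ω : Type*} [MeasurableSpace Ω] (μ : Measure Ω) [IsProbabilityMeasure μ]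
    {m : ℕ} (W : Fin m → Ω → ℝ) (hmeas : ∀ i, Measurable (W i)) (hb : ∀ i ω, |W i ω| ≤ 1)
    (hind : iIndepFun W μ) {t : ℝ} (ht : 0 < t) :
    μ {ω | (m : ℝ) * t ≤ |∑ i, (W i ω - ∫ ω', W i ω' ∂μ)|} ≤
      ENNReal.ofReal (2 * Real.exp (-((m : ℝ) * t ^ 2) / 2)) := by
  set W' : Fin m → Ω → ℝ := fun i ω => -(W i ω) with hW'
  have hsub : {ω | (m : ℝ) * t ≤ |∑ i, (W i ω - ∫ ω', W i ω' ∂μ)|} ⊆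
      {ω | (m : ℝ) * t ≤ ∑ i, (W i ω - ∫ ω', W i ω' ∂μ)} ∪
      {ω | (m : ℝ) * t ≤ ∑ i, (W' i ω - ∫ ω', W' i ω' ∂μ)} := by
    intro ω hω
    simp only [Set.mem_setOf_eq] at hω
    rcases abs_cases (∑ i, (W i ω - ∫ ω', W i ω' ∂μ)) with ⟨he, _⟩ | ⟨he, _⟩
    · left; exact Set.mem_setOf_eq ▸ (he ▸ hω)
    · right
      simp only [Set.mem_setOf_eq, hW', integral_neg]
      have : ∑ i, (-W i ω - -∫ ω', W i ω' ∂μ) = -∑ i, (W i ω - ∫ ω', W i ω' ∂μ) := by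
        rw [← Finset.sum_neg_distrib]
        congr 1; funext i; ring
      rw [this]
      linarith [he ▸ hω]
  have h1 := aux_chernoff_one μ W hmeas hb hind ht
  have h2 : μ {ω | (m : ℝ) * t ≤ ∑ i, (W' i ω - ∫ ω', W' i ω' ∂μ)} ≤
      ENNReal.ofReal (Real.exp (-((m : ℝ) * t ^ 2) / 2)) := by
    apply aux_chernoff_one μ W' (fun i => (hmeas i).neg) (fun i ω => by simp [hW', hb i ω])
      (hind.comp (fun i => fun x : ℝ => -x) (fun i => measurable_neg)) ht
  calc μ _ ≤ μ ({ω | (m : ℝ) * t ≤ ∑ i, (W i ω - ∫ ω', W i ω' ∂μ)} ∪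
      {ω | (m : ℝ) * t ≤ ∑ i, (W' i ω - ∫ ω', W' i ω' ∂μ)}) := measure_mono hsub
    _ ≤ _ + _ := measure_union_le _ _
    _ ≤ ENNReal.ofReal (Real.exp (-((m : ℝ) * t ^ 2) / 2)) +
        ENNReal.ofReal (Real.exp (-((m : ℝ) * t ^ 2) / 2)) := add_le_add h1 h2
    _ = ENNReal.ofReal (2 * Real.exp (-((m : ℝ) * t ^ 2) / 2)) := by
        rw [← ENNReal.ofReal_add (exp_pos _).le (exp_pos _).le]
        ring_nf


open MeasureTheory ProbabilityTheory Real

lemma aux_variance_comp {Ω : Type*} [MeasurableSpace Ω] (μ : Measure Ω)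
    (X : Ω → ℝ) (hX : Measurable X) (f : ℝ → ℝ) (hf : Measurable f) :
    variance (fun ω => f (X ω)) μ = variance f (Measure.map X μ) := by
  rw [variance, variance, evariance, evariance]
  rw [integral_map hX.aemeasurable hf.aestronglyMeasurable]
  rw [lintegral_map ?_ hX]
  exact (((hf.sub measurable_const).nnnorm).coe_nnreal_ennreal).pow_const 2


open MeasureTheory ProbabilityTheory Real

lemma aux_cos_lip (p q : ℝ) : |Real.cos p - Real.cos q| ≤ |p - q| := by
  rw [Real.cos_sub_cos]
  have h1 : |Real.sin ((p + q) / 2)| ≤ 1 :=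
    abs_le.2 ⟨Real.neg_one_le_sin _, Real.sin_le_one _⟩
  have h2 : |Real.sin ((p - q) / 2)| ≤ |(p - q) / 2| := Real.abs_sin_le_abs
  calc |-2 * Real.sin ((p + q) / 2) * Real.sin ((p - q) / 2)|
      = 2 * |Real.sin ((p + q) / 2)| * |Real.sin ((p - q) / 2)| := by
        rw [abs_mul, abs_mul]; norm_num
    _ ≤ 2 * 1 * |(p - q) / 2| := by
        apply mul_le_mul _ h2 (abs_nonneg _) (by norm_num)
        nlinarith [abs_nonneg (Real.sin ((p + q) / 2))]
    _ = |p - q| := by rw [abs_div]; simp; ring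

lemma aux_cos_diff (c₀ a v v' y y' : ℝ) :
    |Real.cos (v * (a - y) - c₀) - Real.cos (v' * (a - y') - c₀)| ≤
      |v - v'| * (|a| + |y|) + |v'| * |y - y'| := by
  calc |Real.cos (v * (a - y) - c₀) - Real.cos (v' * (a - y') - c₀)|
      ≤ |(v * (a - y) - c₀) - (v' * (a - y') - c₀)| := aux_cos_lip _ _
    _ = |(v - v') * (a - y) + v' * (y' - y)| := by ring_nf
    _ ≤ |(v - v') * (a - y)| + |v' * (y' - y)| := abs_add_le _ _
    _ = |v - v'| * |a - y| + |v'| * |y - y'| := by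
        rw [abs_mul, abs_mul, abs_sub_comm y' y]
    _ ≤ |v - v'| * (|a| + |y|) + |v'| * |y - y'| := by
        have h1 : |a - y| ≤ |a| + |y| := abs_sub _ _
        nlinarith [abs_nonneg (v - v'), abs_nonneg (y - y'), abs_nonneg v']

set_option maxHeartbeats 1000000 in
/-- Concentration of the empirical process `𝔾_m(v, y) = (1/m) Σᵢ (cos(v(zᵢ−y)−c₀) − E[⋯])` over
`(v, y) ∈ [0, c₁] × [c₂, c₃]`, for `z_i = μ_i + X_i` with `X_i` i.i.d. `P₀` having a finite
second moment. -/
theorem concentration_empirical_process_case1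
    {Ω : Type*} [MeasurableSpace Ω] (P : Measure Ω) [IsProbabilityMeasure P]
    (P₀ : Measure ℝ) [IsProbabilityMeasure P₀]
    (hP₀2 : Integrable (fun x : ℝ => x ^ 2) P₀)
    (m : ℕ) (hm : 0 < m)
    (X : Fin m → Ω → ℝ) (hXmeas : ∀ i, Measurable (X i))
    (hindep : iIndepFun X P)
    (hXlaw : ∀ i, Measure.map (X i) P = P₀)
    (μs : Fin m → ℝ) (ρ : ℝ) (hρ : (1 / (m : ℝ)) * ∑ i, |μs i| ≤ ρ)
    (z : Fin m → Ω → ℝ) (hz : ∀ i ω', z i ω' = μs i + X i ω')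
    (c₀ c₁ c₂ c₃ : ℝ) (hc₁ : 0 < c₁) (hc : c₂ < c₃)
    (G : Ω → ℝ → ℝ → ℝ)
    (hG : ∀ ω' v y, G ω' v y = (1 / (m : ℝ)) *
      ∑ i, (Real.cos (v * (z i ω' - y) - c₀) -
        ∫ ω'', Real.cos (v * (z i ω'' - y) - c₀) ∂P))
    (Δ₁ Δ₂ κ₁ κ₂ : ℝ) (hΔ₁ : 0 < Δ₁) (hΔ₂ : 0 < Δ₂) (hκ : κ₂ < κ₁) (hκ₂ : 0 < κ₂)
    (R₁ : ℝ) (hR₁ : R₁ = 2 * (∫ x, |x| ∂P₀) + 2 * max |c₂| |c₃| + 2 * ρ)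
    (hpos : 0 < κ₂ / max Δ₁ Δ₂ - (2 * c₁ + R₁)) :
    P {ω' | κ₁ ≤ ⨆ v ∈ Set.Icc (0:ℝ) c₁, ⨆ y ∈ Set.Icc c₂ c₃, |G ω' v y|} ≤
      ENNReal.ofReal
        (2 * (c₁ / Δ₁ + 1) * ((c₃ - c₂) / Δ₂ + 1) *
            Real.exp (-((m : ℝ) * (κ₁ - κ₂) ^ 2) / 2) +
          variance (fun x : ℝ => |x|) P₀ /
            ((m : ℝ) * (κ₂ / max Δ₁ Δ₂ - (2 * c₁ + R₁)) ^ 2)) := by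
  classical
  have hmR : (0:ℝ) < m := Nat.cast_pos.2 hm
  set M : ℝ := max |c₂| |c₃| with hM
  set D : ℝ := max Δ₁ Δ₂ with hD
  have hD0 : 0 < D := lt_of_lt_of_le hΔ₁ (le_max_left _ _)
  set EX : ℝ := ∫ x, |x| ∂P₀ with hEX
  set s : ℝ := κ₂ / D - (2 * c₁ + R₁) with hs
  have hs0 : 0 < s := hpos
  set t : ℝ := κ₁ - κ₂ with htdef
  have ht0 : 0 < t := sub_pos.2 hκ
  have hM0 : 0 ≤ M := le_trans (abs_nonneg c₂) (le_max_left _ _)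
  have hEX0 : 0 ≤ EX := integral_nonneg fun x => abs_nonneg x
  have hρ0 : 0 ≤ ρ := le_trans (by positivity) hρ
  have habs_int : Integrable (fun x : ℝ => |x|) P₀ := by
    refine (hP₀2.add (integrable_const 1)).mono' measurable_abs.aestronglyMeasurable
      (Filter.Eventually.of_forall fun x => ?_)
    simp only [Pi.add_apply, Real.norm_eq_abs, abs_abs]
    nlinarith [sq_nonneg (|x| - 1), sq_abs x]
  have hzmeas : ∀ i, Measurable (z i) := by
    intro i
    have hzi : z i = fun ω' => μs i + X i ω' := funext (hz i)
    rw [hzi]; exact measurable_const.add (hXmeas i)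
  have hXabs_eq : ∀ i, ∫ ω', |X i ω'| ∂P = EX := by
    intro i
    rw [hEX, ← hXlaw i, integral_map (hXmeas i).aemeasurable measurable_abs.aestronglyMeasurable]
  have hXabs_int : ∀ i, Integrable (fun ω' => |X i ω'|) P := by
    intro i
    have h1 : Integrable (fun x : ℝ => |x|) (Measure.map (X i) P) := by
      rw [hXlaw i]; exact habs_int
    exact (integrable_map_measure measurable_abs.aestronglyMeasurable
      (hXmeas i).aemeasurable).1 h1
  have hXsq_int : ∀ i, Integrable (fun ω' => X i ω' ^ 2) P := by
    intro i
    have h1 : Integrable (fun x : ℝ => x ^ 2) (Measure.map (X i) P) := by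
      rw [hXlaw i]; exact hP₀2
    exact (integrable_map_measure (measurable_id.pow_const 2).aestronglyMeasurable
      (hXmeas i).aemeasurable).1 h1
  have hXabs_mem2 : ∀ i, MemLp (fun ω' => |X i ω'|) 2 P := by
    intro i
    refine (memLp_two_iff_integrable_sq (hXmeas i).abs.aestronglyMeasurable).2 ?_
    simpa [sq_abs] using hXsq_int i
  have hcosmeas : ∀ i (v y : ℝ), Measurable (fun ω'' => Real.cos (v * (z i ω'' - y) - c₀)) :=
    fun i v y => Real.measurable_cos.comp ((((hzmeas i).sub_const y).const_mul v).sub_const c₀)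
  have hcosint : ∀ i (v y : ℝ), Integrable (fun ω'' => Real.cos (v * (z i ω'' - y) - c₀)) P :=
    fun i v y => aux_integrable_of_bounded (hcosmeas i v y).aestronglyMeasurable
      (fun ω => Real.abs_cos_le_one _)
  have hyM : ∀ y ∈ Set.Icc c₂ c₃, |y| ≤ M := by
    intro y hy
    rw [abs_le]
    refine ⟨?_, ?_⟩
    · calc -M ≤ -|c₂| := neg_le_neg (le_max_left _ _)
        _ ≤ c₂ := neg_abs_le _
        _ ≤ y := hy.1
    · calc y ≤ c₃ := hy.2
        _ ≤ |c₃| := le_abs_self _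
        _ ≤ M := le_max_right _ _
  clear_value M D EX s t
  set N₁ : ℕ := ⌊c₁ / Δ₁⌋₊ with hN₁
  set N₂ : ℕ := ⌊(c₃ - c₂) / Δ₂⌋₊ with hN₂
  set vv : ℕ → ℝ := fun j => j * Δ₁ with hvv
  set yy : ℕ → ℝ := fun k => c₂ + k * Δ₂ with hyy
  set grid : Finset (ℕ × ℕ) := Finset.range (N₁ + 1) ×ˢ Finset.range (N₂ + 1) with hgrid
  clear_value N₁ N₂ vv yy grid
  have hgridne : grid.Nonempty := by
    rw [hgrid]
    exact Finset.Nonempty.product ⟨0, Finset.mem_range.2 (Nat.succ_pos _)⟩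
      ⟨0, Finset.mem_range.2 (Nat.succ_pos _)⟩
  set A : ℕ × ℕ → Set Ω := fun p => {ω' | t ≤ |G ω' (vv p.1) (yy p.2)|} with hA
  set T : Ω → ℝ := fun ω' => ∑ i, |X i ω'| with hT
  set B : Set Ω := {ω' | (m:ℝ) * s ≤ |T ω' - ∫ ω'', T ω'' ∂P|} with hB
  clear_value A T B
  have hTint_eq : ∫ ω'', T ω'' ∂P = m * EX := by
    simp only [hT]
    rw [integral_finset_sum _ (fun i _ => hXabs_int i)]
    simp [hXabs_eq, Finset.card_univ]
  -- Chebyshev bound on B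
  have hBbound : P B ≤ ENNReal.ofReal (variance (fun x : ℝ => |x|) P₀ / ((m:ℝ) * s ^ 2)) := by
    have hT2 : MemLp T 2 P := by
      rw [hT]; exact memLp_finset_sum _ (fun i _ => hXabs_mem2 i)
    have hch := meas_ge_le_variance_div_sq (μ := P) hT2 (c := (m:ℝ) * s) (by positivity)
    rw [hB]
    have hvar : variance T P = m * variance (fun x : ℝ => |x|) P₀ := by
      have hTfun : T = ∑ i, (fun ω' => |X i ω'|) := by
        funext ω'; simp [hT]
      have h1 : variance T P = ∑ i : Fin m, variance (fun ω' => |X i ω'|) P := by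
        rw [hTfun]
        exact IndepFun.variance_sum (fun i _ => hXabs_mem2 i)
          (fun i _ j _ hij => (hindep.indepFun hij).comp measurable_abs measurable_abs)
      have h2 : ∀ i : Fin m, variance (fun ω' => |X i ω'|) P = variance (fun x : ℝ => |x|) P₀ := by
        intro i
        rw [← hXlaw i]
        exact aux_variance_comp P (X i) (hXmeas i) (fun x => |x|) measurable_abs
      rw [h1]
      simp [h2, Finset.card_univ]
    refine le_trans hch ?_
    apply ENNReal.ofReal_le_ofReal
    rw [hvar]
    apply le_of_eq
    field_simp
  -- Hoeffding bound on each A p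
  have hAbound : ∀ p ∈ grid, P (A p) ≤ ENNReal.ofReal (2 * Real.exp (-((m:ℝ) * t ^ 2) / 2)) := by
    intro p _
    set W : Fin m → Ω → ℝ := fun i ω' => Real.cos (vv p.1 * (μs i + X i ω' - yy p.2) - c₀) with hW
    have hWmeas : ∀ i, Measurable (W i) := by
      intro i
      exact Real.measurable_cos.comp
        ((((measurable_const.add (hXmeas i)).sub_const _).const_mul _).sub_const _)
    have hWb : ∀ i ω', |W i ω'| ≤ 1 := fun i ω' => Real.abs_cos_le_one _
    have hWind : iIndepFun W P := by
      have := hindep.comp (fun i (x : ℝ) => Real.cos (vv p.1 * (μs i + x - yy p.2) - c₀))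
        (fun i => Real.measurable_cos.comp
          ((((measurable_const.add measurable_id).sub_const _).const_mul _).sub_const _))
      exact this
    have hset : A p = {ω' | (m:ℝ) * t ≤ |∑ i, (W i ω' - ∫ ω'', W i ω'' ∂P)|} := by
      ext ω'
      simp only [hA, Set.mem_setOf_eq]
      rw [hG]
      have hWz : ∀ (i : Fin m) ω'', Real.cos (vv p.1 * (z i ω'' - yy p.2) - c₀) = W i ω'' := by
        intro i ω''; rw [hz i ω'', hW]
      have hsum_eq : ∑ i, (Real.cos (vv p.1 * (z i ω' - yy p.2) - c₀) -
          ∫ ω'', Real.cos (vv p.1 * (z i ω'' - yy p.2) - c₀) ∂P)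
          = ∑ i, (W i ω' - ∫ ω'', W i ω'' ∂P) := by
        refine Finset.sum_congr rfl fun i _ => ?_
        rw [hWz i ω']
        congr 1
        have hfe : (fun ω'' => Real.cos (vv p.1 * (z i ω'' - yy p.2) - c₀)) = W i :=
          funext (hWz i)
        rw [hfe]
      rw [hsum_eq, abs_mul, abs_of_pos (by positivity : (0:ℝ) < 1 / m),
        one_div_mul_eq_div, le_div_iff₀ hmR, mul_comm]
    rw [hset]
    exact aux_hoeffding P W hWmeas hWb hWind ht0
  -- inclusion of the event
  have hincl : {ω' | κ₁ ≤ ⨆ v ∈ Set.Icc (0:ℝ) c₁, ⨆ y ∈ Set.Icc c₂ c₃, |G ω' v y|} ⊆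
      B ∪ ⋃ p ∈ grid, A p := by
    intro ω hω
    simp only [Set.mem_setOf_eq] at hω
    by_cases hBmem : ω ∈ B
    · exact Or.inl hBmem
    right
    simp only [hB, Set.mem_setOf_eq, not_le] at hBmem
    have hgood : ∑ i, |X i ω| ≤ (m:ℝ) * (EX + s) := by
      have h1 : T ω - ∫ ω'', T ω'' ∂P < (m:ℝ) * s := lt_of_le_of_lt (le_abs_self _) hBmem
      rw [hTint_eq] at h1
      have h2 : T ω = ∑ i, |X i ω| := by simp [hT]
      have h3 : (m:ℝ) * (EX + s) = m * EX + m * s := by ring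
      linarith [h2 ▸ h1]
    have hkey : ∀ v ∈ Set.Icc (0:ℝ) c₁, ∀ y ∈ Set.Icc c₂ c₃, ∀ v' ∈ Set.Icc (0:ℝ) c₁,
        ∀ y' ∈ Set.Icc c₂ c₃, |v - v'| ≤ Δ₁ → |y - y'| ≤ Δ₂ →
        |G ω v y - G ω v' y'| ≤ κ₂ := by
      intro v hv y hy v' hv' y' hy' hdv hdy
      set C : ℝ := Δ₁ * M + c₁ * Δ₂ + (Δ₁ * (EX + M) + c₁ * Δ₂) with hCdef
      clear_value C
      have hv'c : |v'| ≤ c₁ := by rw [abs_of_nonneg hv'.1]; exact hv'.2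
      have hdi : ∀ i : Fin m,
          |(Real.cos (v * (z i ω - y) - c₀) - ∫ ω'', Real.cos (v * (z i ω'' - y) - c₀) ∂P) -
           (Real.cos (v' * (z i ω - y') - c₀) -
             ∫ ω'', Real.cos (v' * (z i ω'' - y') - c₀) ∂P)|
          ≤ Δ₁ * |z i ω| + Δ₁ * |μs i| + C := by
        intro i
        have hpart1 : |Real.cos (v * (z i ω - y) - c₀) - Real.cos (v' * (z i ω - y') - c₀)| ≤
            Δ₁ * (|z i ω| + M) + c₁ * Δ₂ := by
          refine (aux_cos_diff c₀ (z i ω) v v' y y').trans ?_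
          exact add_le_add (mul_le_mul hdv (add_le_add_right (hyM y hy) _) (by positivity) hΔ₁.le)
            (mul_le_mul hv'c hdy (abs_nonneg _) hc₁.le)
        have hpart2 : |(∫ ω'', Real.cos (v * (z i ω'' - y) - c₀) ∂P) -
            ∫ ω'', Real.cos (v' * (z i ω'' - y') - c₀) ∂P| ≤
            Δ₁ * (|μs i| + EX + M) + c₁ * Δ₂ := by
          rw [← integral_sub (hcosint i v y) (hcosint i v' y')]
          have h4 : |∫ ω'', (Real.cos (v * (z i ω'' - y) - c₀) -
              Real.cos (v' * (z i ω'' - y') - c₀)) ∂P|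
              ≤ ∫ ω'', |Real.cos (v * (z i ω'' - y) - c₀) -
                Real.cos (v' * (z i ω'' - y') - c₀)| ∂P := by
            simpa [Real.norm_eq_abs] using norm_integral_le_integral_norm (μ := P)
              (fun ω'' => Real.cos (v * (z i ω'' - y) - c₀) -
                Real.cos (v' * (z i ω'' - y') - c₀))
          refine h4.trans ?_
          have h5 : ∀ ω'', |Real.cos (v * (z i ω'' - y) - c₀) -
              Real.cos (v' * (z i ω'' - y') - c₀)|
              ≤ Δ₁ * (|X i ω''| + (|μs i| + M)) + c₁ * Δ₂ := by
            intro ω''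
            refine (aux_cos_diff c₀ (z i ω'') v v' y y').trans ?_
            have hza : |z i ω''| ≤ |μs i| + |X i ω''| := by
              rw [hz]; exact abs_add_le _ _
            have h6 : |v - v'| * (|z i ω''| + |y|) ≤ Δ₁ * (|X i ω''| + (|μs i| + M)) := by
              refine mul_le_mul hdv ?_ (by positivity) hΔ₁.le
              have := hyM y hy
              linarith
            have h7 : |v'| * |y - y'| ≤ c₁ * Δ₂ := mul_le_mul hv'c hdy (abs_nonneg _) hc₁.le
            linarith
          have h8 : ∫ ω'', |Real.cos (v * (z i ω'' - y) - c₀) -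
              Real.cos (v' * (z i ω'' - y') - c₀)| ∂P
              ≤ ∫ ω'', (Δ₁ * (|X i ω''| + (|μs i| + M)) + c₁ * Δ₂) ∂P := by
            refine integral_mono ((hcosint i v y).sub (hcosint i v' y')).abs ?_ h5
            exact (((hXabs_int i).add (integrable_const _)).const_mul Δ₁).add (integrable_const _)
          refine h8.trans ?_
          have int1 : Integrable (fun ω'' => Δ₁ * (|X i ω''| + (|μs i| + M))) P :=
            ((hXabs_int i).add (integrable_const _)).const_mul Δ₁
          have int2 : Integrable (fun ω'' : Ω => |X i ω''| + (|μs i| + M)) P :=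
            (hXabs_int i).add (integrable_const _)
          rw [integral_add int1 (integrable_const _), integral_const_mul,
            integral_add (hXabs_int i) (integrable_const _), hXabs_eq i,
            integral_const, integral_const]
          simp only [probReal_univ, measure_univ, ENNReal.toReal_one, smul_eq_mul, one_mul]
          apply le_of_eq
          ring
        calc |(Real.cos (v * (z i ω - y) - c₀) -
              ∫ ω'', Real.cos (v * (z i ω'' - y) - c₀) ∂P) -
             (Real.cos (v' * (z i ω - y') - c₀) -
              ∫ ω'', Real.cos (v' * (z i ω'' - y') - c₀) ∂P)|
            = |(Real.cos (v * (z i ω - y) - c₀) - Real.cos (v' * (z i ω - y') - c₀)) -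
               ((∫ ω'', Real.cos (v * (z i ω'' - y) - c₀) ∂P) -
                ∫ ω'', Real.cos (v' * (z i ω'' - y') - c₀) ∂P)| := by
              congr 1; ring
          _ ≤ |Real.cos (v * (z i ω - y) - c₀) - Real.cos (v' * (z i ω - y') - c₀)| +
              |(∫ ω'', Real.cos (v * (z i ω'' - y) - c₀) ∂P) -
                ∫ ω'', Real.cos (v' * (z i ω'' - y') - c₀) ∂P| := abs_sub _ _
          _ ≤ (Δ₁ * (|z i ω| + M) + c₁ * Δ₂) + (Δ₁ * (|μs i| + EX + M) + c₁ * Δ₂) :=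
              add_le_add hpart1 hpart2
          _ = Δ₁ * |z i ω| + Δ₁ * |μs i| + C := by rw [hCdef]; ring
      have hGdiff : G ω v y - G ω v' y' = (1 / (m:ℝ)) * ∑ i,
          ((Real.cos (v * (z i ω - y) - c₀) - ∫ ω'', Real.cos (v * (z i ω'' - y) - c₀) ∂P) -
           (Real.cos (v' * (z i ω - y') - c₀) -
             ∫ ω'', Real.cos (v' * (z i ω'' - y') - c₀) ∂P)) := by
        rw [hG, hG, ← mul_sub, ← Finset.sum_sub_distrib]
      have hGb : |G ω v y - G ω v' y'| ≤
          (1 / (m:ℝ)) * ∑ i, (Δ₁ * |z i ω| + Δ₁ * |μs i| + C) := by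
        rw [hGdiff, abs_mul, abs_of_pos (by positivity : (0:ℝ) < 1 / m)]
        exact mul_le_mul_of_nonneg_left ((Finset.abs_sum_le_sum_abs _ _).trans
          (Finset.sum_le_sum fun i _ => hdi i)) (by positivity)
      have hsum_split : (1 / (m:ℝ)) * ∑ i, (Δ₁ * |z i ω| + Δ₁ * |μs i| + C)
          = Δ₁ * ((1/(m:ℝ)) * ∑ i, |z i ω|) + Δ₁ * ((1/(m:ℝ)) * ∑ i, |μs i|) + C := by
        rw [Finset.sum_add_distrib, Finset.sum_add_distrib, ← Finset.mul_sum, ← Finset.mul_sum,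
          Finset.sum_const, Finset.card_univ, Fintype.card_fin, nsmul_eq_mul]
        field_simp
      have hzs : (1/(m:ℝ)) * ∑ i, |z i ω| ≤ ρ + (EX + s) := by
        have h6 : ∑ i, |z i ω| ≤ ∑ i, |μs i| + ∑ i, |X i ω| := by
          rw [← Finset.sum_add_distrib]
          refine Finset.sum_le_sum fun i _ => ?_
          rw [hz]; exact abs_add_le _ _
        have h7 : (1/(m:ℝ)) * ∑ i, |X i ω| ≤ EX + s := by
          rw [one_div, inv_mul_le_iff₀ hmR]
          exact hgood.trans (le_of_eq (by ring))
        calc (1/(m:ℝ)) * ∑ i, |z i ω| ≤ (1/(m:ℝ)) * (∑ i, |μs i| + ∑ i, |X i ω|) :=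
              mul_le_mul_of_nonneg_left h6 (by positivity)
          _ = (1/(m:ℝ)) * ∑ i, |μs i| + (1/(m:ℝ)) * ∑ i, |X i ω| := by ring
          _ ≤ ρ + (EX + s) := add_le_add hρ h7
      have hend : Δ₁ * (ρ + (EX + s)) + Δ₁ * ρ + C ≤ κ₂ := by
        have hδ1 : Δ₁ ≤ D := by rw [hD]; exact le_max_left _ _
        have hδ2 : Δ₂ ≤ D := by rw [hD]; exact le_max_right _ _
        have hbr : (0:ℝ) ≤ 2*ρ + 2*EX + 2*M + s := by linarith
        have e1 : Δ₁ * (ρ + (EX + s)) + Δ₁ * ρ + C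
            = Δ₁ * (2*ρ + 2*EX + 2*M + s) + 2 * c₁ * Δ₂ := by rw [hCdef]; ring
        have h9 : Δ₁ * (2*ρ + 2*EX + 2*M + s) ≤ D * (2*ρ + 2*EX + 2*M + s) :=
          mul_le_mul_of_nonneg_right hδ1 hbr
        have h10 : 2 * c₁ * Δ₂ ≤ 2 * c₁ * D :=
          mul_le_mul_of_nonneg_left hδ2 (by positivity)
        have h11 : 2*ρ + 2*EX + 2*M + s + 2*c₁ = κ₂ / D := by
          rw [hs, hR₁]; ring
        have h13 : D * (2*ρ + 2*EX + 2*M + s) + 2*c₁*D = κ₂ := by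
          have e2 : D * (2*ρ + 2*EX + 2*M + s) + 2*c₁*D
              = D * (2*ρ + 2*EX + 2*M + s + 2*c₁) := by ring
          rw [e2, h11]
          field_simp
        linarith
      calc |G ω v y - G ω v' y'|
          ≤ (1 / (m:ℝ)) * ∑ i, (Δ₁ * |z i ω| + Δ₁ * |μs i| + C) := hGb
        _ = Δ₁ * ((1/(m:ℝ)) * ∑ i, |z i ω|) + Δ₁ * ((1/(m:ℝ)) * ∑ i, |μs i|) + C := hsum_split
        _ ≤ Δ₁ * (ρ + (EX + s)) + Δ₁ * ρ + C :=
            add_le_add (add_le_add (mul_le_mul_of_nonneg_left hzs hΔ₁.le)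
              (mul_le_mul_of_nonneg_left hρ hΔ₁.le)) le_rfl
        _ ≤ κ₂ := hend
    have hcover : ∀ v ∈ Set.Icc (0:ℝ) c₁, ∀ y ∈ Set.Icc c₂ c₃, ∃ p ∈ grid,
        vv p.1 ∈ Set.Icc (0:ℝ) c₁ ∧ yy p.2 ∈ Set.Icc c₂ c₃ ∧
          |v - vv p.1| ≤ Δ₁ ∧ |y - yy p.2| ≤ Δ₂ := by
      intro v hv y hy
      have hv0 : 0 ≤ v := hv.1
      have hy0 : 0 ≤ y - c₂ := sub_nonneg.2 hy.1
      have hfl1 : (⌊v / Δ₁⌋₊ : ℝ) ≤ v / Δ₁ := Nat.floor_le (div_nonneg hv0 hΔ₁.le)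
      have hfl2 : (⌊(y - c₂) / Δ₂⌋₊ : ℝ) ≤ (y - c₂) / Δ₂ := Nat.floor_le (div_nonneg hy0 hΔ₂.le)
      have hfl1' : v / Δ₁ < ⌊v / Δ₁⌋₊ + 1 := Nat.lt_floor_add_one _
      have hfl2' : (y - c₂) / Δ₂ < ⌊(y - c₂) / Δ₂⌋₊ + 1 := Nat.lt_floor_add_one _
      have hle1 : (⌊v / Δ₁⌋₊ : ℝ) * Δ₁ ≤ v := by
        rw [← le_div_iff₀ hΔ₁]; exact hfl1
      have hle2 : c₂ + (⌊(y - c₂) / Δ₂⌋₊ : ℝ) * Δ₂ ≤ y := by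
        have : (⌊(y - c₂) / Δ₂⌋₊ : ℝ) * Δ₂ ≤ y - c₂ := by
          rw [← le_div_iff₀ hΔ₂]; exact hfl2
        linarith
      have hlt1 : v < ((⌊v / Δ₁⌋₊ : ℝ) + 1) * Δ₁ := by
        rw [← div_lt_iff₀ hΔ₁]; exact_mod_cast hfl1'
      have hlt2 : y - c₂ < ((⌊(y - c₂) / Δ₂⌋₊ : ℝ) + 1) * Δ₂ := by
        rw [← div_lt_iff₀ hΔ₂]; exact_mod_cast hfl2'
      refine ⟨(⌊v / Δ₁⌋₊, ⌊(y - c₂) / Δ₂⌋₊), ?_, ?_, ?_, ?_, ?_⟩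
      · rw [hgrid, Finset.mem_product, Finset.mem_range, Finset.mem_range, hN₁, hN₂]
        constructor
        · refine Nat.lt_succ_of_le (Nat.floor_le_floor ?_)
          gcongr
          exact hv.2
        · refine Nat.lt_succ_of_le (Nat.floor_le_floor ?_)
          gcongr
          exact hy.2
      · rw [hvv]
        exact ⟨by positivity, hle1.trans hv.2⟩
      · refine ⟨?_, ?_⟩
        · simp only [hyy]
          have h0 : (0:ℝ) ≤ (⌊(y - c₂) / Δ₂⌋₊ : ℝ) * Δ₂ := by positivity
          linarith
        · simp only [hyy]
          linarith [hle2, hy.2]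
      · rw [abs_le]
        constructor <;> simp only [hvv]
        · linarith [hle1]
        · linarith [hlt1]
      · rw [abs_le]
        constructor <;> simp only [hyy]
        · linarith [hle2]
        · linarith [hlt2]
    by_contra hnone
    have hlt : ∀ p ∈ grid, |G ω (vv p.1) (yy p.2)| < t := by
      intro p hp
      by_contra hge
      exact hnone (Set.mem_biUnion hp (by
        simp only [hA, Set.mem_setOf_eq]
        exact not_lt.1 hge))
    set mx : ℝ := grid.sup' hgridne (fun p => |G ω (vv p.1) (yy p.2)|) with hmx
    obtain ⟨p₀, hp₀⟩ := id hgridne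
    have hmx0 : 0 ≤ mx := by
      rw [hmx]; exact le_trans (abs_nonneg _) (Finset.le_sup' (fun p => |G ω (vv p.1) (yy p.2)|) hp₀)
    have hmxlt : mx < t := (Finset.sup'_lt_iff hgridne).2 hlt
    have hbd : ∀ v ∈ Set.Icc (0:ℝ) c₁, ∀ y ∈ Set.Icc c₂ c₃, |G ω v y| ≤ mx + κ₂ := by
      intro v hv y hy
      obtain ⟨p, hp, hpv, hpy, hdv, hdy⟩ := hcover v hv y hy
      calc |G ω v y|
          = |G ω (vv p.1) (yy p.2) + (G ω v y - G ω (vv p.1) (yy p.2))| := by congr 1; ring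
        _ ≤ |G ω (vv p.1) (yy p.2)| + |G ω v y - G ω (vv p.1) (yy p.2)| := abs_add_le _ _
        _ ≤ mx + κ₂ := by
            rw [hmx]
            exact add_le_add (Finset.le_sup' (fun p => |G ω (vv p.1) (yy p.2)|) hp) (hkey v hv y hy _ hpv _ hpy hdv hdy)
    have h0b : (0:ℝ) ≤ mx + κ₂ := by linarith
    have hsup : (⨆ v ∈ Set.Icc (0:ℝ) c₁, ⨆ y ∈ Set.Icc c₂ c₃, |G ω v y|) ≤ mx + κ₂ :=
      Real.iSup_le (fun v => Real.iSup_le (fun hv => Real.iSup_le (fun y =>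
        Real.iSup_le (fun hy => hbd v hv y hy) h0b) h0b) h0b) h0b
    have hk1 : κ₁ ≤ mx + κ₂ := le_trans hω hsup
    have hk2 : t ≤ mx := by rw [htdef]; linarith
    linarith
  -- final assembly
  have hcard : (grid.card : ℝ) = ((N₁:ℝ) + 1) * ((N₂:ℝ) + 1) := by
    rw [hgrid, Finset.card_product, Finset.card_range, Finset.card_range]
    push_cast
    ring
  calc P {ω' | κ₁ ≤ ⨆ v ∈ Set.Icc (0:ℝ) c₁, ⨆ y ∈ Set.Icc c₂ c₃, |G ω' v y|}
      ≤ P (B ∪ ⋃ p ∈ grid, A p) := measure_mono hincl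
    _ ≤ P B + P (⋃ p ∈ grid, A p) := measure_union_le _ _
    _ ≤ P B + ∑ p ∈ grid, P (A p) := add_le_add le_rfl (measure_biUnion_finset_le _ _)
    _ ≤ ENNReal.ofReal (variance (fun x : ℝ => |x|) P₀ / ((m:ℝ) * s ^ 2)) +
        ∑ _p ∈ grid, ENNReal.ofReal (2 * Real.exp (-((m:ℝ) * t ^ 2) / 2)) :=
        add_le_add hBbound (Finset.sum_le_sum hAbound)
    _ = ENNReal.ofReal (variance (fun x : ℝ => |x|) P₀ / ((m:ℝ) * s ^ 2)) +
        ENNReal.ofReal ((grid.card : ℝ) * (2 * Real.exp (-((m:ℝ) * t ^ 2) / 2))) := by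
        rw [Finset.sum_const, nsmul_eq_mul]
        congr 1
        rw [← ENNReal.ofReal_natCast grid.card,
          ← ENNReal.ofReal_mul (p := (grid.card : ℝ)) (by positivity)]
    _ ≤ ENNReal.ofReal
        (2 * (c₁ / Δ₁ + 1) * ((c₃ - c₂) / Δ₂ + 1) * Real.exp (-((m : ℝ) * t ^ 2) / 2) +
          variance (fun x : ℝ => |x|) P₀ / ((m : ℝ) * s ^ 2)) := by
        rw [← ENNReal.ofReal_add (div_nonneg (variance_nonneg _ _) (by positivity)) (by positivity)]
        apply ENNReal.ofReal_le_ofReal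
        have hN1 : ((N₁:ℝ) + 1) ≤ c₁ / Δ₁ + 1 := by
          have h := Nat.floor_le (show (0:ℝ) ≤ c₁ / Δ₁ by positivity)
          rw [hN₁]
          linarith
        have hN2 : ((N₂:ℝ) + 1) ≤ (c₃ - c₂) / Δ₂ + 1 := by
          have h := Nat.floor_le (show (0:ℝ) ≤ (c₃ - c₂) / Δ₂ from div_nonneg (by linarith) hΔ₂.le)
          rw [hN₂]
          linarith
        have hNN : ((N₁:ℝ) + 1) * ((N₂:ℝ) + 1) ≤ (c₁ / Δ₁ + 1) * ((c₃ - c₂) / Δ₂ + 1) :=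
          mul_le_mul hN1 hN2 (by positivity) (by positivity)
        have hE : (0:ℝ) ≤ Real.exp (-((m:ℝ) * t ^ 2) / 2) := (Real.exp_pos _).le
        rw [hcard]
        nlinarith [hNN, hE]
end
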